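/- arXiv:0712.1934 — 2 statements merged into one kernel-verified Lean document; each statement's English description precedes it below -/
import Mathlib

section
/- For every finite tree T rooted at a vertex r and every q∈(0,1), the spectral gap of the East-on-tree model on T (constraints c̃_x(ω)=1 iff x=r or ω_y=0 where y is the ancestor of x) satisfies gap(T,r,East) ≥ gap(ℤ,East). -/
open scoped Classical BigOperators

noncomputable section

/-- Indicator of a proposition. -/
def ind (P : Prop) : ℝ := if P then 1 else 0

variable {ι : Type*} [DecidableEq ι]

/-- Extend a configuration defined on the finite set `S` by `true` (occupied) elsewhere. -/
def extCfg (S : Finset ι) (σ : {x // x ∈ S} → Bool) : ι → Bool :=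
  fun x => if h : x ∈ S then σ ⟨x, h⟩ else true

/-- Product Bernoulli weight of a local configuration: each site is empty (`false`)
with probability `q` and occupied (`true`) with probability `1 - q`. -/
def cylWeight (q : ℝ) (S : Finset ι) (σ : {x // x ∈ S} → Bool) : ℝ :=
  ∏ x : {x // x ∈ S}, (if σ x then 1 - q else q)

/-- Expectation (under the Bernoulli(1-q) product measure) of a function depending
only on the coordinates in `S`. -/
def cylExp (q : ℝ) (S : Finset ι) (f : (ι → Bool) → ℝ) : ℝ :=
  ∑ σ : {x // x ∈ S} → Bool, cylWeight q S σ * f (extCfg S σ)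

/-- `f` depends only on the coordinates in `S`. -/
def DependsOnCoords (f : (ι → Bool) → ℝ) (S : Finset ι) : Prop :=
  ∀ ω ω' : ι → Bool, (∀ x ∈ S, ω x = ω' x) → f ω = f ω'

/-- The local variance `Var_x f (ω) = p q (f(ω^{x←1}) - f(ω^{x←0}))²`, `p = 1 - q`. -/
def varAt (q : ℝ) (f : (ι → Bool) → ℝ) (x : ι) (ω : ι → Bool) : ℝ :=
  (1 - q) * q * (f (Function.update ω x true) - f (Function.update ω x false)) ^ 2

/-- Variance of a function depending only on the coordinates in `S`. -/
def cylVar (q : ℝ) (S : Finset ι) (f : (ι → Bool) → ℝ) : ℝ :=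
  cylExp q S (fun ω => (f ω) ^ 2) - (cylExp q S f) ^ 2

/-- Dirichlet form `D(f) = Σ_x μ(c_x · Var_x f)` of a function depending only on the
coordinates in `S`, for constraints `c` such that `c x` depends only on the coordinates
in `supp x`. -/
def dirichlet (q : ℝ) (c : ι → (ι → Bool) → Prop) (supp : ι → Finset ι)
    (S : Finset ι) (f : (ι → Bool) → ℝ) : ℝ :=
  ∑' x : ι, cylExp q (insert x (S ∪ supp x)) (fun ω => ind (c x ω) * varAt q f x ω)

/-- The spectral gap of the kinetically constrained model with constraints `c`
(the constraint at `x` depending only on the coordinates in `supp x`):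
the infimum of `D(f)/Var(f)` over nonconstant functions depending on finitely many
coordinates. -/
def kcmGap (q : ℝ) (c : ι → (ι → Bool) → Prop) (supp : ι → Finset ι) : ℝ :=
  sInf { γ : ℝ | ∃ (f : (ι → Bool) → ℝ) (S : Finset ι),
    DependsOnCoords f S ∧ (∃ ω ω', f ω ≠ f ω') ∧
    γ = dirichlet q c supp S f / cylVar q S f }

/-- The spectral gap of the East model on `ℤ` at parameter `q`. -/
def eastGap (q : ℝ) : ℝ :=
  kcmGap q (fun (x : ℤ) ω => ω (x + 1) = false) (fun x => {x + 1})

variable {V : Type*} [Fintype V] [DecidableEq V]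

/-- Expectation under the product Bernoulli measure on `{0,1}^V` (a site is empty,
i.e. `false`, with probability `q`). -/
def finExp (q : ℝ) (f : (V → Bool) → ℝ) : ℝ :=
  ∑ ω : V → Bool, (∏ x : V, if ω x then 1 - q else q) * f ω

/-- Variance under the product Bernoulli measure. -/
def finVar (q : ℝ) (f : (V → Bool) → ℝ) : ℝ :=
  finExp q (fun ω => (f ω) ^ 2) - (finExp q f) ^ 2

/-- Dirichlet form `D(f) = Σ_{x ∈ V} μ(c_x · Var_x f)`. -/
def finDir (q : ℝ) (c : V → (V → Bool) → Prop) (f : (V → Bool) → ℝ) : ℝ :=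
  ∑ x : V, finExp q (fun ω => ind (c x ω) * varAt q f x ω)

/-- Spectral gap of a finite-volume kinetically constrained model. -/
def finGap (q : ℝ) (c : V → (V → Bool) → Prop) : ℝ :=
  sInf { γ : ℝ | ∃ f : (V → Bool) → ℝ, (∃ ω ω', f ω ≠ f ω') ∧ γ = finDir q c f / finVar q f }

end

noncomputable section
open scoped Classical

section Machinery

open Finset

variable {ι : Type*} [DecidableEq ι]

/-- Patch a configuration on `A` by `τ`. -/
def patch (A : Finset ι) (τ : {x // x ∈ A} → Bool) (ω : ι → Bool) : ι → Bool :=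
  fun x => if h : x ∈ A then τ ⟨x, h⟩ else ω x

/-- Conditional average over the coordinates in `A`. -/
def pavg (q : ℝ) (A : Finset ι) (f : (ι → Bool) → ℝ) (ω : ι → Bool) : ℝ :=
  ∑ τ : {x // x ∈ A} → Bool, cylWeight q A τ * f (patch A τ ω)

/-- `f` does not depend on the coordinates in `A`. -/
def Blind (f : (ι → Bool) → ℝ) (A : Finset ι) : Prop :=
  ∀ ω ω' : ι → Bool, (∀ x, x ∉ A → ω x = ω' x) → f ω = f ω'

lemma patch_const_true (S : Finset ι) (σ : {x // x ∈ S} → Bool) :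
    patch S σ (fun _ => true) = extCfg S σ := rfl

lemma cylExp_eq_pavg (q : ℝ) (S : Finset ι) (f : (ι → Bool) → ℝ) :
    cylExp q S f = pavg q S f (fun _ => true) := rfl

lemma patch_patch_same (A : Finset ι) (τ σ : {x // x ∈ A} → Bool) (ω : ι → Bool) :
    patch A τ (patch A σ ω) = patch A τ ω := by
  funext x; by_cases h : x ∈ A <;> simp [patch, h]

lemma patch_update_notMem (A : Finset ι) (τ : {x // x ∈ A} → Bool) (ω : ι → Bool)
    {x : ι} (hx : x ∉ A) (b : Bool) :
    patch A τ (Function.update ω x b) = Function.update (patch A τ ω) x b := by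
  funext y
  by_cases hy : y ∈ A
  · have hxy : y ≠ x := fun h => hx (h ▸ hy)
    simp [patch, hy, Function.update, hxy]
  · by_cases hyx : y = x
    · subst hyx; simp [patch, hy, Function.update]
    · simp [patch, hy, Function.update, hyx]

lemma patch_update_mem (A : Finset ι) (τ : {x // x ∈ A} → Bool) (ω : ι → Bool)
    {x : ι} (hx : x ∈ A) (b : Bool) :
    patch A τ (Function.update ω x b) = patch A τ ω := by
  funext y
  by_cases hy : y ∈ A
  · simp [patch, hy]
  · have hyx : y ≠ x := fun h => hy (h ▸ hx)
    simp [patch, hy, Function.update, hyx]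

end Machinery
section Machinery2

open Finset

variable {ι : Type*} [DecidableEq ι]

/-- Splitting equivalence for configurations on `insert x A`. -/
def insEquiv (A : Finset ι) (x : ι) (hx : x ∉ A) :
    (Bool × ({y // y ∈ A} → Bool)) ≃ ({y // y ∈ insert x A} → Bool) where
  toFun := fun p y => if h : (y : ι) ∈ A then p.2 ⟨y, h⟩ else p.1
  invFun := fun τ => (τ ⟨x, mem_insert_self x A⟩,
      fun y => τ ⟨y, mem_insert_of_mem y.2⟩)
  left_inv := by
    rintro ⟨b, σ⟩
    refine Prod.ext ?_ ?_
    · simp [hx]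
    · funext y; simp [y.2]
  right_inv := by
    intro τ
    funext y
    rcases y with ⟨y, hy⟩
    by_cases h : y ∈ A
    · simp [h]
    · have hyx : y = x := by
        rcases mem_insert.1 hy with h' | h'
        · exact h'
        · exact absurd h' h
      subst hyx
      simp [h]

lemma cylWeight_insEquiv (q : ℝ) (A : Finset ι) (x : ι) (hx : x ∉ A)
    (b : Bool) (σ : {y // y ∈ A} → Bool) :
    cylWeight q (insert x A) (insEquiv A x hx (b, σ)) =
      (if b then 1 - q else q) * cylWeight q A σ := by
  classical
  unfold cylWeight
  have h1 : ∀ y : {y // y ∈ insert x A},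
      (if insEquiv A x hx (b, σ) y then 1 - q else q) =
        (fun z : ι => if h : z ∈ A then (if σ ⟨z, h⟩ then 1 - q else q)
          else (if b then 1 - q else q)) (y : ι) := by
    rintro ⟨y, hy⟩
    by_cases h : y ∈ A <;> simp [insEquiv, h]
  rw [Finset.prod_congr rfl (fun y _ => h1 y)]
  set g : ι → ℝ := fun z => if h : z ∈ A then (if σ ⟨z, h⟩ then 1 - q else q)
      else (if b then 1 - q else q) with hg
  have e1 : ∏ y : {y // y ∈ insert x A}, g (y : ι) = ∏ y ∈ insert x A, g y :=
    Finset.prod_coe_sort (insert x A) g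
  rw [e1, Finset.prod_insert hx]
  have e2 : g x = (if b then 1 - q else q) := by simp [hg, hx]
  rw [e2]
  congr 1
  have e3 : ∏ y : {y // y ∈ A}, g (y : ι) = ∏ y ∈ A, g y :=
    Finset.prod_coe_sort A g
  rw [← e3]
  refine Finset.prod_congr rfl ?_
  rintro ⟨y, hy⟩ _
  simp [hg, hy]

lemma patch_insEquiv (A : Finset ι) (x : ι) (hx : x ∉ A)
    (b : Bool) (σ : {y // y ∈ A} → Bool) (ω : ι → Bool) :
    patch (insert x A) (insEquiv A x hx (b, σ)) ω =
      patch A σ (Function.update ω x b) := by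
  funext y
  by_cases h : y ∈ A
  · have : y ∈ insert x A := mem_insert_of_mem h
    simp [patch, this, h, insEquiv]
  · by_cases hyx : y = x
    · subst hyx
      simp [patch, mem_insert_self, h, insEquiv, Function.update]
    · have : y ∉ insert x A := by simp [hyx, h]
      simp [patch, this, h, Function.update, hyx]

lemma pavg_insert (q : ℝ) (A : Finset ι) (x : ι) (hx : x ∉ A)
    (f : (ι → Bool) → ℝ) (ω : ι → Bool) :
    pavg q (insert x A) f ω =
      q * pavg q A f (Function.update ω x false) +
        (1 - q) * pavg q A f (Function.update ω x true) := by
  classical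
  unfold pavg
  rw [← Equiv.sum_comp (insEquiv A x hx)
    (fun τ => cylWeight q (insert x A) τ * f (patch (insert x A) τ ω))]
  rw [Fintype.sum_prod_type]
  rw [Fintype.sum_bool]
  simp only [cylWeight_insEquiv, patch_insEquiv, mul_assoc, ← Finset.mul_sum]
  norm_num
  ring

end Machinery2
section Machinery3

open Finset

variable {ι : Type*} [DecidableEq ι]

lemma blind_mono {f : (ι → Bool) → ℝ} {A B : Finset ι} (hAB : A ⊆ B)
    (h : Blind f B) : Blind f A :=
  fun ω ω' hag => h ω ω' (fun x hx => hag x (fun hxA => hx (hAB hxA)))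

lemma blind_update {f : (ι → Bool) → ℝ} {A : Finset ι} (h : Blind f A)
    {x : ι} (hx : x ∈ A) (ω : ι → Bool) (b : Bool) :
    f (Function.update ω x b) = f ω := by
  refine h _ _ (fun y hy => ?_)
  have : y ≠ x := fun hyx => hy (hyx ▸ hx)
  simp [Function.update, this]

lemma blind_patch {f : (ι → Bool) → ℝ} {A : Finset ι} (h : Blind f A)
    (τ : {x // x ∈ A} → Bool) (ω : ι → Bool) :
    f (patch A τ ω) = f ω := by
  refine h _ _ (fun y hy => ?_)
  simp [patch, hy]

lemma cylWeight_nonneg {q : ℝ} (hq0 : 0 ≤ q) (hq1 : q ≤ 1) (A : Finset ι)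
    (τ : {x // x ∈ A} → Bool) : 0 ≤ cylWeight q A τ := by
  refine Finset.prod_nonneg (fun y _ => ?_)
  by_cases h : τ y <;> simp [h] <;> linarith

lemma cylWeight_pos {q : ℝ} (hq0 : 0 < q) (hq1 : q < 1) (A : Finset ι)
    (τ : {x // x ∈ A} → Bool) : 0 < cylWeight q A τ := by
  refine Finset.prod_pos (fun y _ => ?_)
  by_cases h : τ y <;> simp [h] <;> linarith

lemma pavg_blind (q : ℝ) (A : Finset ι) (f : (ι → Bool) → ℝ) :
    Blind (pavg q A f) A := by
  intro ω ω' hag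
  unfold pavg
  refine Finset.sum_congr rfl (fun τ _ => ?_)
  congr 1
  congr 1
  funext y
  by_cases h : y ∈ A
  · simp [patch, h]
  · simp [patch, h, hag y h]

lemma pavg_of_blind {q : ℝ} {f : (ι → Bool) → ℝ} {A : Finset ι}
    (h : Blind f A) : pavg q A f = f := by
  classical
  induction A using Finset.induction_on with
  | empty =>
      funext ω
      unfold pavg
      have hterm : ∀ τ : {x // x ∈ (∅ : Finset ι)} → Bool,
          cylWeight q ∅ τ * f (patch ∅ τ ω) = f ω := by
        intro τ
        have h1 : cylWeight q (∅ : Finset ι) τ = 1 := by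
          simp [cylWeight, Finset.univ_eq_empty]
        have h2 : patch (∅ : Finset ι) τ ω = ω := by funext y; simp [patch]
        rw [h1, h2, one_mul]
      rw [Finset.sum_congr rfl (fun τ _ => hterm τ), Finset.sum_const]
      have hcard : Fintype.card ({x // x ∈ (∅ : Finset ι)} → Bool) = 1 := by
        simp
      simp [Finset.card_univ, hcard]
  | @insert x A hx ih =>
      funext ω
      have hA : Blind f A := blind_mono (Finset.subset_insert x A) h
      rw [pavg_insert q A x hx f ω, ih hA]
      have h1 : f (Function.update ω x false) = f ω :=
        blind_update h (Finset.mem_insert_self x A) ω false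
      have h2 : f (Function.update ω x true) = f ω :=
        blind_update h (Finset.mem_insert_self x A) ω true
      rw [h1, h2]; ring

lemma pavg_const (q : ℝ) (A : Finset ι) (c : ℝ) :
    pavg q A (fun _ => c) = fun _ => c :=
  pavg_of_blind (fun _ _ _ => rfl)

lemma pavg_tower_disjoint {q : ℝ} (A B : Finset ι) (hd : Disjoint A B)
    (f : (ι → Bool) → ℝ) : pavg q B (pavg q A f) = pavg q (A ∪ B) f := by
  classical
  induction B using Finset.induction_on with
  | empty =>
      rw [pavg_of_blind (A := (∅ : Finset ι)) (f := pavg q A f)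
        (fun ω ω' hag => by
          have : ω = ω' := funext (fun y => hag y (Finset.notMem_empty y))
          rw [this])]
      simp
  | @insert y B hy ih =>
      have hdAB : Disjoint A B := by
        refine Finset.disjoint_left.2 (fun a ha haB => ?_)
        exact (Finset.disjoint_left.1 hd) ha (Finset.mem_insert_of_mem haB)
      have hyA : y ∉ A := fun hyA => (Finset.disjoint_left.1 hd) hyA (Finset.mem_insert_self y B)
      have hyAB : y ∉ A ∪ B := by simp [hyA, hy]
      funext ω
      rw [pavg_insert q B y hy (pavg q A f) ω, ih hdAB, Finset.union_insert,
        pavg_insert q (A ∪ B) y hyAB f ω]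

end Machinery3
section Machinery4

set_option linter.unusedSectionVars false

open Finset

variable {ι : Type*} [DecidableEq ι]

lemma pavg_congr {q : ℝ} {A : Finset ι} {f g : (ι → Bool) → ℝ} {ω : ι → Bool}
    (h : ∀ τ, f (patch A τ ω) = g (patch A τ ω)) : pavg q A f ω = pavg q A g ω :=
  Finset.sum_congr rfl (fun τ _ => by rw [h τ])

lemma pavg_add (q : ℝ) (A : Finset ι) (f g : (ι → Bool) → ℝ) (ω : ι → Bool) :
    pavg q A (fun ω' => f ω' + g ω') ω = pavg q A f ω + pavg q A g ω := by
  unfold pavg; rw [← Finset.sum_add_distrib]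
  exact Finset.sum_congr rfl (fun τ _ => by ring)

lemma pavg_sub (q : ℝ) (A : Finset ι) (f g : (ι → Bool) → ℝ) (ω : ι → Bool) :
    pavg q A (fun ω' => f ω' - g ω') ω = pavg q A f ω - pavg q A g ω := by
  unfold pavg; rw [← Finset.sum_sub_distrib]
  exact Finset.sum_congr rfl (fun τ _ => by ring)

lemma pavg_const_mul (q : ℝ) (A : Finset ι) (c : ℝ) (f : (ι → Bool) → ℝ) (ω : ι → Bool) :
    pavg q A (fun ω' => c * f ω') ω = c * pavg q A f ω := by
  unfold pavg; rw [Finset.mul_sum]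
  exact Finset.sum_congr rfl (fun τ _ => by ring)

lemma pavg_sum (q : ℝ) (A : Finset ι) {β : Type*} (s : Finset β)
    (F : β → (ι → Bool) → ℝ) (ω : ι → Bool) :
    pavg q A (fun ω' => ∑ b ∈ s, F b ω') ω = ∑ b ∈ s, pavg q A (F b) ω := by
  unfold pavg
  rw [Finset.sum_comm]
  refine Finset.sum_congr rfl (fun τ _ => ?_)
  rw [Finset.mul_sum]

lemma pavg_mono {q : ℝ} (hq0 : 0 ≤ q) (hq1 : q ≤ 1) (A : Finset ι)
    {f g : (ι → Bool) → ℝ} (h : ∀ ω', f ω' ≤ g ω') (ω : ι → Bool) :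
    pavg q A f ω ≤ pavg q A g ω := by
  refine Finset.sum_le_sum (fun τ _ => ?_)
  exact mul_le_mul_of_nonneg_left (h _) (cylWeight_nonneg hq0 hq1 A τ)

lemma pavg_nonneg {q : ℝ} (hq0 : 0 ≤ q) (hq1 : q ≤ 1) (A : Finset ι)
    {f : (ι → Bool) → ℝ} (h : ∀ ω', 0 ≤ f ω') (ω : ι → Bool) :
    0 ≤ pavg q A f ω := by
  have := pavg_mono hq0 hq1 A (f := fun _ => (0 : ℝ)) (g := f) h ω
  rwa [pavg_const q A 0] at this

lemma pavg_mul_blind {q : ℝ} {A : Finset ι} {g : (ι → Bool) → ℝ} (hg : Blind g A)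
    (f : (ι → Bool) → ℝ) (ω : ι → Bool) :
    pavg q A (fun ω' => g ω' * f ω') ω = g ω * pavg q A f ω := by
  unfold pavg; rw [Finset.mul_sum]
  refine Finset.sum_congr rfl (fun τ _ => ?_)
  have hgp : g (patch A τ ω) = g ω := blind_patch hg τ ω
  simp only [hgp]
  ring

lemma pavg_idem (q : ℝ) (A : Finset ι) (f : (ι → Bool) → ℝ) :
    pavg q A (pavg q A f) = pavg q A f :=
  pavg_of_blind (pavg_blind q A f)

/-- `pavg` over `U` of `pavg` over `A ⊆ U` is `pavg` over `U`. -/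
lemma pavg_pavg_subset (q : ℝ) {A U : Finset ι} (hAU : A ⊆ U) (f : (ι → Bool) → ℝ) :
    pavg q U (pavg q A f) = pavg q U f := by
  have hd : Disjoint A (U \ A) := Finset.disjoint_sdiff
  have hu : A ∪ (U \ A) = U := Finset.union_sdiff_of_subset hAU
  rw [← hu, ← pavg_tower_disjoint A (U \ A) hd f,
    ← pavg_tower_disjoint A (U \ A) hd (pavg q A f), pavg_idem]

lemma blind_pavg_of_blind {q : ℝ} {A T : Finset ι} {f : (ι → Bool) → ℝ}
    (hf : Blind f A) (hd : Disjoint A T) : Blind (pavg q T f) A := by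
  intro ω ω' hag
  refine Finset.sum_congr rfl (fun τ _ => ?_)
  congr 1
  refine hf _ _ (fun y hy => ?_)
  by_cases hT : y ∈ T
  · simp [patch, hT]
  · simp [patch, hT, hag y hy]

/-- two-point Jensen built up over `A`: `(pavg f)² ≤ pavg f²`. -/
lemma pavg_sq_le (q : ℝ) (hq0 : 0 ≤ q) (hq1 : q ≤ 1) (A : Finset ι)
    (f : (ι → Bool) → ℝ) (ω : ι → Bool) :
    (pavg q A f ω) ^ 2 ≤ pavg q A (fun ω' => f ω' ^ 2) ω := by
  classical
  induction A using Finset.induction_on generalizing ω with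
  | empty =>
      have h1 : pavg q (∅ : Finset ι) f = f := pavg_of_blind
        (fun ω₁ ω₂ hag => by rw [funext (fun y => hag y (Finset.notMem_empty y))])
      have h2 : pavg q (∅ : Finset ι) (fun ω' => f ω' ^ 2) = fun ω' => f ω' ^ 2 :=
        pavg_of_blind (fun ω₁ ω₂ hag => by
          have : ω₁ = ω₂ := funext (fun y => hag y (Finset.notMem_empty y))
          rw [this])
      rw [h1, h2]
  | @insert x A hx ih =>
      rw [pavg_insert q A x hx f ω, pavg_insert q A x hx _ ω]
      have hF := ih (Function.update ω x false)
      have hT := ih (Function.update ω x true)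
      nlinarith [sq_nonneg (pavg q A f (Function.update ω x false) -
        pavg q A f (Function.update ω x true)), mul_nonneg hq0 (sub_nonneg.2 hq1)]

lemma pavg_update_eq (q : ℝ) {A : Finset ι} {x : ι} (hx : x ∉ A)
    (f : (ι → Bool) → ℝ) (b : Bool) (ω : ι → Bool) :
    pavg q A f (Function.update ω x b) =
      pavg q A (fun ω' => f (Function.update ω' x b)) ω := by
  unfold pavg
  refine Finset.sum_congr rfl (fun τ _ => ?_)
  rw [patch_update_notMem A τ ω hx b]

/-- positivity of conditional variance for functions nonconstant on the cube over `A`. -/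
lemma pavg_var_pos {q : ℝ} (hq0 : 0 < q) (hq1 : q < 1) (A : Finset ι)
    (f : (ι → Bool) → ℝ) (ω : ι → Bool)
    (hnc : ∃ τ τ' : {x // x ∈ A} → Bool, f (patch A τ ω) ≠ f (patch A τ' ω)) :
    0 < pavg q A (fun ω' => f ω' ^ 2) ω - (pavg q A f ω) ^ 2 := by
  classical
  set m := pavg q A f ω with hm
  have htot : pavg q A (fun _ => (1 : ℝ)) ω = 1 := by rw [pavg_const]
  have hexp : pavg q A (fun ω' => (f ω' - m) ^ 2) ω =
      pavg q A (fun ω' => f ω' ^ 2) ω - m ^ 2 := by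
    have h1 : pavg q A (fun ω' => (f ω' - m) ^ 2) ω =
        pavg q A (fun ω' => f ω' ^ 2 + ((-2 * m) * f ω' + m ^ 2 * 1)) ω :=
      pavg_congr (fun τ => by ring)
    rw [h1, pavg_add, pavg_add, pavg_const_mul, pavg_const_mul, htot, ← hm]
    ring
  rw [← hexp]
  obtain ⟨τ₀, τ₀', hne⟩ := hnc
  have hne0 : f (patch A τ₀ ω) - m ≠ 0 ∨ f (patch A τ₀' ω) - m ≠ 0 := by
    by_contra hcon
    push_neg at hcon
    exact hne (by linarith [hcon.1, hcon.2])
  obtain ⟨τ₁, hτ₁⟩ : ∃ τ₁, f (patch A τ₁ ω) - m ≠ 0 := by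
    rcases hne0 with h | h
    · exact ⟨τ₀, h⟩
    · exact ⟨τ₀', h⟩
  refine Finset.sum_pos' (fun τ _ => ?_) ⟨τ₁, Finset.mem_univ τ₁, ?_⟩
  · exact mul_nonneg (cylWeight_nonneg hq0.le hq1.le A τ) (sq_nonneg _)
  · exact mul_pos (cylWeight_pos hq0 hq1 A τ₁) (by positivity)

end Machinery4
section Machinery5

set_option linter.unusedSectionVars false

open Finset

variable {ι : Type*} [DecidableEq ι]

/-- Transfer of conditional averages along a bijection of index sets. -/
lemma pavg_transfer {κ : Type*} [DecidableEq κ] (q : ℝ) (A : Finset ι) (B : Finset κ)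
    (e : {x // x ∈ A} ≃ {y // y ∈ B}) (F : (ι → Bool) → ℝ) (G : (κ → Bool) → ℝ)
    (ω₀ : ι → Bool) (ω₁ : κ → Bool)
    (hFG : ∀ τ : {x // x ∈ A} → Bool,
      F (patch A τ ω₀) = G (patch B (τ ∘ e.symm) ω₁)) :
    pavg q A F ω₀ = pavg q B G ω₁ := by
  classical
  unfold pavg
  refine Fintype.sum_equiv (e.arrowCongr (Equiv.refl Bool)) _ _ (fun τ => ?_)
  have harr : (e.arrowCongr (Equiv.refl Bool)) τ = τ ∘ e.symm := by
    funext y; simp [Equiv.arrowCongr]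
  rw [harr]
  have hw : cylWeight q B (τ ∘ e.symm) = cylWeight q A τ := by
    unfold cylWeight
    exact Fintype.prod_equiv e.symm
      (fun y => if τ (e.symm y) then 1 - q else q)
      (fun x => if τ x then 1 - q else q) (fun y => rfl)
  rw [hw, hFG τ]

lemma pavg_univ_eq_finExp {V : Type*} [Fintype V] [DecidableEq V] (q : ℝ)
    (G : (V → Bool) → ℝ) (ω₀ : V → Bool) :
    pavg q (Finset.univ : Finset V) G ω₀ = finExp q G := by
  classical
  unfold pavg finExp
  refine Fintype.sum_equiv
    ((Equiv.subtypeUnivEquiv (fun x => Finset.mem_univ x)).arrowCongr (Equiv.refl Bool))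
    _ _ (fun τ => ?_)
  have h1 : ((Equiv.subtypeUnivEquiv (fun x => Finset.mem_univ x)).arrowCongr
      (Equiv.refl Bool)) τ = fun v => τ ⟨v, Finset.mem_univ v⟩ := by
    funext v; simp [Equiv.arrowCongr, Equiv.subtypeUnivEquiv]
  rw [h1]
  have h2 : cylWeight q (Finset.univ : Finset V) τ =
      ∏ x : V, (if τ ⟨x, Finset.mem_univ x⟩ then 1 - q else q) := by
    unfold cylWeight
    exact Fintype.prod_equiv (Equiv.subtypeUnivEquiv (fun x => Finset.mem_univ x))
      (fun y => if τ y then 1 - q else q)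
      (fun x => if τ ⟨x, Finset.mem_univ x⟩ then 1 - q else q) (fun y => rfl)
  have h3 : patch (Finset.univ : Finset V) τ ω₀ = fun v => τ ⟨v, Finset.mem_univ v⟩ := by
    funext v; simp [patch]
  rw [h2, h3]

/-- Positivity of `cylVar` for nonconstant local functions. -/
lemma cylVar_pos {q : ℝ} (hq0 : 0 < q) (hq1 : q < 1) (S : Finset ι)
    (f : (ι → Bool) → ℝ) (hdep : DependsOnCoords f S)
    (hnc : ∃ ω ω', f ω ≠ f ω') : 0 < cylVar q S f := by
  obtain ⟨ω, ω', hne⟩ := hnc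
  have hrep : ∀ ω₂ : ι → Bool,
      f (patch S (fun y => ω₂ y) (fun _ => true)) = f ω₂ := by
    intro ω₂
    refine hdep _ _ (fun x hx => ?_)
    simp [patch, hx]
  have h1 : cylVar q S f =
      pavg q S (fun ω' => f ω' ^ 2) (fun _ => true) -
        (pavg q S f (fun _ => true)) ^ 2 := by
    unfold cylVar
    rw [cylExp_eq_pavg, cylExp_eq_pavg]
  rw [h1]
  refine pavg_var_pos hq0 hq1 S f (fun _ => true) ?_
  exact ⟨fun y => ω y, fun y => ω' y, by rw [hrep ω, hrep ω']; exact hne⟩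

lemma ind_nonneg (P : Prop) : 0 ≤ ind P := by
  unfold ind; split <;> norm_num

lemma ind_le_one (P : Prop) : ind P ≤ 1 := by
  unfold ind; split <;> norm_num

lemma varAt_nonneg {q : ℝ} (hq0 : 0 ≤ q) (hq1 : q ≤ 1) (f : (ι → Bool) → ℝ)
    (x : ι) (ω : ι → Bool) : 0 ≤ varAt q f x ω := by
  unfold varAt
  have : 0 ≤ (1 - q) * q := mul_nonneg (by linarith) hq0
  positivity

lemma cylExp_nonneg {q : ℝ} (hq0 : 0 ≤ q) (hq1 : q ≤ 1) (S : Finset ι)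
    {f : (ι → Bool) → ℝ} (hf : ∀ ω, 0 ≤ f ω) : 0 ≤ cylExp q S f := by
  rw [cylExp_eq_pavg]
  exact pavg_nonneg hq0 hq1 S hf _

end Machinery5
section EastFacts

open Finset

/-- The defining set of the East gap. -/
def eastSet (q : ℝ) : Set ℝ :=
  { γ : ℝ | ∃ (f : (ℤ → Bool) → ℝ) (S : Finset ℤ),
    DependsOnCoords f S ∧ (∃ ω ω', f ω ≠ f ω') ∧
    γ = dirichlet q (fun (x : ℤ) ω => ω (x + 1) = false) (fun x => {x + 1}) S f /
      cylVar q S f }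

lemma eastGap_eq (q : ℝ) : eastGap q = sInf (eastSet q) := rfl

lemma dirichlet_nonneg {q : ℝ} (hq0 : 0 ≤ q) (hq1 : q ≤ 1)
    (c : ℤ → (ℤ → Bool) → Prop) (supp : ℤ → Finset ℤ) (S : Finset ℤ)
    (f : (ℤ → Bool) → ℝ) : 0 ≤ dirichlet q c supp S f := by
  refine tsum_nonneg (fun x => ?_)
  refine cylExp_nonneg hq0 hq1 _ (fun ω => ?_)
  exact mul_nonneg (ind_nonneg _) (varAt_nonneg hq0 hq1 f x ω)

lemma eastSet_nonneg {q : ℝ} (hq0 : 0 < q) (hq1 : q < 1) :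
    ∀ γ ∈ eastSet q, 0 ≤ γ := by
  rintro γ ⟨f, S, hdep, hnc, rfl⟩
  exact div_nonneg (dirichlet_nonneg hq0.le hq1.le _ _ S f)
    (cylVar_pos hq0 hq1 S f hdep hnc).le

lemma eastGap_nonneg {q : ℝ} (hq0 : 0 < q) (hq1 : q < 1) : 0 ≤ eastGap q :=
  Real.sInf_nonneg (eastSet_nonneg hq0 hq1)

lemma eastGap_mul_le {q : ℝ} (hq0 : 0 < q) (hq1 : q < 1) (S : Finset ℤ)
    (f : (ℤ → Bool) → ℝ) (hdep : DependsOnCoords f S) (hnc : ∃ ω ω', f ω ≠ f ω') :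
    eastGap q * cylVar q S f ≤
      dirichlet q (fun (x : ℤ) ω => ω (x + 1) = false) (fun x => {x + 1}) S f := by
  have hmem : dirichlet q (fun (x : ℤ) ω => ω (x + 1) = false) (fun x => {x + 1}) S f /
      cylVar q S f ∈ eastSet q := ⟨f, S, hdep, hnc, rfl⟩
  have hb : BddBelow (eastSet q) := ⟨0, fun γ hγ => eastSet_nonneg hq0 hq1 γ hγ⟩
  have hle : eastGap q ≤ _ / _ := csInf_le hb hmem
  have hV : 0 < cylVar q S f := cylVar_pos hq0 hq1 S f hdep hnc
  calc eastGap q * cylVar q S f ≤ _ / cylVar q S f * cylVar q S f :=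
        mul_le_mul_of_nonneg_right hle hV.le
    _ = _ := div_mul_cancel₀ _ (ne_of_gt hV)

end EastFacts
section TreeCombinatorics

set_option linter.unusedSectionVars false

open Finset Function

variable {V : Type*} [DecidableEq V]
variable (parent : V → V) (r : V)

/-- depth of a vertex: minimal number of parent steps to reach the root. -/
noncomputable def dep (hreach : ∀ x, ∃ n : ℕ, parent^[n] x = r) (x : V) : ℕ :=
  Nat.find (hreach x)


lemma dep_spec (hreach : ∀ x, ∃ n : ℕ, parent^[n] x = r) (x : V) : parent^[dep parent r hreach x] x = r :=
  Nat.find_spec (hreach x)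

lemma dep_eq_zero_iff (hreach : ∀ x, ∃ n : ℕ, parent^[n] x = r) (x : V) : dep parent r hreach x = 0 ↔ x = r := by
  constructor
  · intro h
    have := dep_spec parent r hreach x
    rwa [h, Function.iterate_zero_apply] at this
  · intro h
    subst h
    exact Nat.eq_zero_of_le_zero (Nat.find_le (by simp))

lemma dep_parent (hreach : ∀ x, ∃ n : ℕ, parent^[n] x = r) (x : V) (hx : x ≠ r) :
    dep parent r hreach (parent x) + 1 = dep parent r hreach x := by
  have hxne : dep parent r hreach x ≠ 0 :=
    fun h => hx ((dep_eq_zero_iff parent r hreach x).1 h)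
  obtain ⟨m, hm⟩ := Nat.exists_eq_succ_of_ne_zero hxne
  have hs : parent^[m] (parent x) = r := by
    have := dep_spec parent r hreach x
    rwa [hm, Function.iterate_succ_apply] at this
  have h1 : dep parent r hreach (parent x) ≤ m := Nat.find_le hs
  have h2 : m ≤ dep parent r hreach (parent x) := by
    by_contra hcon
    push_neg at hcon
    have h3 : parent^[dep parent r hreach (parent x) + 1] x = r := by
      rw [Function.iterate_succ_apply]
      exact dep_spec parent r hreach (parent x)
    have h4 : dep parent r hreach x ≤ dep parent r hreach (parent x) + 1 :=
      Nat.find_le h3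
    omega
  omega

lemma dep_parent_le (hroot : parent r = r) (hreach : ∀ x, ∃ n : ℕ, parent^[n] x = r) (x : V) :
    dep parent r hreach (parent x) ≤ dep parent r hreach x := by
  by_cases hx : x = r
  · subst hx
    rw [hroot]
  · have := dep_parent parent r hreach x hx; omega

lemma dep_iterate_le (hroot : parent r = r) (hreach : ∀ x, ∃ n : ℕ, parent^[n] x = r) (k : ℕ) (x : V) :
    dep parent r hreach (parent^[k] x) ≤ dep parent r hreach x := by
  induction k generalizing x with
  | zero => simp
  | succ n ih =>
      rw [Function.iterate_succ_apply]
      exact le_trans (ih (parent x)) (dep_parent_le parent r hroot hreach x)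

lemma eq_root_of_iterate_fixed (hroot : parent r = r) (hreach : ∀ x, ∃ n : ℕ, parent^[n] x = r) {k : ℕ} (hk : 1 ≤ k) {x : V}
    (hfix : parent^[k] x = x) : x = r := by
  by_contra hx
  have h1 : dep parent r hreach (parent^[k] x) ≤ dep parent r hreach (parent x) := by
    obtain ⟨m, hm⟩ := Nat.exists_eq_add_of_le hk
    rw [hm, add_comm, Function.iterate_add_apply, Function.iterate_one]
    exact dep_iterate_le parent r hroot hreach m (parent x)
  rw [hfix] at h1
  have h2 := dep_parent parent r hreach x hx
  omega

lemma iterate_root (hroot : parent r = r) (k : ℕ) : parent^[k] r = r := by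
  induction k with
  | zero => simp
  | succ n ih => rw [Function.iterate_succ_apply, hroot, ih]

/-- Descendants (towards the leaves) of `c` inside `U`. -/
noncomputable def descIn (U : Finset V) (c : V) : Finset V :=
  U.filter (fun x => ∃ k : ℕ, parent^[k] x = c)

lemma disjoint_descIn (hroot : parent r = r) (hreach : ∀ x, ∃ n : ℕ, parent^[n] x = r) {U : Finset V} {u c₁ c₂ : V}
    (h1 : parent c₁ = u) (h2 : parent c₂ = u) (hc1 : c₁ ≠ r) (hc2 : c₂ ≠ r)
    (hne : c₁ ≠ c₂) : Disjoint (descIn parent U c₁) (descIn parent U c₂) := by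
  rw [Finset.disjoint_left]
  rintro x hx1 hx2
  rw [descIn, Finset.mem_filter] at hx1 hx2
  obtain ⟨hxU, k, hk⟩ := hx1
  obtain ⟨-, j, hj⟩ := hx2
  -- wlog k ≤ j
  have main : ∀ (a b : V) (ka kb : ℕ), ka ≤ kb → parent^[ka] x = a → parent^[kb] x = b →
      parent a = u → parent b = u → a ≠ r → b ≠ r → a = b := by
    intro a b ka kb hab hka hkb hpa hpb har hbr
    obtain ⟨i, hi⟩ := Nat.exists_eq_add_of_le hab
    have hb : parent^[i] a = b := by
      rw [← hka, ← Function.iterate_add_apply, show i + ka = kb by omega]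
      exact hkb
    rcases Nat.eq_zero_or_pos i with hi0 | hipos
    · rw [hi0, Function.iterate_zero_apply] at hb; exact hb
    · exfalso
      have hu : parent^[i] u = u := by
        calc parent^[i] u = parent^[i] (parent a) := by rw [hpa]
          _ = parent (parent^[i] a) := by
              rw [← Function.iterate_succ_apply, Function.iterate_succ_apply']
          _ = parent b := by rw [hb]
          _ = u := hpb
      have hur : u = r := eq_root_of_iterate_fixed parent r hroot hreach hipos hu
      -- then b = parent^[i-1] (parent a) = parent^[i-1] r = r
      obtain ⟨i', hi'⟩ := Nat.exists_eq_succ_of_ne_zero (Nat.pos_iff_ne_zero.1 hipos)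
      have : b = r := by
        rw [← hb, show i = i' + 1 from hi', Function.iterate_succ_apply, hpa, hur,
          iterate_root parent r hroot]
      exact hbr this
  rcases le_total k j with h | h
  · exact hne (main c₁ c₂ k j h hk hj h1 h2 hc1 hc2)
  · exact hne ((main c₂ c₁ j k h hj hk h2 h1 hc2 hc1).symm)

lemma descIn_closed {U : Finset V} (hU : ∀ x ∈ U, parent x ∈ U) (c : V) :
    ∀ x ∈ U \ descIn parent U c, parent x ∈ U \ descIn parent U c := by
  intro x hx
  rw [Finset.mem_sdiff] at hx ⊢
  obtain ⟨hxU, hxd⟩ := hx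
  refine ⟨hU x hxU, fun hpd => hxd ?_⟩
  rw [descIn, Finset.mem_filter] at hpd ⊢
  obtain ⟨-, k, hk⟩ := hpd
  exact ⟨hxU, k + 1, by rw [Function.iterate_succ_apply]; exact hk⟩

lemma self_mem_descIn {U : Finset V} {c : V} (hc : c ∈ U) :
    c ∈ descIn parent U c := by
  rw [descIn, Finset.mem_filter]
  exact ⟨hc, 0, rfl⟩

/-- In a branch-free parent-closed set, each depth class has at most one element. -/
lemma chain_card_le (hroot : parent r = r) (hreach : ∀ x, ∃ n : ℕ, parent^[n] x = r) {U : Finset V} (hU : ∀ x ∈ U, parent x ∈ U)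
    (hnb : ∀ c₁ ∈ U, ∀ c₂ ∈ U, c₁ ≠ r → c₂ ≠ r → parent c₁ = parent c₂ → c₁ = c₂) :
    ∀ k : ℕ, (U.filter (fun x => dep parent r hreach x = k)).card ≤ 1 := by
  intro k
  induction k with
  | zero =>
      refine Finset.card_le_one.2 (fun a ha b hb => ?_)
      rw [Finset.mem_filter] at ha hb
      rw [(dep_eq_zero_iff parent r hreach a).1 ha.2,
        (dep_eq_zero_iff parent r hreach b).1 hb.2]
  | succ n ih =>
      refine le_trans (Finset.card_le_card_of_injOn parent ?_ ?_) ih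
      · intro x hx
        simp only [Finset.coe_filter, Set.mem_setOf_eq] at hx ⊢
        have hxr : x ≠ r := by
          intro h
          rw [h, (dep_eq_zero_iff parent r hreach r).2 rfl] at hx
          omega
        have := dep_parent parent r hreach x hxr
        exact ⟨hU x hx.1, by omega⟩
      · intro a ha b hb hab
        simp only [Finset.coe_filter, Set.mem_setOf_eq] at ha hb
        have har : a ≠ r := by
          intro h; rw [h, (dep_eq_zero_iff parent r hreach r).2 rfl] at ha; omega
        have hbr : b ≠ r := by
          intro h; rw [h, (dep_eq_zero_iff parent r hreach r).2 rfl] at hb; omega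
        exact hnb a ha.1 b hb.1 har hbr hab

lemma dep_injOn_chain (hroot : parent r = r) (hreach : ∀ x, ∃ n : ℕ, parent^[n] x = r) {U : Finset V} (hU : ∀ x ∈ U, parent x ∈ U)
    (hnb : ∀ c₁ ∈ U, ∀ c₂ ∈ U, c₁ ≠ r → c₂ ≠ r → parent c₁ = parent c₂ → c₁ = c₂)
    {x y : V} (hx : x ∈ U) (hy : y ∈ U)
    (hdep : dep parent r hreach x = dep parent r hreach y) : x = y := by
  have hcard := chain_card_le parent r hroot hreach hU hnb (dep parent r hreach x)
  have hx' : x ∈ U.filter (fun z => dep parent r hreach z = dep parent r hreach x) := by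
    rw [Finset.mem_filter]; exact ⟨hx, rfl⟩
  have hy' : y ∈ U.filter (fun z => dep parent r hreach z = dep parent r hreach x) := by
    rw [Finset.mem_filter]; exact ⟨hy, hdep.symm⟩
  exact Finset.card_le_one.1 hcard x hx' y hy'

lemma root_mem_of_closed (hreach : ∀ x, ∃ n : ℕ, parent^[n] x = r) {U : Finset V} (hU : ∀ x ∈ U, parent x ∈ U)
    {x : V} (hx : x ∈ U) : r ∈ U := by
  have : ∀ k : ℕ, parent^[k] x ∈ U := by
    intro k
    induction k with
    | zero => simpa
    | succ n ih => rw [Function.iterate_succ_apply']; exact hU _ ih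
  have hs := dep_spec parent r hreach x
  rw [← hs]
  exact this _

end TreeCombinatorics
section SmallHelpers

set_option linter.unusedSectionVars false

open Finset

variable {ι : Type*} [DecidableEq ι]

lemma patch_mem (A : Finset ι) (τ : {x // x ∈ A} → Bool) (ω : ι → Bool)
    {x : ι} (h : x ∈ A) : patch A τ ω x = τ ⟨x, h⟩ := dif_pos h

lemma patch_notMem (A : Finset ι) (τ : {x // x ∈ A} → Bool) (ω : ι → Bool)
    {x : ι} (h : x ∉ A) : patch A τ ω x = ω x := dif_neg h

lemma pavg_empty (q : ℝ) (f : (ι → Bool) → ℝ) : pavg q (∅ : Finset ι) f = f :=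
  pavg_of_blind (fun ω ω' hag => by
    have : ω = ω' := funext (fun y => hag y (Finset.notMem_empty y))
    rw [this])

lemma ind_congr {P Q : Prop} (h : P ↔ Q) : ind P = ind Q := by
  unfold ind
  exact if_congr h rfl rfl

lemma ind_of_true {P : Prop} (h : P) : ind P = 1 := if_pos h

lemma cylExp_zero_of (q : ℝ) (S : Finset ι) {f : (ι → Bool) → ℝ}
    (h : ∀ ω, f ω = 0) : cylExp q S f = 0 := by
  unfold cylExp
  refine Finset.sum_eq_zero (fun τ _ => ?_)
  rw [h, mul_zero]

end SmallHelpers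
section ChainCase

set_option linter.unusedSectionVars false
set_option maxHeartbeats 1000000

open Finset

variable {V : Type*} [Fintype V] [DecidableEq V]

lemma chain_case (parent : V → V) (r : V) (hroot : parent r = r)
    (hreach : ∀ x, ∃ n : ℕ, parent^[n] x = r)
    {q : ℝ} (hq0 : 0 < q) (hq1 : q < 1)
    (U : Finset V) (hU : ∀ x ∈ U, parent x ∈ U)
    (hnb : ∀ c₁ ∈ U, ∀ c₂ ∈ U, c₁ ≠ r → c₂ ≠ r → parent c₁ = parent c₂ → c₁ = c₂)
    (f : (V → Bool) → ℝ) (ω₀ : V → Bool) :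
    eastGap q * (pavg q U (fun ω => f ω ^ 2) ω₀ - (pavg q U f ω₀) ^ 2) ≤
      ∑ x ∈ U, pavg q U (fun ω => ind (x = r ∨ ω (parent x) = false) * varAt q f x ω) ω₀ := by
  classical
  rcases Finset.eq_empty_or_nonempty U with hUe | hUne
  · subst hUe
    rw [pavg_empty, pavg_empty]
    simp
  obtain ⟨x₀, hx₀⟩ := hUne
  have hrU : r ∈ U := root_mem_of_closed parent r hreach hU hx₀
  set d : V → ℕ := dep parent r hreach with hd
  have dInj : ∀ x ∈ U, ∀ y ∈ U, d x = d y → x = y :=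
    fun x hx y hy h => dep_injOn_chain parent r hroot hreach hU hnb hx hy h
  set φ : V → ℤ := fun x => -(d x : ℤ) with hφ
  have φInj : ∀ x ∈ U, ∀ y ∈ U, φ x = φ y → x = y := by
    intro x hx y hy h
    refine dInj x hx y hy ?_
    simp only [hφ, neg_inj, Nat.cast_inj] at h
    exact h
  set S : Finset ℤ := U.image φ with hS
  have memS : ∀ x ∈ U, φ x ∈ S := fun x hx => Finset.mem_image_of_mem φ hx
  have hdr : d r = 0 := (dep_eq_zero_iff parent r hreach r).2 rfl
  have hφr : φ r = 0 := by simp [hφ, hdr]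
  have hS0 : (0 : ℤ) ∈ S := hφr ▸ memS r hrU
  have h1S : (1 : ℤ) ∉ S := by
    rw [hS]
    intro h
    obtain ⟨v, hv, hvz⟩ := Finset.mem_image.1 h
    simp only [hφ] at hvz
    omega
  -- the equivalence between `U` and `S`
  have hbij : Function.Bijective
      (fun x : {x // x ∈ U} => (⟨φ x.1, memS x.1 x.2⟩ : {z // z ∈ S})) := by
    constructor
    · rintro ⟨a, ha⟩ ⟨b, hb⟩ hab
      have : φ a = φ b := congrArg Subtype.val hab
      exact Subtype.ext (φInj a ha b hb this)
    · rintro ⟨z, hz⟩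
      obtain ⟨v, hv, hvz⟩ := Finset.mem_image.1 hz
      exact ⟨⟨v, hv⟩, Subtype.ext hvz⟩
  set e : {x // x ∈ U} ≃ {z // z ∈ S} := Equiv.ofBijective _ hbij with he
  have heval : ∀ (x : {x // x ∈ U}), (e x : ℤ) = φ x.1 := fun x => rfl
  -- the transported test function on ℤ
  set fZ : (ℤ → Bool) → ℝ :=
    fun ωZ => f (fun v => if h : v ∈ U then ωZ (φ v) else ω₀ v) with hfZ
  -- coordinate computation for patched configurations
  have hcoord : ∀ (τ : {x // x ∈ U} → Bool) (β : ℤ → Bool) (v : V) (hv : v ∈ U),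
      patch S (τ ∘ e.symm) β (φ v) = τ ⟨v, hv⟩ := by
    intro τ β v hv
    rw [patch_mem S _ β (memS v hv)]
    have h1 : (⟨φ v, memS v hv⟩ : {z // z ∈ S}) = e ⟨v, hv⟩ := Subtype.ext rfl
    show τ (e.symm ⟨φ v, memS v hv⟩) = τ ⟨v, hv⟩
    rw [h1, Equiv.symm_apply_apply]
  have hGmain : ∀ (τ : {x // x ∈ U} → Bool) (β : ℤ → Bool),
      fZ (patch S (τ ∘ e.symm) β) = f (patch U τ ω₀) := by
    intro τ β
    show f (fun v => if h : v ∈ U then (patch S (τ ∘ e.symm) β) (φ v) else ω₀ v) =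
      f (patch U τ ω₀)
    congr 1
    funext v
    by_cases hv : v ∈ U
    · rw [dif_pos hv, hcoord τ β v hv, patch_mem U τ ω₀ hv]
    · rw [dif_neg hv, patch_notMem U τ ω₀ hv]
  -- update transport
  have hupd : ∀ (τ : {x // x ∈ U} → Bool) (β : ℤ → Bool) (x : V) (hx : x ∈ U) (b : Bool),
      fZ (Function.update (patch S (τ ∘ e.symm) β) (φ x) b) =
        f (Function.update (patch U τ ω₀) x b) := by
    intro τ β x hx b
    show f (fun v => if h : v ∈ U then
        (Function.update (patch S (τ ∘ e.symm) β) (φ x) b) (φ v) else ω₀ v) =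
      f (Function.update (patch U τ ω₀) x b)
    congr 1
    funext v
    by_cases hv : v ∈ U
    · rw [dif_pos hv]
      by_cases hvx : v = x
      · subst hvx
        rw [Function.update_self, Function.update_self]
      · have hφvx : φ v ≠ φ x := fun h => hvx (φInj v hv x hx h)
        rw [Function.update_of_ne hφvx, Function.update_of_ne hvx,
          hcoord τ β v hv, patch_mem U τ ω₀ hv]
    · have hvx : v ≠ x := fun h => hv (h ▸ hx)
      rw [dif_neg hv, Function.update_of_ne hvx, patch_notMem U τ ω₀ hv]
  have hvarAt : ∀ (τ : {x // x ∈ U} → Bool) (β : ℤ → Bool) (x : V) (hx : x ∈ U),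
      varAt q fZ (φ x) (patch S (τ ∘ e.symm) β) = varAt q f x (patch U τ ω₀) := by
    intro τ β x hx
    unfold varAt
    rw [hupd τ β x hx true, hupd τ β x hx false]
  set ct : ℤ → Bool := fun _ => true with hct
  -- variance transport
  have hVar : cylVar q S fZ =
      pavg q U (fun ω => f ω ^ 2) ω₀ - (pavg q U f ω₀) ^ 2 := by
    have hA : pavg q U (fun ω => f ω ^ 2) ω₀ = pavg q S (fun ω => fZ ω ^ 2) ct :=
      pavg_transfer q U S e (fun ω => f ω ^ 2) (fun ω => fZ ω ^ 2) ω₀ ct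
        (fun τ => by simp only [hGmain τ ct])
    have hB : pavg q U f ω₀ = pavg q S fZ ct :=
      pavg_transfer q U S e f fZ ω₀ ct (fun τ => (hGmain τ ct).symm)
    unfold cylVar
    rw [cylExp_eq_pavg, cylExp_eq_pavg, ← hA, ← hB]
  -- split on whether `f` is constant over the cube on `U`
  by_cases hcon : ∀ τ τ' : {x // x ∈ U} → Bool, f (patch U τ ω₀) = f (patch U τ' ω₀)
  · -- constant case: the conditional variance vanishes
    set k : ℝ := f (patch U (fun _ => true) ω₀) with hk
    have hLf : pavg q U f ω₀ = k := by
      have h1 : pavg q U f ω₀ = pavg q U (fun _ => k) ω₀ :=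
        pavg_congr (fun τ => hcon τ (fun _ => true))
      rw [h1, pavg_const]
    have hLf2 : pavg q U (fun ω => f ω ^ 2) ω₀ = k ^ 2 := by
      have h1 : pavg q U (fun ω => f ω ^ 2) ω₀ = pavg q U (fun _ => k ^ 2) ω₀ :=
        pavg_congr (fun τ => by
          show f (patch U τ ω₀) ^ 2 = k ^ 2
          rw [hcon τ (fun _ => true)])
      rw [h1, pavg_const]
    rw [hLf, hLf2, sub_self, mul_zero]
    refine Finset.sum_nonneg (fun x _ => ?_)
    refine pavg_nonneg hq0.le hq1.le U (fun ω' => ?_) ω₀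
    exact mul_nonneg (ind_nonneg _) (varAt_nonneg hq0.le hq1.le f x ω')
  · push_neg at hcon
    obtain ⟨τ₁, τ₂, hne⟩ := hcon
    have hdepZ : DependsOnCoords fZ S := by
      intro ω ω' hag
      show f _ = f _
      congr 1
      funext v
      by_cases hv : v ∈ U
      · rw [dif_pos hv, dif_pos hv, hag (φ v) (memS v hv)]
      · rw [dif_neg hv, dif_neg hv]
    have hncZ : ∃ ω ω', fZ ω ≠ fZ ω' := by
      refine ⟨patch S (τ₁ ∘ e.symm) ct, patch S (τ₂ ∘ e.symm) ct, ?_⟩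
      rw [hGmain τ₁ ct, hGmain τ₂ ct]
      exact hne
    have hkey := eastGap_mul_le hq0 hq1 S fZ hdepZ hncZ
    rw [hVar] at hkey
    refine le_trans hkey ?_
    unfold dirichlet
    have hzero : ∀ z ∉ S,
        cylExp q (insert z (S ∪ {z + 1}))
          (fun ω => ind (ω (z + 1) = false) * varAt q fZ z ω) = 0 := by
      intro z hz
      refine cylExp_zero_of q _ (fun ω => ?_)
      have hvz : varAt q fZ z ω = 0 := by
        have hupd0 : ∀ b : Bool, fZ (Function.update ω z b) = fZ ω := by
          intro b
          show f _ = f _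
          congr 1
          funext v
          by_cases hv : v ∈ U
          · rw [dif_pos hv, dif_pos hv]
            have : φ v ≠ z := fun h => hz (h ▸ memS v hv)
            rw [Function.update_of_ne this]
          · rw [dif_neg hv, dif_neg hv]
        unfold varAt
        rw [hupd0 true, hupd0 false, sub_self]
        ring
      rw [hvz, mul_zero]
    rw [tsum_eq_sum hzero, hS, Finset.sum_image φInj, ← hS]
    refine Finset.sum_le_sum (fun x hx => ?_)
    by_cases hxr : x = r
    · rw [hxr, hφr]
      have hins0 : insert (0 : ℤ) (S ∪ {0 + 1}) = insert 1 S := by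
        have h01 : (0 : ℤ) + 1 = 1 := by norm_num
        rw [h01, Finset.union_comm, ← Finset.insert_eq, Finset.insert_comm,
          Finset.insert_eq_self.2 hS0]
      rw [hins0, cylExp_eq_pavg, pavg_insert q S 1 h1S _ ct]
      -- evaluate the two boundary averages
      have hbase : ∀ (σ : {z // z ∈ S} → Bool) (β β' : ℤ → Bool) (c : Bool),
          fZ (Function.update (patch S σ β) 0 c) =
            fZ (Function.update (patch S σ β') 0 c) := by
        intro σ β β' c
        show f _ = f _
        congr 1
        funext v
        by_cases hv : v ∈ U
        · rw [dif_pos hv, dif_pos hv]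
          by_cases hv0 : φ v = (0 : ℤ)
          · rw [hv0, Function.update_self, Function.update_self]
          · rw [Function.update_of_ne hv0, Function.update_of_ne hv0,
              patch_mem S σ β (memS v hv), patch_mem S σ β' (memS v hv)]
        · rw [dif_neg hv, dif_neg hv]
      have hval : ∀ b : Bool, pavg q S
          (fun ω => ind (ω (0 + 1) = false) * varAt q fZ 0 ω)
          (Function.update ct 1 b) =
          ind ((b : Bool) = false) * pavg q S (fun ω => varAt q fZ 0 ω) ct := by
        intro b
        rw [← pavg_const_mul]
        unfold pavg
        refine Finset.sum_congr rfl (fun σ _ => ?_)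
        congr 1
        show ind ((patch S σ (Function.update ct 1 b)) (0 + 1) = false) *
            varAt q fZ 0 (patch S σ (Function.update ct 1 b)) =
          ind ((b : Bool) = false) * varAt q fZ 0 (patch S σ ct)
        have hc1 : (patch S σ (Function.update ct 1 b)) (0 + 1) = b := by
          norm_num
          rw [patch_notMem S σ _ h1S, Function.update_self]
        have hv0 : varAt q fZ 0 (patch S σ (Function.update ct 1 b)) =
            varAt q fZ 0 (patch S σ ct) := by
          unfold varAt
          rw [hbase σ (Function.update ct 1 b) ct true,
            hbase σ (Function.update ct 1 b) ct false]
        rw [hc1, hv0]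
      rw [hval true, hval false]
      have hif : ind ((true : Bool) = false) = 0 := by
        unfold ind
        simp
      have hif2 : ind ((false : Bool) = false) = 1 := ind_of_true rfl
      rw [hif, hif2]
      have hXtr : pavg q U (fun ω => varAt q f r ω) ω₀ =
          pavg q S (fun ω => varAt q fZ 0 ω) ct := by
        refine pavg_transfer q U S e _ _ ω₀ ct (fun τ => ?_)
        have := hvarAt τ ct r hrU
        rw [hφr] at this
        exact this.symm
      have hone : pavg q U (fun ω => ind (r = r ∨ ω (parent r) = false) *
          varAt q f r ω) ω₀ = pavg q U (fun ω => varAt q f r ω) ω₀ :=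
        pavg_congr (fun τ => by
          show ind (r = r ∨ (patch U τ ω₀) (parent r) = false) *
            varAt q f r (patch U τ ω₀) = varAt q f r (patch U τ ω₀)
          rw [ind_of_true (Or.inl rfl), one_mul])
      rw [hone, hXtr]
      have hY : 0 ≤ pavg q S (fun ω => varAt q fZ 0 ω) ct :=
        pavg_nonneg hq0.le hq1.le S (fun ω' => varAt_nonneg hq0.le hq1.le fZ 0 ω') ct
      nlinarith
    · -- non-root vertices: exact identification of the Dirichlet terms
      have hpxU : parent x ∈ U := hU x hx
      have hφp : φ x + 1 = φ (parent x) := by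
        have h1 := dep_parent parent r hreach x hxr
        rw [← hd] at h1
        simp only [hφ]
        omega
      have hz1 : φ x + 1 ∈ S := by
        rw [hφp]
        exact memS _ hpxU
      have hins : insert (φ x) (S ∪ {φ x + 1}) = S := by
        rw [Finset.union_comm, ← Finset.insert_eq, Finset.insert_eq_self.2 hz1,
          Finset.insert_eq_self.2 (memS x hx)]
      rw [hins, cylExp_eq_pavg]
      have htr : pavg q U (fun ω => ind (ω (parent x) = false) * varAt q f x ω) ω₀ =
          pavg q S (fun ω => ind (ω (φ x + 1) = false) * varAt q fZ (φ x) ω) ct := by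
        refine pavg_transfer q U S e _ _ ω₀ ct (fun τ => ?_)
        show ind ((patch U τ ω₀) (parent x) = false) * varAt q f x (patch U τ ω₀) =
          ind ((patch S (τ ∘ e.symm) ct) (φ x + 1) = false) *
            varAt q fZ (φ x) (patch S (τ ∘ e.symm) ct)
        rw [hvarAt τ ct x hx]
        have hcc : (patch S (τ ∘ e.symm) ct) (φ x + 1) = (patch U τ ω₀) (parent x) := by
          rw [hφp, hcoord τ ct (parent x) hpxU, patch_mem U τ ω₀ hpxU]
        rw [hcc]
      have hlast : pavg q U (fun ω => ind (x = r ∨ ω (parent x) = false) *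
          varAt q f x ω) ω₀ =
          pavg q U (fun ω => ind (ω (parent x) = false) * varAt q f x ω) ω₀ :=
        pavg_congr (fun τ => by
          show ind (x = r ∨ (patch U τ ω₀) (parent x) = false) *
              varAt q f x (patch U τ ω₀) =
            ind ((patch U τ ω₀) (parent x) = false) * varAt q f x (patch U τ ω₀)
          rw [ind_congr (or_iff_right hxr)])
      rw [hlast, htr]

end ChainCase
section MainInduction

set_option linter.unusedSectionVars false
set_option maxHeartbeats 2000000

open Finset

variable {V : Type*} [Fintype V] [DecidableEq V]

lemma tree_poincare (parent : V → V) (r : V) (hroot : parent r = r)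
    (hreach : ∀ x, ∃ n : ℕ, parent^[n] x = r)
    {q : ℝ} (hq0 : 0 < q) (hq1 : q < 1) :
    ∀ (U : Finset V), (∀ x ∈ U, parent x ∈ U) → ∀ (f : (V → Bool) → ℝ) (ω₀ : V → Bool),
    eastGap q * (pavg q U (fun ω => f ω ^ 2) ω₀ - (pavg q U f ω₀) ^ 2) ≤
      ∑ x ∈ U, pavg q U (fun ω => ind (x = r ∨ ω (parent x) = false) * varAt q f x ω) ω₀ := by
  classical
  intro U
  induction U using Finset.strongInduction with
  | _ U IH =>
  intro hU f ω₀
  by_cases hnb : ∀ c₁ ∈ U, ∀ c₂ ∈ U, c₁ ≠ r → c₂ ≠ r → parent c₁ = parent c₂ → c₁ = c₂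
  · exact chain_case parent r hroot hreach hq0 hq1 U hU hnb f ω₀
  · push_neg at hnb
    obtain ⟨c₁, hc₁U, c₂, hc₂U, hc₁r, hc₂r, hpar, hcne⟩ := hnb
    set P : Finset V := descIn parent U c₁ with hPdef
    set Q : Finset V := descIn parent U c₂ with hQdef
    have hPQ : Disjoint P Q :=
      disjoint_descIn parent r hroot hreach rfl hpar.symm hc₁r hc₂r hcne
    have hPU : P ⊆ U := Finset.filter_subset _ _
    have hQU : Q ⊆ U := Finset.filter_subset _ _
    set T₂ : Finset V := U \ P with hT₂def
    set T₁ : Finset V := U \ Q with hT₁def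
    have hT₂cl : ∀ x ∈ T₂, parent x ∈ T₂ := descIn_closed parent hU c₁
    have hT₁cl : ∀ x ∈ T₁, parent x ∈ T₁ := descIn_closed parent hU c₂
    have hc₁P : c₁ ∈ P := self_mem_descIn parent hc₁U
    have hc₂Q : c₂ ∈ Q := self_mem_descIn parent hc₂U
    have hT₂ss : T₂ ⊂ U := by
      refine Finset.ssubset_iff_of_subset (Finset.sdiff_subset) |>.2 ⟨c₁, hc₁U, ?_⟩
      simp [hT₂def, hc₁P]
    have hT₁ss : T₁ ⊂ U := by
      refine Finset.ssubset_iff_of_subset (Finset.sdiff_subset) |>.2 ⟨c₂, hc₂U, ?_⟩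
      simp [hT₁def, hc₂Q]
    have hQT₂ : Q ⊆ T₂ := by
      intro y hy
      rw [hT₂def, Finset.mem_sdiff]
      exact ⟨hQU hy, fun hyP => (Finset.disjoint_left.1 hPQ) hyP hy⟩
    have hPT₁ : P ⊆ T₁ := by
      intro y hy
      rw [hT₁def, Finset.mem_sdiff]
      exact ⟨hPU hy, fun hyQ => (Finset.disjoint_left.1 hPQ) hy hyQ⟩
    have hdPT₂ : Disjoint P T₂ := by
      rw [hT₂def]
      exact Finset.disjoint_sdiff
    have hdQT₁ : Disjoint Q T₁ := by
      rw [hT₁def]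
      exact Finset.disjoint_sdiff
    have hT₂P : T₂ ∪ P = U := by
      rw [hT₂def, Finset.sdiff_union_of_subset hPU]
    have hT₁Q : T₁ ∪ Q = U := by
      rw [hT₁def, Finset.sdiff_union_of_subset hQU]
    -- the averaged function and the fluctuation
    set g : (V → Bool) → ℝ := pavg q P f with hgdef
    set h : (V → Bool) → ℝ := fun ω => f ω - g ω with hhdef
    have hgB : Blind g P := pavg_blind q P f
    have hPh0 : ∀ ω', pavg q P h ω' = 0 := by
      intro ω'
      rw [hhdef, pavg_sub, ← hgdef]
      have : pavg q P g ω' = g ω' := by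
        rw [hgdef, pavg_idem]
      rw [this, sub_self]
    -- expectations agree
    have hUg : pavg q U g = pavg q U f := by
      rw [hgdef]
      exact pavg_pavg_subset q hPU f
    -- orthogonal splitting of the second moment
    have hgh : pavg q U (fun ω => g ω * h ω) ω₀ = 0 := by
      have hz : ∀ ω', pavg q P (fun ω => g ω * h ω) ω' = 0 := by
        intro ω'
        rw [pavg_mul_blind hgB h ω', hPh0 ω', mul_zero]
      have h1 : pavg q U (fun ω => g ω * h ω) ω₀ =
          pavg q U (pavg q P (fun ω => g ω * h ω)) ω₀ := by
        rw [pavg_pavg_subset q hPU]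
      rw [h1]
      have h2 : pavg q U (pavg q P (fun ω => g ω * h ω)) ω₀ =
          pavg q U (fun _ => (0 : ℝ)) ω₀ := pavg_congr (fun τ => hz _)
      rw [h2, pavg_const]
    have hsplit : pavg q U (fun ω => f ω ^ 2) ω₀ =
        pavg q U (fun ω => g ω ^ 2) ω₀ + pavg q U (fun ω => h ω ^ 2) ω₀ := by
      have h1 : pavg q U (fun ω => f ω ^ 2) ω₀ =
          pavg q U (fun ω => g ω ^ 2 + (2 * (g ω * h ω) + h ω ^ 2)) ω₀ :=
        pavg_congr (fun τ => by
          show f (patch U τ ω₀) ^ 2 = _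
          rw [hhdef]
          ring)
      rw [h1, pavg_add, pavg_add, pavg_const_mul, hgh]
      ring
    -- blindness of the constraint indicators for vertices of `T₂`
    have hcB : ∀ x ∈ T₂, Blind (fun ω => ind (x = r ∨ ω (parent x) = false)) P := by
      intro x hx ω ω' hag
      have hpx : parent x ∉ P := (Finset.mem_sdiff.1 (hT₂cl x hx)).2
      exact ind_congr (by rw [hag (parent x) hpx])
    -- (5a): for `x ∈ T₂` the `g`-Dirichlet term is dominated by the `f`-term
    have h5a : ∀ x ∈ T₂,
        pavg q U (fun ω => ind (x = r ∨ ω (parent x) = false) * varAt q g x ω) ω₀ ≤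
        pavg q U (fun ω => ind (x = r ∨ ω (parent x) = false) * varAt q f x ω) ω₀ := by
      intro x hx
      have hxP : x ∉ P := (Finset.mem_sdiff.1 hx).2
      have hindB := hcB x hx
      have hcore : ∀ ω', varAt q g x ω' ≤
          pavg q P (fun ω'' => varAt q f x ω'') ω' := by
        intro ω'
        have hD : g (Function.update ω' x true) - g (Function.update ω' x false) =
            pavg q P (fun ω'' => f (Function.update ω'' x true) -
              f (Function.update ω'' x false)) ω' := by
          rw [hgdef, pavg_update_eq q hxP f true ω', pavg_update_eq q hxP f false ω',
            ← pavg_sub]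
        have hJ : (pavg q P (fun ω'' => f (Function.update ω'' x true) -
              f (Function.update ω'' x false)) ω') ^ 2 ≤
            pavg q P (fun ω'' => (f (Function.update ω'' x true) -
              f (Function.update ω'' x false)) ^ 2) ω' :=
          pavg_sq_le q hq0.le hq1.le P _ ω'
        have hre : pavg q P (fun ω'' => varAt q f x ω'') ω' =
            (1 - q) * q * pavg q P (fun ω'' => (f (Function.update ω'' x true) -
              f (Function.update ω'' x false)) ^ 2) ω' :=
          pavg_const_mul q P ((1 - q) * q)
            (fun ω'' => (f (Function.update ω'' x true) -
              f (Function.update ω'' x false)) ^ 2) ω'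
        show (1 - q) * q * (g (Function.update ω' x true) -
            g (Function.update ω' x false)) ^ 2 ≤ _
        rw [hD, hre]
        exact mul_le_mul_of_nonneg_left hJ (mul_nonneg (by linarith) hq0.le)
      have hpt : ∀ ω', ind (x = r ∨ ω' (parent x) = false) * varAt q g x ω' ≤
          pavg q P (fun ω'' => ind (x = r ∨ ω'' (parent x) = false) *
            varAt q f x ω'') ω' := by
        intro ω'
        have hpull : pavg q P (fun ω'' => ind (x = r ∨ ω'' (parent x) = false) *
              varAt q f x ω'') ω' =
            ind (x = r ∨ ω' (parent x) = false) *
              pavg q P (fun ω'' => varAt q f x ω'') ω' :=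
          pavg_mul_blind hindB (fun ω'' => varAt q f x ω'') ω'
        rw [hpull]
        exact mul_le_mul_of_nonneg_left (hcore ω') (ind_nonneg _)
      have hm := pavg_mono hq0.le hq1.le U hpt ω₀
      have hiter : pavg q U (pavg q P (fun ω'' => ind (x = r ∨ ω'' (parent x) = false) *
          varAt q f x ω'')) ω₀ =
          pavg q U (fun ω'' => ind (x = r ∨ ω'' (parent x) = false) *
            varAt q f x ω'') ω₀ := by
        rw [pavg_pavg_subset q hPU]
      calc pavg q U (fun ω => ind (x = r ∨ ω (parent x) = false) * varAt q g x ω) ω₀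
          ≤ pavg q U (pavg q P (fun ω'' => ind (x = r ∨ ω'' (parent x) = false) *
              varAt q f x ω'')) ω₀ := hm
        _ = _ := hiter
    -- (5b): for `x ∈ P` the `h`-term coincides with the `f`-term
    have h5b : ∀ x ∈ P,
        pavg q U (fun ω => ind (x = r ∨ ω (parent x) = false) * varAt q h x ω) ω₀ =
        pavg q U (fun ω => ind (x = r ∨ ω (parent x) = false) * varAt q f x ω) ω₀ := by
      intro x hxP
      have hvar : ∀ ω', varAt q h x ω' = varAt q f x ω' := by
        intro ω'
        have hgx : ∀ b : Bool, g (Function.update ω' x b) = g ω' :=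
          fun b => blind_update hgB hxP ω' b
        have hh1 : ∀ ω'', h ω'' = f ω'' - g ω'' := fun _ => rfl
        unfold varAt
        rw [hh1, hh1, hgx true, hgx false]
        ring
      exact pavg_congr (fun τ => by rw [hvar])
    -- (5c): for `x ∈ T₂ \ Q` the exact Pythagoras cancellation
    have h5c : ∀ x ∈ T₂ \ Q,
        pavg q U (fun ω => ind (x = r ∨ ω (parent x) = false) * varAt q h x ω) ω₀ =
        pavg q U (fun ω => ind (x = r ∨ ω (parent x) = false) * varAt q f x ω) ω₀ -
        pavg q U (fun ω => ind (x = r ∨ ω (parent x) = false) * varAt q g x ω) ω₀ := by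
      intro x hxC
      have hxT₂ : x ∈ T₂ := (Finset.mem_sdiff.1 hxC).1
      have hxP : x ∉ P := (Finset.mem_sdiff.1 hxT₂).2
      have hindB := hcB x hxT₂
      -- the discrete gradient of `g` at `x` is `P`-blind
      have hDgB : Blind (fun ω'' => g (Function.update ω'' x true) -
          g (Function.update ω'' x false)) P := by
        intro ω ω' hag
        have h1 : ∀ b : Bool, g (Function.update ω x b) = g (Function.update ω' x b) := by
          intro b
          refine hgB _ _ (fun y hy => ?_)
          by_cases hyx : y = x
          · subst hyx; rw [Function.update_self, Function.update_self]
          · rw [Function.update_of_ne hyx, Function.update_of_ne hyx]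
            exact hag y hy
        show g (Function.update ω x true) - g (Function.update ω x false) =
          g (Function.update ω' x true) - g (Function.update ω' x false)
        rw [h1 true, h1 false]
      have hDgavg : ∀ ω', pavg q P (fun ω'' => f (Function.update ω'' x true) -
          f (Function.update ω'' x false)) ω' =
          g (Function.update ω' x true) - g (Function.update ω' x false) := by
        intro ω'
        rw [hgdef, pavg_update_eq q hxP f true ω', pavg_update_eq q hxP f false ω',
          ← pavg_sub]
      -- pointwise identity after averaging over `P`
      have hkey : ∀ ω', pavg q P (fun ω'' => ind (x = r ∨ ω'' (parent x) = false) *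
            varAt q h x ω'') ω' =
          pavg q P (fun ω'' => ind (x = r ∨ ω'' (parent x) = false) *
            varAt q f x ω'') ω' -
          ind (x = r ∨ ω' (parent x) = false) * varAt q g x ω' := by
        intro ω'
        have hh1 : ∀ ω'', h ω'' = f ω'' - g ω'' := fun _ => rfl
        -- expand the square
        have hexp : ∀ ω'', ind (x = r ∨ ω'' (parent x) = false) * varAt q h x ω'' =
            ind (x = r ∨ ω'' (parent x) = false) * varAt q f x ω'' -
            2 * ((1 - q) * q) * ((ind (x = r ∨ ω'' (parent x) = false) *
              (g (Function.update ω'' x true) - g (Function.update ω'' x false))) *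
              (f (Function.update ω'' x true) - f (Function.update ω'' x false))) +
            (1 - q) * q * (ind (x = r ∨ ω'' (parent x) = false) *
              (g (Function.update ω'' x true) - g (Function.update ω'' x false)) ^ 2) := by
          intro ω''
          have hi2 : ind (x = r ∨ ω'' (parent x) = false) *
              ind (x = r ∨ ω'' (parent x) = false) =
              ind (x = r ∨ ω'' (parent x) = false) := by
            unfold ind; split <;> norm_num
          unfold varAt
          rw [hh1, hh1]
          nlinarith [hi2]
        have e1 : pavg q P (fun ω'' => ind (x = r ∨ ω'' (parent x) = false) *
              varAt q h x ω'') ω' =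
            pavg q P (fun ω'' => ind (x = r ∨ ω'' (parent x) = false) *
              varAt q f x ω'' -
              2 * ((1 - q) * q) * ((ind (x = r ∨ ω'' (parent x) = false) *
                (g (Function.update ω'' x true) - g (Function.update ω'' x false))) *
                (f (Function.update ω'' x true) - f (Function.update ω'' x false))) +
              (1 - q) * q * (ind (x = r ∨ ω'' (parent x) = false) *
                (g (Function.update ω'' x true) - g (Function.update ω'' x false)) ^ 2)) ω' :=
          pavg_congr (fun τ => by rw [hexp])
        have e2 := pavg_add q P
          (fun ω'' => ind (x = r ∨ ω'' (parent x) = false) * varAt q f x ω'' -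
            2 * ((1 - q) * q) * ((ind (x = r ∨ ω'' (parent x) = false) *
              (g (Function.update ω'' x true) - g (Function.update ω'' x false))) *
              (f (Function.update ω'' x true) - f (Function.update ω'' x false))))
          (fun ω'' => (1 - q) * q * (ind (x = r ∨ ω'' (parent x) = false) *
            (g (Function.update ω'' x true) - g (Function.update ω'' x false)) ^ 2)) ω'
        have e3 := pavg_sub q P
          (fun ω'' => ind (x = r ∨ ω'' (parent x) = false) * varAt q f x ω'')
          (fun ω'' => 2 * ((1 - q) * q) * ((ind (x = r ∨ ω'' (parent x) = false) *
            (g (Function.update ω'' x true) - g (Function.update ω'' x false))) *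
            (f (Function.update ω'' x true) - f (Function.update ω'' x false)))) ω'
        have e4 := pavg_const_mul q P (2 * ((1 - q) * q))
          (fun ω'' => (ind (x = r ∨ ω'' (parent x) = false) *
            (g (Function.update ω'' x true) - g (Function.update ω'' x false))) *
            (f (Function.update ω'' x true) - f (Function.update ω'' x false))) ω'
        have e5 := pavg_const_mul q P ((1 - q) * q)
          (fun ω'' => ind (x = r ∨ ω'' (parent x) = false) *
            (g (Function.update ω'' x true) - g (Function.update ω'' x false)) ^ 2) ω'
        -- pull out the blind prefactor in the cross term
        have hkB : Blind (fun ω'' => ind (x = r ∨ ω'' (parent x) = false) *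
            (g (Function.update ω'' x true) - g (Function.update ω'' x false))) P := by
          intro ω ω' hag
          have h1 : ind (x = r ∨ ω (parent x) = false) =
              ind (x = r ∨ ω' (parent x) = false) := hindB ω ω' hag
          have h2 : g (Function.update ω x true) - g (Function.update ω x false) =
              g (Function.update ω' x true) - g (Function.update ω' x false) :=
            hDgB ω ω' hag
          show ind (x = r ∨ ω (parent x) = false) *
              (g (Function.update ω x true) - g (Function.update ω x false)) =
            ind (x = r ∨ ω' (parent x) = false) *
              (g (Function.update ω' x true) - g (Function.update ω' x false))
          rw [h1, h2]
        have e6 : pavg q P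
            (fun ω'' => (ind (x = r ∨ ω'' (parent x) = false) *
              (g (Function.update ω'' x true) - g (Function.update ω'' x false))) *
              (f (Function.update ω'' x true) - f (Function.update ω'' x false))) ω' =
            (ind (x = r ∨ ω' (parent x) = false) *
              (g (Function.update ω' x true) - g (Function.update ω' x false))) *
              pavg q P (fun ω'' => f (Function.update ω'' x true) -
                f (Function.update ω'' x false)) ω' :=
          pavg_mul_blind hkB _ ω'
        have e7 : pavg q P (fun ω'' => ind (x = r ∨ ω'' (parent x) = false) *
            (g (Function.update ω'' x true) - g (Function.update ω'' x false)) ^ 2) ω' =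
            ind (x = r ∨ ω' (parent x) = false) *
            (g (Function.update ω' x true) - g (Function.update ω' x false)) ^ 2 := by
          have hB2 : Blind (fun ω'' => ind (x = r ∨ ω'' (parent x) = false) *
              (g (Function.update ω'' x true) - g (Function.update ω'' x false)) ^ 2) P := by
            intro ω ω' hag
            have h1 : ind (x = r ∨ ω (parent x) = false) =
                ind (x = r ∨ ω' (parent x) = false) := hindB ω ω' hag
            have h2 : g (Function.update ω x true) - g (Function.update ω x false) =
                g (Function.update ω' x true) - g (Function.update ω' x false) :=
              hDgB ω ω' hag
            show ind (x = r ∨ ω (parent x) = false) *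
                (g (Function.update ω x true) - g (Function.update ω x false)) ^ 2 =
              ind (x = r ∨ ω' (parent x) = false) *
                (g (Function.update ω' x true) - g (Function.update ω' x false)) ^ 2
            rw [h1, h2]
          rw [pavg_of_blind hB2]
        rw [e1, e2, e3, e4, e5, e6, e7, hDgavg ω']
        show _ = pavg q P (fun ω'' => ind (x = r ∨ ω'' (parent x) = false) *
            varAt q f x ω'') ω' -
          ind (x = r ∨ ω' (parent x) = false) * ((1 - q) * q *
            (g (Function.update ω' x true) - g (Function.update ω' x false)) ^ 2)
        ring
      -- now integrate over `U`
      have f1 : pavg q U (fun ω => ind (x = r ∨ ω (parent x) = false) *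
          varAt q h x ω) ω₀ =
          pavg q U (pavg q P (fun ω => ind (x = r ∨ ω (parent x) = false) *
            varAt q h x ω)) ω₀ := by
        rw [pavg_pavg_subset q hPU]
      have f2 : pavg q U (pavg q P (fun ω => ind (x = r ∨ ω (parent x) = false) *
            varAt q h x ω)) ω₀ =
          pavg q U (fun ω' => pavg q P (fun ω'' => ind (x = r ∨ ω'' (parent x) = false) *
            varAt q f x ω'') ω' -
            ind (x = r ∨ ω' (parent x) = false) * varAt q g x ω') ω₀ :=
        pavg_congr (fun τ => by rw [hkey])
      have f3 := pavg_sub q U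
        (pavg q P (fun ω'' => ind (x = r ∨ ω'' (parent x) = false) * varAt q f x ω''))
        (fun ω' => ind (x = r ∨ ω' (parent x) = false) * varAt q g x ω') ω₀
      have f4 : pavg q U (pavg q P (fun ω'' => ind (x = r ∨ ω'' (parent x) = false) *
          varAt q f x ω'')) ω₀ =
          pavg q U (fun ω'' => ind (x = r ∨ ω'' (parent x) = false) *
            varAt q f x ω'') ω₀ := by
        rw [pavg_pavg_subset q hPU]
      rw [f1, f2, f3, f4]
    -- apply the induction hypothesis on `T₂` to `g`, averaged over `P`
    have hg3 : eastGap q * (pavg q U (fun ω => g ω ^ 2) ω₀ - (pavg q U g ω₀) ^ 2) ≤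
        ∑ x ∈ T₂, pavg q U (fun ω => ind (x = r ∨ ω (parent x) = false) *
          varAt q g x ω) ω₀ := by
      have hIH2 : ∀ ω₁ : V → Bool,
          (fun ω₁ => eastGap q * (pavg q T₂ (fun ω => g ω ^ 2) ω₁ -
            (pavg q T₂ g ω₁) ^ 2)) ω₁ ≤
          (fun ω₁ => ∑ x ∈ T₂, pavg q T₂ (fun ω => ind (x = r ∨ ω (parent x) = false) *
            varAt q g x ω) ω₁) ω₁ :=
        fun ω₁ => IH T₂ hT₂ss hT₂cl g ω₁
      have hm := pavg_mono hq0.le hq1.le P hIH2 ω₀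
      have e1 : pavg q P (fun ω₁ => eastGap q * (pavg q T₂ (fun ω => g ω ^ 2) ω₁ -
            (pavg q T₂ g ω₁) ^ 2)) ω₀ =
          eastGap q * pavg q P (fun ω₁ => pavg q T₂ (fun ω => g ω ^ 2) ω₁ -
            (pavg q T₂ g ω₁) ^ 2) ω₀ :=
        pavg_const_mul q P (eastGap q)
          (fun ω₁ => pavg q T₂ (fun ω => g ω ^ 2) ω₁ - (pavg q T₂ g ω₁) ^ 2) ω₀
      have e2 : pavg q P (fun ω₁ => pavg q T₂ (fun ω => g ω ^ 2) ω₁ -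
            (pavg q T₂ g ω₁) ^ 2) ω₀ =
          pavg q P (pavg q T₂ (fun ω => g ω ^ 2)) ω₀ -
            pavg q P (fun ω₁ => (pavg q T₂ g ω₁) ^ 2) ω₀ :=
        pavg_sub q P (pavg q T₂ (fun ω => g ω ^ 2)) (fun ω₁ => (pavg q T₂ g ω₁) ^ 2) ω₀
      have e3 : pavg q P (pavg q T₂ (fun ω => g ω ^ 2)) ω₀ =
          pavg q U (fun ω => g ω ^ 2) ω₀ := by
        rw [pavg_tower_disjoint T₂ P hdPT₂.symm, hT₂P]
      have hBl : Blind (pavg q T₂ g) P := blind_pavg_of_blind hgB hdPT₂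
      have hBl2 : Blind (fun ω₁ => (pavg q T₂ g ω₁) ^ 2) P := by
        intro ω ω' hag
        have h1 : pavg q T₂ g ω = pavg q T₂ g ω' := hBl ω ω' hag
        show (pavg q T₂ g ω) ^ 2 = (pavg q T₂ g ω') ^ 2
        rw [h1]
      have e4 : pavg q P (fun ω₁ => (pavg q T₂ g ω₁) ^ 2) ω₀ =
          (pavg q U g ω₀) ^ 2 := by
        rw [pavg_of_blind hBl2]
        have e4a : pavg q U g ω₀ = pavg q T₂ g ω₀ := by
          have : pavg q P (pavg q T₂ g) = pavg q (T₂ ∪ P) g :=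
            pavg_tower_disjoint T₂ P hdPT₂.symm g
          rw [← hT₂P]
          rw [← this, pavg_of_blind hBl]
        rw [e4a]
      have e5 : pavg q P (fun ω₁ => ∑ x ∈ T₂, pavg q T₂
            (fun ω => ind (x = r ∨ ω (parent x) = false) * varAt q g x ω) ω₁) ω₀ =
          ∑ x ∈ T₂, pavg q P (pavg q T₂
            (fun ω => ind (x = r ∨ ω (parent x) = false) * varAt q g x ω)) ω₀ :=
        pavg_sum q P T₂ (fun x => pavg q T₂
          (fun ω => ind (x = r ∨ ω (parent x) = false) * varAt q g x ω)) ω₀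
      have e6 : ∀ x ∈ T₂, pavg q P (pavg q T₂
            (fun ω => ind (x = r ∨ ω (parent x) = false) * varAt q g x ω)) ω₀ =
          pavg q U (fun ω => ind (x = r ∨ ω (parent x) = false) * varAt q g x ω) ω₀ := by
        intro x hx
        rw [pavg_tower_disjoint T₂ P hdPT₂.symm, hT₂P]
      rw [e1, e2, e3, e4] at hm
      rw [e5] at hm
      rwa [Finset.sum_congr rfl e6] at hm
    -- apply the induction hypothesis on `T₁` to `h`, averaged over `Q`
    have hh3 : eastGap q * pavg q U (fun ω => h ω ^ 2) ω₀ ≤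
        ∑ x ∈ T₁, pavg q U (fun ω => ind (x = r ∨ ω (parent x) = false) *
          varAt q h x ω) ω₀ := by
      have hT₁h0 : ∀ ω₁, pavg q T₁ h ω₁ = 0 := by
        intro ω₁
        have ht : pavg q (T₁ \ P) (pavg q P h) = pavg q (P ∪ (T₁ \ P)) h :=
          pavg_tower_disjoint P (T₁ \ P) Finset.disjoint_sdiff h
        have hz : pavg q P h = fun _ => (0 : ℝ) := funext hPh0
        have hu : P ∪ (T₁ \ P) = T₁ := Finset.union_sdiff_of_subset hPT₁
        rw [← hu, ← ht, hz, pavg_const]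
      have hIH1 : ∀ ω₁ : V → Bool,
          (fun ω₁ => eastGap q * pavg q T₁ (fun ω => h ω ^ 2) ω₁) ω₁ ≤
          (fun ω₁ => ∑ x ∈ T₁, pavg q T₁ (fun ω => ind (x = r ∨ ω (parent x) = false) *
            varAt q h x ω) ω₁) ω₁ := by
        intro ω₁
        have := IH T₁ hT₁ss hT₁cl h ω₁
        rw [hT₁h0 ω₁] at this
        show eastGap q * pavg q T₁ (fun ω => h ω ^ 2) ω₁ ≤ _
        calc eastGap q * pavg q T₁ (fun ω => h ω ^ 2) ω₁
            = eastGap q * (pavg q T₁ (fun ω => h ω ^ 2) ω₁ - (0 : ℝ) ^ 2) := by ring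
          _ ≤ _ := this
      have hm := pavg_mono hq0.le hq1.le Q hIH1 ω₀
      have e1 : pavg q Q (fun ω₁ => eastGap q * pavg q T₁ (fun ω => h ω ^ 2) ω₁) ω₀ =
          eastGap q * pavg q Q (pavg q T₁ (fun ω => h ω ^ 2)) ω₀ :=
        pavg_const_mul q Q (eastGap q) (pavg q T₁ (fun ω => h ω ^ 2)) ω₀
      have e2 : pavg q Q (pavg q T₁ (fun ω => h ω ^ 2)) ω₀ =
          pavg q U (fun ω => h ω ^ 2) ω₀ := by
        rw [pavg_tower_disjoint T₁ Q hdQT₁.symm, hT₁Q]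
      have e3 : pavg q Q (fun ω₁ => ∑ x ∈ T₁, pavg q T₁
            (fun ω => ind (x = r ∨ ω (parent x) = false) * varAt q h x ω) ω₁) ω₀ =
          ∑ x ∈ T₁, pavg q Q (pavg q T₁
            (fun ω => ind (x = r ∨ ω (parent x) = false) * varAt q h x ω)) ω₀ :=
        pavg_sum q Q T₁ (fun x => pavg q T₁
          (fun ω => ind (x = r ∨ ω (parent x) = false) * varAt q h x ω)) ω₀
      have e4 : ∀ x ∈ T₁, pavg q Q (pavg q T₁
            (fun ω => ind (x = r ∨ ω (parent x) = false) * varAt q h x ω)) ω₀ =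
          pavg q U (fun ω => ind (x = r ∨ ω (parent x) = false) * varAt q h x ω) ω₀ := by
        intro x hx
        rw [pavg_tower_disjoint T₁ Q hdQT₁.symm, hT₁Q]
      rw [e1, e2, e3] at hm
      rwa [Finset.sum_congr rfl e4] at hm
    -- final assembly of the sums
    have hCC : T₁ \ P = T₂ \ Q := by
      rw [hT₁def, hT₂def, sdiff_right_comm]
    have hs1 : ∑ x ∈ T₂ \ Q, pavg q U (fun ω => ind (x = r ∨ ω (parent x) = false) *
          varAt q g x ω) ω₀ + ∑ x ∈ Q, pavg q U (fun ω => ind (x = r ∨ ω (parent x) = false) *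
          varAt q g x ω) ω₀ =
        ∑ x ∈ T₂, pavg q U (fun ω => ind (x = r ∨ ω (parent x) = false) *
          varAt q g x ω) ω₀ := Finset.sum_sdiff hQT₂
    have hs2 : ∑ x ∈ T₁ \ P, pavg q U (fun ω => ind (x = r ∨ ω (parent x) = false) *
          varAt q h x ω) ω₀ + ∑ x ∈ P, pavg q U (fun ω => ind (x = r ∨ ω (parent x) = false) *
          varAt q h x ω) ω₀ =
        ∑ x ∈ T₁, pavg q U (fun ω => ind (x = r ∨ ω (parent x) = false) *
          varAt q h x ω) ω₀ := Finset.sum_sdiff hPT₁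
    have hs3 : ∑ x ∈ T₂ \ Q, pavg q U (fun ω => ind (x = r ∨ ω (parent x) = false) *
          varAt q f x ω) ω₀ + ∑ x ∈ Q, pavg q U (fun ω => ind (x = r ∨ ω (parent x) = false) *
          varAt q f x ω) ω₀ =
        ∑ x ∈ T₂, pavg q U (fun ω => ind (x = r ∨ ω (parent x) = false) *
          varAt q f x ω) ω₀ := Finset.sum_sdiff hQT₂
    have hs4 : ∑ x ∈ U \ P, pavg q U (fun ω => ind (x = r ∨ ω (parent x) = false) *
          varAt q f x ω) ω₀ + ∑ x ∈ P, pavg q U (fun ω => ind (x = r ∨ ω (parent x) = false) *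
          varAt q f x ω) ω₀ =
        ∑ x ∈ U, pavg q U (fun ω => ind (x = r ∨ ω (parent x) = false) *
          varAt q f x ω) ω₀ := Finset.sum_sdiff hPU
    have hs5 : ∑ x ∈ T₁ \ P, pavg q U (fun ω => ind (x = r ∨ ω (parent x) = false) *
          varAt q h x ω) ω₀ =
        ∑ x ∈ T₂ \ Q, (pavg q U (fun ω => ind (x = r ∨ ω (parent x) = false) *
          varAt q f x ω) ω₀ - pavg q U (fun ω => ind (x = r ∨ ω (parent x) = false) *
          varAt q g x ω) ω₀) := by
      rw [hCC]
      exact Finset.sum_congr rfl h5c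
    have hs6 : ∑ x ∈ P, pavg q U (fun ω => ind (x = r ∨ ω (parent x) = false) *
          varAt q h x ω) ω₀ =
        ∑ x ∈ P, pavg q U (fun ω => ind (x = r ∨ ω (parent x) = false) *
          varAt q f x ω) ω₀ := Finset.sum_congr rfl h5b
    have hs7 : ∑ x ∈ Q, pavg q U (fun ω => ind (x = r ∨ ω (parent x) = false) *
          varAt q g x ω) ω₀ ≤
        ∑ x ∈ Q, pavg q U (fun ω => ind (x = r ∨ ω (parent x) = false) *
          varAt q f x ω) ω₀ :=
      Finset.sum_le_sum (fun x hx => h5a x (hQT₂ hx))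
    have hs8 : ∑ x ∈ T₂ \ Q, (pavg q U (fun ω => ind (x = r ∨ ω (parent x) = false) *
          varAt q f x ω) ω₀ - pavg q U (fun ω => ind (x = r ∨ ω (parent x) = false) *
          varAt q g x ω) ω₀) =
        ∑ x ∈ T₂ \ Q, pavg q U (fun ω => ind (x = r ∨ ω (parent x) = false) *
          varAt q f x ω) ω₀ - ∑ x ∈ T₂ \ Q, pavg q U (fun ω => ind (x = r ∨ ω (parent x) = false) *
          varAt q g x ω) ω₀ := Finset.sum_sub_distrib _ _
    have hUg0 : pavg q U g ω₀ = pavg q U f ω₀ := congrFun hUg ω₀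
    have hT₂U : U \ P = T₂ := rfl
    rw [hT₂U] at hs4
    calc eastGap q * (pavg q U (fun ω => f ω ^ 2) ω₀ - (pavg q U f ω₀) ^ 2)
        = eastGap q * (pavg q U (fun ω => g ω ^ 2) ω₀ - (pavg q U g ω₀) ^ 2) +
          eastGap q * pavg q U (fun ω => h ω ^ 2) ω₀ := by
          rw [hsplit, ← hUg0]; ring
      _ ≤ ∑ x ∈ T₂, pavg q U (fun ω => ind (x = r ∨ ω (parent x) = false) *
            varAt q g x ω) ω₀ +
          ∑ x ∈ T₁, pavg q U (fun ω => ind (x = r ∨ ω (parent x) = false) *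
            varAt q h x ω) ω₀ := add_le_add hg3 hh3
      _ ≤ ∑ x ∈ U, pavg q U (fun ω => ind (x = r ∨ ω (parent x) = false) *
            varAt q f x ω) ω₀ := by
          rw [← hs1, ← hs2, hs5, hs6, hs8]
          rw [← hs4, ← hs3]
          linarith

end MainInduction

end

open scoped Classical in
/-- For every finite tree rooted at `r` (encoded by its parent map) and
every `q ∈ (0,1)`, the spectral gap of the East-on-tree model (a vertex may be updated
iff it is the root or its ancestor carries a `0`) is at least the spectral gap of the
East model on `ℤ`. -/
theorem tree_east_gap_ge_east_gap {V : Type*} [Fintype V] [DecidableEq V]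
    (parent : V → V) (r : V) (hroot : parent r = r)
    (hreach : ∀ x, ∃ n : ℕ, parent^[n] x = r)
    (q : ℝ) (hq : q ∈ Set.Ioo (0 : ℝ) 1) :
    eastGap q ≤ finGap q (fun (x : V) ω => x = r ∨ ω (parent x) = false) := by
  classical
  obtain ⟨hq0, hq1⟩ := hq
  set ω₀ : V → Bool := fun _ => true with hω₀
  refine le_csInf ?_ ?_
  · -- the defining set of the finite-volume gap is nonempty
    refine ⟨finDir q (fun (x : V) ω => x = r ∨ ω (parent x) = false)
        (fun ω => ind (ω r = true)) /
      finVar q (fun ω => ind (ω r = true)), ?_⟩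
    refine ⟨fun ω => ind (ω r = true), ⟨fun _ => true, fun _ => false, ?_⟩, rfl⟩
    simp [ind]
  · rintro γ ⟨f, hnc, rfl⟩
    have hvar_eq : finVar q f =
        pavg q (Finset.univ : Finset V) (fun ω => f ω ^ 2) ω₀ -
          (pavg q (Finset.univ : Finset V) f ω₀) ^ 2 := by
      unfold finVar
      rw [pavg_univ_eq_finExp q (fun ω => f ω ^ 2) ω₀, pavg_univ_eq_finExp q f ω₀]
    have hpos : 0 < finVar q f := by
      rw [hvar_eq]
      refine pavg_var_pos hq0 hq1 Finset.univ f ω₀ ?_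
      obtain ⟨ω, ω', hne⟩ := hnc
      have hrep : ∀ ω₂ : V → Bool,
          patch (Finset.univ : Finset V) (fun y => ω₂ y.1) ω₀ = ω₂ := by
        intro ω₂
        funext v
        simp [patch]
      exact ⟨fun y => ω y.1, fun y => ω' y.1, by rw [hrep ω, hrep ω']; exact hne⟩
    have hkey := tree_poincare parent r hroot hreach hq0 hq1
      (Finset.univ : Finset V) (fun x _ => Finset.mem_univ (parent x)) f ω₀
    have hdir : ∑ x ∈ (Finset.univ : Finset V),
        pavg q (Finset.univ : Finset V)
          (fun ω => ind (x = r ∨ ω (parent x) = false) * varAt q f x ω) ω₀ =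
        finDir q (fun (x : V) ω => x = r ∨ ω (parent x) = false) f := by
      unfold finDir
      exact Finset.sum_congr rfl (fun x _ =>
        pavg_univ_eq_finExp q (fun ω => ind (x = r ∨ ω (parent x) = false) *
          varAt q f x ω) ω₀)
    rw [hdir, ← hvar_eq] at hkey
    rw [le_div_iff₀ hpos]
    exact hkey
end

section
/- Let G_∞=(V_∞,E_∞) be an infinite connected graph of bounded degree and q∈(0,1). Consider the FA-1f model on G_∞ with constraints c_x(ω)=1 iff ω_y=0 for some neighbor y of x (no unconstrained vertex), with spectral gap gap(G_∞,FA-1f) := inf of D(f)/Var_μ(f) over nonconstant functions f:{0,1}^{V_∞}→ℝ depending on finitely many coordinates, where μ is the product measure giving each coordinate value 0 with probability q and D(f)=Σ_{x∈V_∞} μ(c_x·Var_x f). Then gap(G_∞,FA-1f) ≥ gap(ℤ,East). -/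
open scoped Classical BigOperators

/- ========== auxiliary development ========== -/
noncomputable section
namespace KCMAux
variable {ι : Type*} [DecidableEq ι] {κ : Type*} [DecidableEq κ]

/-- override a configuration on a finite set -/
def overC (L : Finset ι) (τ : {x // x ∈ L} → Bool) (ω : ι → Bool) : ι → Bool :=
  fun u => if h : u ∈ L then τ ⟨u, h⟩ else ω u

def opSum (c : Bool → ℝ) (L : Finset ι) (f : (ι → Bool) → ℝ) (ω : ι → Bool) : ℝ :=
  ∑ τ : {x // x ∈ L} → Bool, (∏ x : {x // x ∈ L}, c (τ x)) * f (overC L τ ω)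

def wq (q : ℝ) : Bool → ℝ := fun b => if b then 1 - q else q

def sg : Bool → ℝ := fun b => if b then 1 else -1

theorem cylExp_eq_opSum (q : ℝ) (S : Finset ι) (f : (ι → Bool) → ℝ) :
    cylExp q S f = opSum (wq q) S f (fun _ => true) := rfl

theorem over_apply_mem (L : Finset ι) (τ) (ω : ι → Bool) {u : ι} (h : u ∈ L) :
    overC L τ ω u = τ ⟨u, h⟩ := by simp [overC, h]

theorem over_apply_not_mem (L : Finset ι) (τ) (ω : ι → Bool) {u : ι} (h : u ∉ L) :
    overC L τ ω u = ω u := by simp [overC, h]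

theorem over_update_mem (L : Finset ι) (τ) (ω : ι → Bool) {a : ι} (h : a ∈ L) (b : Bool) :
    overC L τ (Function.update ω a b) = overC L τ ω := by
  funext u
  by_cases hu : u ∈ L
  · simp [overC, hu]
  · have hua : u ≠ a := fun e => hu (e ▸ h)
    simp [overC, hu, Function.update_of_ne hua]

theorem over_update_not_mem (L : Finset ι) (τ) (ω : ι → Bool) {a : ι} (h : a ∉ L) (b : Bool) :
    overC L τ (Function.update ω a b) = Function.update (overC L τ ω) a b := by
  funext u
  by_cases hua : u = a
  · subst hua
    simp [overC, h]
  · by_cases hu : u ∈ L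
    · simp [overC, hu, Function.update_of_ne hua]
    · simp [overC, hu, Function.update_of_ne hua]

/-- the insertion equivalence for Boolean configurations on finite sets -/
def insEquiv {a : ι} {L : Finset ι} (ha : a ∉ L) :
    (Bool × ({x // x ∈ L} → Bool)) ≃ ({x // x ∈ insert a L} → Bool) where
  toFun p := fun x => if h : (x : ι) ∈ L then p.2 ⟨x, h⟩ else p.1
  invFun τ := (τ ⟨a, Finset.mem_insert_self a L⟩,
    fun x => τ ⟨x, Finset.mem_insert_of_mem x.2⟩)
  left_inv p := by
    obtain ⟨b, τ⟩ := p
    refine Prod.ext ?_ ?_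
    · simp [ha]
    · funext x
      simp [x.2]
  right_inv τ := by
    funext x
    obtain ⟨u, hu⟩ := x
    by_cases h : u ∈ L
    · simp [h]
    · have : u = a := by
        rcases Finset.mem_insert.1 hu with h' | h'
        · exact h'
        · exact absurd h' h
      subst this
      simp [h]

theorem opSum_insert (c : Bool → ℝ) {a : ι} {L : Finset ι} (ha : a ∉ L)
    (f : (ι → Bool) → ℝ) (ω : ι → Bool) :
    opSum c (insert a L) f ω =
      c true * opSum c L (fun ω' => f (Function.update ω' a true)) ω +
      c false * opSum c L (fun ω' => f (Function.update ω' a false)) ω := by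
  classical
  rw [opSum, ← Equiv.sum_comp (insEquiv ha)]
  rw [Fintype.sum_prod_type]
  rw [Fintype.sum_bool]
  have key : ∀ (b : Bool) (τ : {x // x ∈ L} → Bool),
      (∏ x : {x // x ∈ insert a L}, c ((insEquiv ha) (b, τ) x)) *
        f (overC (insert a L) ((insEquiv ha) (b, τ)) ω) =
      c b * ((∏ x : {x // x ∈ L}, c (τ x)) *
        f (Function.update (overC L τ ω) a b)) := by
    intro b τ
    have hover : overC (insert a L) ((insEquiv ha) (b, τ)) ω
        = Function.update (overC L τ ω) a b := by
      funext u
      by_cases hua : u = a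
      · subst hua
        simp [overC, insEquiv, ha]
      · by_cases hu : u ∈ L
        · simp [overC, insEquiv, hu, Finset.mem_insert_of_mem hu, Function.update_of_ne hua]
        · have hu' : u ∉ insert a L := by
            simp [Finset.mem_insert, hua, hu]
          simp [overC, hu', hu, Function.update_of_ne hua]
    have hprod : (∏ x : {x // x ∈ insert a L}, c ((insEquiv ha) (b, τ) x))
        = c b * ∏ x : {x // x ∈ L}, c (τ x) := by
      set F : ι → ℝ := fun u => if h : u ∈ insert a L then c ((insEquiv ha) (b, τ) ⟨u, h⟩) else 1 with hF
      have e1 : (∏ x : {x // x ∈ insert a L}, c ((insEquiv ha) (b, τ) x))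
          = ∏ x : {x // x ∈ insert a L}, F (x : ι) := by
        apply Finset.prod_congr rfl
        intro x _
        simp only [hF, x.2, dif_pos]
      have e2 : (∏ x : {x // x ∈ insert a L}, F (x : ι)) = ∏ u ∈ insert a L, F u :=
        Finset.prod_coe_sort (insert a L) F
      have e3 : (∏ x : {x // x ∈ L}, c (τ x)) = ∏ u ∈ L, F u := by
        rw [← Finset.prod_coe_sort L F]
        apply Finset.prod_congr rfl
        intro x _
        have hx : (x : ι) ∈ insert a L := Finset.mem_insert_of_mem x.2
        simp only [hF, hx, dif_pos, insEquiv, Equiv.coe_fn_mk, x.2]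
      have e4 : F a = c b := by simp [hF, insEquiv, ha]
      rw [e1, e2, Finset.prod_insert ha, e4, e3]
    rw [hover, hprod]
    ring
  rw [Finset.sum_congr rfl (fun τ _ => key true τ), Finset.sum_congr rfl (fun τ _ => key false τ)]
  rw [← Finset.mul_sum, ← Finset.mul_sum]
  rfl

-- layer 2 (appended to l1 content when testing)

theorem opSum_empty (c : Bool → ℝ) (f : (ι → Bool) → ℝ) (ω : ι → Bool) :
    opSum c ∅ f ω = f ω := by
  have : overC (∅ : Finset ι) default ω = ω := by
    funext u; simp [overC]
  simp only [opSum]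
  rw [Finset.sum_eq_single_of_mem default (Finset.mem_univ _) (by intro τ _ hτ; exact absurd (Subsingleton.elim τ default) hτ)]
  rw [this]
  simp

theorem opSum_congr (c : Bool → ℝ) (L : Finset ι) {f g : (ι → Bool) → ℝ}
    (h : ∀ ω, f ω = g ω) (ω : ι → Bool) : opSum c L f ω = opSum c L g ω := by
  unfold opSum
  exact Finset.sum_congr rfl (fun τ _ => by rw [h])

theorem opSum_add (c : Bool → ℝ) (L : Finset ι) (f g : (ι → Bool) → ℝ) (ω : ι → Bool) :
    opSum c L (fun ω' => f ω' + g ω') ω = opSum c L f ω + opSum c L g ω := by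
  unfold opSum
  rw [← Finset.sum_add_distrib]
  exact Finset.sum_congr rfl (fun τ _ => by ring)

theorem opSum_smul (c : Bool → ℝ) (L : Finset ι) (r : ℝ) (f : (ι → Bool) → ℝ) (ω : ι → Bool) :
    opSum c L (fun ω' => r * f ω') ω = r * opSum c L f ω := by
  unfold opSum
  rw [Finset.mul_sum]
  exact Finset.sum_congr rfl (fun τ _ => by ring)

theorem opSum_update_comm (c : Bool → ℝ) {L : Finset ι} {a : ι} (ha : a ∉ L)
    (f : (ι → Bool) → ℝ) (b : Bool) (ω : ι → Bool) :
    opSum c L (fun ω' => f (Function.update ω' a b)) ω = opSum c L f (Function.update ω a b) := by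
  unfold opSum
  refine Finset.sum_congr rfl (fun τ _ => ?_)
  rw [over_update_not_mem L τ ω ha b]

theorem opSum_free (c : Bool → ℝ) {L : Finset ι} {a : ι} (ha : a ∈ L)
    (f : (ι → Bool) → ℝ) (b : Bool) (ω : ι → Bool) :
    opSum c L f (Function.update ω a b) = opSum c L f ω := by
  unfold opSum
  refine Finset.sum_congr rfl (fun τ _ => ?_)
  rw [over_update_mem L τ ω ha b]

theorem opSum_depends {c : Bool → ℝ} {L S : Finset ι} {f : (ι → Bool) → ℝ}
    (hf : DependsOnCoords f S) : DependsOnCoords (opSum c L f) (S \ L) := by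
  intro ω ω' h
  unfold opSum
  refine Finset.sum_congr rfl (fun τ _ => ?_)
  congr 1
  apply hf
  intro x hx
  by_cases hxL : x ∈ L
  · simp [overC, hxL]
  · rw [over_apply_not_mem L τ ω hxL, over_apply_not_mem L τ ω' hxL]
    exact h x (Finset.mem_sdiff.2 ⟨hx, hxL⟩)

/-- `f` does not change under updates at `a`. -/
def FreeAt (a : ι) (f : (ι → Bool) → ℝ) : Prop :=
  ∀ ω b, f (Function.update ω a b) = f ω

theorem freeAt_of_depends {f : (ι → Bool) → ℝ} {S : Finset ι} (hf : DependsOnCoords f S)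
    {a : ι} (ha : a ∉ S) : FreeAt a f := by
  intro ω b
  apply hf
  intro x hx
  have : x ≠ a := fun e => ha (e ▸ hx)
  rw [Function.update_of_ne this]

/-- Peeling one coordinate off a cylinder expectation. -/
theorem cylExp_insert (q : ℝ) {a : ι} {S : Finset ι} (ha : a ∉ S) (f : (ι → Bool) → ℝ) :
    cylExp q (insert a S) f =
      (1 - q) * cylExp q S (fun ω => f (Function.update ω a true)) +
      q * cylExp q S (fun ω => f (Function.update ω a false)) := by
  rw [cylExp_eq_opSum, cylExp_eq_opSum, cylExp_eq_opSum, opSum_insert (wq q) ha]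
  rfl

theorem cylExp_congr (q : ℝ) (S : Finset ι) {f g : (ι → Bool) → ℝ}
    (h : ∀ ω, f ω = g ω) : cylExp q S f = cylExp q S g := by
  rw [cylExp_eq_opSum, cylExp_eq_opSum]
  exact opSum_congr _ _ h _

theorem cylExp_add (q : ℝ) (S : Finset ι) (f g : (ι → Bool) → ℝ) :
    cylExp q S (fun ω => f ω + g ω) = cylExp q S f + cylExp q S g := by
  rw [cylExp_eq_opSum, cylExp_eq_opSum, cylExp_eq_opSum]
  exact opSum_add _ _ _ _ _

theorem cylExp_smul (q : ℝ) (S : Finset ι) (r : ℝ) (f : (ι → Bool) → ℝ) :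
    cylExp q S (fun ω => r * f ω) = r * cylExp q S f := by
  rw [cylExp_eq_opSum, cylExp_eq_opSum]
  exact opSum_smul _ _ _ _ _

theorem cylExp_zero (q : ℝ) (S : Finset ι) : cylExp q S (fun _ => (0:ℝ)) = 0 := by
  have := cylExp_smul q S 0 (fun _ => (0:ℝ))
  simpa using this

theorem cylExp_insert_free (q : ℝ) {a : ι} {S : Finset ι} (ha : a ∉ S)
    {f : (ι → Bool) → ℝ} (hf : FreeAt a f) :
    cylExp q (insert a S) f = cylExp q S f := by
  rw [cylExp_insert q ha]
  have h1 : cylExp q S (fun ω => f (Function.update ω a true)) = cylExp q S f :=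
    cylExp_congr _ _ (fun ω => hf ω true)
  have h2 : cylExp q S (fun ω => f (Function.update ω a false)) = cylExp q S f :=
    cylExp_congr _ _ (fun ω => hf ω false)
  rw [h1, h2]; ring

theorem cylExp_union_free (q : ℝ) (S : Finset ι) (f : (ι → Bool) → ℝ) :
    ∀ T : Finset ι, Disjoint S T → (∀ a ∈ T, FreeAt a f) →
      cylExp q (S ∪ T) f = cylExp q S f := by
  intro T
  induction T using Finset.induction_on with
  | empty => simp
  | @insert a T haT ih =>
    intro hdisj hfree
    have haS : a ∉ S := by
      intro h
      exact (Finset.disjoint_left.1 hdisj h) (Finset.mem_insert_self a T)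
    have haST : a ∉ S ∪ T := by
      simp [haS, haT]
    have : S ∪ insert a T = insert a (S ∪ T) := by
      ext u
      simp only [Finset.mem_insert, Finset.mem_union]
      tauto
    rw [this, cylExp_insert_free q haST (hfree a (Finset.mem_insert_self a T)), ih]
    · exact Finset.disjoint_of_subset_right (Finset.subset_insert a T) hdisj
    · exact fun b hb => hfree b (Finset.mem_insert_of_mem hb)

/-- Extension: the cylinder expectation does not change when enlarging the base set. -/
theorem cylExp_extend (q : ℝ) {S S' : Finset ι} (hss : S ⊆ S') {f : (ι → Bool) → ℝ}
    (hf : DependsOnCoords f S) : cylExp q S' f = cylExp q S f := by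
  have : S' = S ∪ (S' \ S) := by
    rw [Finset.union_sdiff_of_subset hss]
  rw [this]
  apply cylExp_union_free
  · exact Finset.disjoint_sdiff
  · intro a ha
    exact freeAt_of_depends hf (Finset.mem_sdiff.1 ha).2

theorem cylWeight_nonneg {q : ℝ} (hq : q ∈ Set.Ioo (0:ℝ) 1) (S : Finset ι)
    (σ : {x // x ∈ S} → Bool) : 0 ≤ cylWeight q S σ := by
  apply Finset.prod_nonneg
  intro x _
  by_cases h : σ x <;> simp [h] <;> linarith [hq.1, hq.2]

theorem cylWeight_pos {q : ℝ} (hq : q ∈ Set.Ioo (0:ℝ) 1) (S : Finset ι)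
    (σ : {x // x ∈ S} → Bool) : 0 < cylWeight q S σ := by
  apply Finset.prod_pos
  intro x _
  by_cases h : σ x <;> simp [h] <;> linarith [hq.1, hq.2]

theorem cylExp_nonneg {q : ℝ} (hq : q ∈ Set.Ioo (0:ℝ) 1) (S : Finset ι)
    {f : (ι → Bool) → ℝ} (hf : ∀ ω, 0 ≤ f ω) : 0 ≤ cylExp q S f := by
  apply Finset.sum_nonneg
  intro τ _
  exact mul_nonneg (cylWeight_nonneg hq S τ) (hf _)

theorem cylExp_mono {q : ℝ} (hq : q ∈ Set.Ioo (0:ℝ) 1) (S : Finset ι)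
    {f g : (ι → Bool) → ℝ} (hfg : ∀ ω, f ω ≤ g ω) : cylExp q S f ≤ cylExp q S g := by
  apply Finset.sum_le_sum
  intro τ _
  exact mul_le_mul_of_nonneg_left (hfg _) (cylWeight_nonneg hq S τ)

-- layer 3

def phiq (q : ℝ) (a : ι) (ω : ι → Bool) : ℝ := if ω a then q else q - 1

def der (a : ι) (f : (ι → Bool) → ℝ) (ω : ι → Bool) : ℝ :=
  f (Function.update ω a true) - f (Function.update ω a false)

def avgq (q : ℝ) (a : ι) (f : (ι → Bool) → ℝ) (ω : ι → Bool) : ℝ :=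
  (1 - q) * f (Function.update ω a true) + q * f (Function.update ω a false)

theorem decomp_pt (q : ℝ) (a : ι) (f : (ι → Bool) → ℝ) (ω : ι → Bool) :
    f ω = avgq q a f ω + phiq q a ω * der a f ω := by
  by_cases h : ω a
  · have h1 : Function.update ω a true = ω := by
      have := Function.update_eq_self a ω
      rwa [h] at this
    simp [avgq, phiq, der, h, h1]
    ring
  · have hb : ω a = false := by simp [h]
    have h1 : Function.update ω a false = ω := by
      have := Function.update_eq_self a ω
      rwa [hb] at this
    simp [avgq, phiq, der, hb, h1]
    ring

theorem freeAt_der (a : ι) (f : (ι → Bool) → ℝ) : FreeAt a (der a f) := by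
  intro ω b
  unfold der
  rw [Function.update_idem, Function.update_idem]

theorem freeAt_avgq (q : ℝ) (a : ι) (f : (ι → Bool) → ℝ) : FreeAt a (avgq q a f) := by
  intro ω b
  unfold avgq
  rw [Function.update_idem, Function.update_idem]

theorem freeAt_mul {a : ι} {f g : (ι → Bool) → ℝ} (hf : FreeAt a f) (hg : FreeAt a g) :
    FreeAt a (fun ω => f ω * g ω) := by
  intro ω b; simp [hf ω b, hg ω b]

theorem cylExp_phi_mul (q : ℝ) {B : Finset ι} {a : ι} (haB : a ∈ B)
    {F : (ι → Bool) → ℝ} (hF : FreeAt a F) :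
    cylExp q B (fun ω => phiq q a ω * F ω) = 0 := by
  have hB : B = insert a (B.erase a) := (Finset.insert_erase haB).symm
  have ha' : a ∉ B.erase a := Finset.notMem_erase a B
  rw [hB, cylExp_insert q ha']
  have h1 : cylExp q (B.erase a) (fun ω => phiq q a (Function.update ω a true) *
      F (Function.update ω a true)) = q * cylExp q (B.erase a) F := by
    rw [← cylExp_smul]
    apply cylExp_congr
    intro ω
    simp [phiq, hF ω true]
  have h2 : cylExp q (B.erase a) (fun ω => phiq q a (Function.update ω a false) *
      F (Function.update ω a false)) = (q - 1) * cylExp q (B.erase a) F := by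
    rw [← cylExp_smul]
    apply cylExp_congr
    intro ω
    simp [phiq, hF ω false]
  rw [h1, h2]
  ring

theorem cylExp_phisq_mul (q : ℝ) {B : Finset ι} {a : ι} (haB : a ∈ B)
    {F : (ι → Bool) → ℝ} (hF : FreeAt a F) :
    cylExp q B (fun ω => (phiq q a ω) ^ 2 * F ω) = (1 - q) * q * cylExp q B F := by
  have hB : B = insert a (B.erase a) := (Finset.insert_erase haB).symm
  have ha' : a ∉ B.erase a := Finset.notMem_erase a B
  rw [hB, cylExp_insert q ha']
  have h1 : cylExp q (B.erase a) (fun ω => phiq q a (Function.update ω a true) ^ 2 *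
      F (Function.update ω a true)) = q ^ 2 * cylExp q (B.erase a) F := by
    rw [← cylExp_smul]
    apply cylExp_congr
    intro ω
    simp [phiq, hF ω true]
  have h2 : cylExp q (B.erase a) (fun ω => phiq q a (Function.update ω a false) ^ 2 *
      F (Function.update ω a false)) = (q - 1) ^ 2 * cylExp q (B.erase a) F := by
    rw [← cylExp_smul]
    apply cylExp_congr
    intro ω
    simp [phiq, hF ω false]
  rw [h1, h2, cylExp_insert_free q ha' hF]
  ring

theorem cylExp_avgq (q : ℝ) {B : Finset ι} {a : ι} (haB : a ∈ B) (f : (ι → Bool) → ℝ) :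
    cylExp q B (avgq q a f) = cylExp q B f := by
  have hB : B = insert a (B.erase a) := (Finset.insert_erase haB).symm
  have ha' : a ∉ B.erase a := Finset.notMem_erase a B
  rw [hB, cylExp_insert_free q ha' (freeAt_avgq q a f), cylExp_insert q ha']
  unfold avgq
  rw [cylExp_add, cylExp_smul, cylExp_smul]

theorem cylExp_opSum_wq (q : ℝ) {B : Finset ι} :
    ∀ L : Finset ι, L ⊆ B → ∀ f : (ι → Bool) → ℝ,
      cylExp q B (opSum (wq q) L f) = cylExp q B f := by
  intro L
  induction L using Finset.induction_on with
  | empty =>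
    intro _ f
    exact cylExp_congr q B (fun ω => opSum_empty (wq q) f ω)
  | @insert a L ha ih =>
    intro hsub f
    have haB : a ∈ B := hsub (Finset.mem_insert_self a L)
    have hLB : L ⊆ B := fun x hx => hsub (Finset.mem_insert_of_mem hx)
    have step : cylExp q B (opSum (wq q) (insert a L) f)
        = cylExp q B (fun ω => (1 - q) * opSum (wq q) L (fun ω' => f (Function.update ω' a true)) ω
            + q * opSum (wq q) L (fun ω' => f (Function.update ω' a false)) ω) := by
      apply cylExp_congr
      intro ω
      rw [opSum_insert (wq q) ha f ω]
      simp [wq]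
    rw [step, cylExp_add, cylExp_smul, cylExp_smul,
      ih hLB (fun ω' => f (Function.update ω' a true)),
      ih hLB (fun ω' => f (Function.update ω' a false))]
    have : (1 - q) * cylExp q B (fun ω' => f (Function.update ω' a true))
        + q * cylExp q B (fun ω' => f (Function.update ω' a false))
        = cylExp q B (avgq q a f) := by
      unfold avgq
      rw [cylExp_add, cylExp_smul, cylExp_smul]
    rw [this, cylExp_avgq q haB]

theorem cylExp_empty (q : ℝ) (f : (ι → Bool) → ℝ) :
    cylExp q ∅ f = f (fun _ => true) := by
  rw [cylExp_eq_opSum, opSum_empty]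

theorem cylExp_const (q : ℝ) (S : Finset ι) (c : ℝ) :
    cylExp q S (fun _ => c) = c := by
  have h : DependsOnCoords (fun _ : ι → Bool => c) ∅ := fun _ _ _ => rfl
  rw [cylExp_extend q (Finset.empty_subset S) h, cylExp_empty]

theorem cylWeight_sum (q : ℝ) (S : Finset ι) :
    ∑ τ : {x // x ∈ S} → Bool, cylWeight q S τ = 1 := by
  have := cylExp_const q S 1
  unfold cylExp at this
  simpa using this

/-- variance as a double sum -/
theorem cylVar_double (q : ℝ) (S : Finset ι) (f : (ι → Bool) → ℝ) :
    ∑ σ : {x // x ∈ S} → Bool, ∑ τ : {x // x ∈ S} → Bool,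
      cylWeight q S σ * cylWeight q S τ * (f (extCfg S σ) - f (extCfg S τ)) ^ 2
    = 2 * cylVar q S f := by
  classical
  set W : ({x // x ∈ S} → Bool) → ℝ := cylWeight q S with hW
  set F : ({x // x ∈ S} → Bool) → ℝ := fun σ => f (extCfg S σ) with hF
  have hsum : ∑ τ, W τ = 1 := cylWeight_sum q S
  have hE : cylExp q S f = ∑ τ, W τ * F τ := rfl
  have hE2 : cylExp q S (fun ω => f ω ^ 2) = ∑ τ, W τ * F τ ^ 2 := rfl
  have key : ∀ σ, ∑ τ, W σ * W τ * (F σ - F τ) ^ 2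
      = W σ * F σ ^ 2 - 2 * (W σ * F σ) * (∑ τ, W τ * F τ) + W σ * (∑ τ, W τ * F τ ^ 2) := by
    intro σ
    have : ∀ τ, W σ * W τ * (F σ - F τ) ^ 2
        = F σ ^ 2 * (W σ * W τ) - 2 * (W σ * F σ) * (W τ * F τ) + W σ * (W τ * F τ ^ 2) := by
      intro τ; ring
    rw [Finset.sum_congr rfl (fun τ _ => this τ)]
    rw [Finset.sum_add_distrib, Finset.sum_sub_distrib]
    rw [← Finset.mul_sum, ← Finset.mul_sum, ← Finset.mul_sum, ← Finset.mul_sum, hsum]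
    ring
  rw [Finset.sum_congr rfl (fun σ _ => key σ)]
  rw [Finset.sum_add_distrib, Finset.sum_sub_distrib]
  rw [← Finset.sum_mul, ← Finset.sum_mul]
  unfold cylVar
  rw [hE, hE2]
  have h2s : ∑ x : {x // x ∈ S} → Bool, 2 * (W x * F x) = 2 * ∑ x, W x * F x := by
    rw [Finset.mul_sum]
  rw [h2s, hsum]
  ring

theorem cylVar_nonneg {q : ℝ} (hq : q ∈ Set.Ioo (0:ℝ) 1) (S : Finset ι)
    (f : (ι → Bool) → ℝ) : 0 ≤ cylVar q S f := by
  have h := cylVar_double q S f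
  have : 0 ≤ ∑ σ : {x // x ∈ S} → Bool, ∑ τ : {x // x ∈ S} → Bool,
      cylWeight q S σ * cylWeight q S τ * (f (extCfg S σ) - f (extCfg S τ)) ^ 2 := by
    apply Finset.sum_nonneg
    intro σ _
    apply Finset.sum_nonneg
    intro τ _
    exact mul_nonneg (mul_nonneg (cylWeight_nonneg hq S σ) (cylWeight_nonneg hq S τ)) (sq_nonneg _)
  linarith

theorem cylVar_pos {q : ℝ} (hq : q ∈ Set.Ioo (0:ℝ) 1) (S : Finset ι)
    {f : (ι → Bool) → ℝ} {σ τ : {x // x ∈ S} → Bool}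
    (hst : f (extCfg S σ) ≠ f (extCfg S τ)) : 0 < cylVar q S f := by
  have h := cylVar_double q S f
  have hpos : 0 < ∑ σ' : {x // x ∈ S} → Bool, ∑ τ' : {x // x ∈ S} → Bool,
      cylWeight q S σ' * cylWeight q S τ' * (f (extCfg S σ') - f (extCfg S τ')) ^ 2 := by
    apply Finset.sum_pos'
    · intro σ' _
      apply Finset.sum_nonneg
      intro τ' _
      exact mul_nonneg (mul_nonneg (cylWeight_nonneg hq S σ') (cylWeight_nonneg hq S τ'))
        (sq_nonneg _)
    · refine ⟨σ, Finset.mem_univ σ, ?_⟩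
      apply Finset.sum_pos'
      · intro τ' _
        exact mul_nonneg (mul_nonneg (cylWeight_nonneg hq S σ) (cylWeight_nonneg hq S τ'))
          (sq_nonneg _)
      · refine ⟨τ, Finset.mem_univ τ, ?_⟩
        apply mul_pos (mul_pos (cylWeight_pos hq S σ) (cylWeight_pos hq S τ))
        have : f (extCfg S σ) - f (extCfg S τ) ≠ 0 := sub_ne_zero_of_ne hst
        positivity
  linarith

theorem cylVar_exists_ne {q : ℝ} {S : Finset ι} {f : (ι → Bool) → ℝ}
    (h : cylVar q S f ≠ 0) :
    ∃ σ τ : {x // x ∈ S} → Bool, f (extCfg S σ) ≠ f (extCfg S τ) := by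
  by_contra hc
  push_neg at hc
  apply h
  have hd := cylVar_double q S f
  have : ∑ σ : {x // x ∈ S} → Bool, ∑ τ : {x // x ∈ S} → Bool,
      cylWeight q S σ * cylWeight q S τ * (f (extCfg S σ) - f (extCfg S τ)) ^ 2 = 0 := by
    apply Finset.sum_eq_zero
    intro σ _
    apply Finset.sum_eq_zero
    intro τ _
    rw [hc σ τ]
    ring
  rw [this] at hd
  linarith

-- layer 4: Walsh decomposition

theorem opSum_sub (c : Bool → ℝ) (L : Finset ι) (f g : (ι → Bool) → ℝ) (ω : ι → Bool) :
    opSum c L (fun ω' => f ω' - g ω') ω = opSum c L f ω - opSum c L g ω := by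
  unfold opSum
  rw [← Finset.sum_sub_distrib]
  exact Finset.sum_congr rfl (fun τ _ => by ring)

theorem depends_mono {f : (ι → Bool) → ℝ} {S T : Finset ι} (h : DependsOnCoords f S)
    (hst : S ⊆ T) : DependsOnCoords f T :=
  fun ω ω' hh => h ω ω' (fun x hx => hh x (hst hx))

def hWal (q : ℝ) (L A : Finset ι) (f : (ι → Bool) → ℝ) : (ι → Bool) → ℝ :=
  opSum (wq q) (L \ A) (opSum sg A f)

theorem opSum_sg_insert {a : ι} {A : Finset ι} (ha : a ∉ A) (f : (ι → Bool) → ℝ) :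
    opSum sg (insert a A) f = opSum sg A (der a f) := by
  funext ω
  rw [opSum_insert sg ha f ω]
  have : der a f = fun ω' => f (Function.update ω' a true) - f (Function.update ω' a false) := rfl
  rw [this, opSum_sub]
  simp [sg]
  ring

theorem hWal_avg (q : ℝ) {a : ι} {L A : Finset ι} (ha : a ∉ L) (hA : A ⊆ L)
    (f : (ι → Bool) → ℝ) :
    hWal q (insert a L) A f = hWal q L A (avgq q a f) := by
  have haA : a ∉ A := fun h => ha (hA h)
  have haLA : a ∉ L \ A := fun h => ha (Finset.mem_sdiff.1 h).1
  have hset : (insert a L) \ A = insert a (L \ A) := by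
    ext u
    simp only [Finset.mem_sdiff, Finset.mem_insert]
    constructor
    · rintro ⟨h1 | h1, h2⟩
      · exact Or.inl h1
      · exact Or.inr ⟨h1, h2⟩
    · rintro (h1 | ⟨h1, h2⟩)
      · subst h1; exact ⟨Or.inl rfl, haA⟩
      · exact ⟨Or.inr h1, h2⟩
  unfold hWal
  rw [hset]
  funext ω
  rw [opSum_insert (wq q) haLA _ ω]
  have c1 : (fun ω' => opSum sg A f (Function.update ω' a true))
      = opSum sg A (fun ω' => f (Function.update ω' a true)) := by
    funext ω'
    rw [opSum_update_comm sg haA]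
  have c0 : (fun ω' => opSum sg A f (Function.update ω' a false))
      = opSum sg A (fun ω' => f (Function.update ω' a false)) := by
    funext ω'
    rw [opSum_update_comm sg haA]
  have havg : opSum sg A (avgq q a f) = fun ω' =>
      (1 - q) * opSum sg A (fun ω'' => f (Function.update ω'' a true)) ω'
      + q * opSum sg A (fun ω'' => f (Function.update ω'' a false)) ω' := by
    funext ω'
    have : avgq q a f = fun ω'' => (1 - q) * f (Function.update ω'' a true)
        + q * f (Function.update ω'' a false) := rfl
    rw [this, opSum_add, opSum_smul, opSum_smul]
  rw [havg, opSum_add, opSum_smul, opSum_smul, c1, c0]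
  simp [wq]

theorem hWal_der (q : ℝ) {a : ι} {L A : Finset ι} (ha : a ∉ L) (hA : A ⊆ L)
    (f : (ι → Bool) → ℝ) :
    hWal q (insert a L) (insert a A) f = hWal q L A (der a f) := by
  have haA : a ∉ A := fun h => ha (hA h)
  have hset : (insert a L) \ (insert a A) = L \ A := by
    ext u
    simp only [Finset.mem_sdiff, Finset.mem_insert]
    constructor
    · rintro ⟨h1 | h1, h2⟩
      · exact absurd (Or.inl h1) h2
      · push_neg at h2
        exact ⟨h1, h2.2⟩
    · rintro ⟨h1, h2⟩
      have hua : u ≠ a := fun e => ha (e ▸ h1)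
      exact ⟨Or.inr h1, by push_neg; exact ⟨hua, h2⟩⟩
  unfold hWal
  rw [hset, opSum_sg_insert haA]

theorem hWal_empty (q : ℝ) (f : (ι → Bool) → ℝ) (ω : ι → Bool) :
    hWal q ∅ ∅ f ω = f ω := by
  unfold hWal
  simp only [Finset.sdiff_empty]
  rw [opSum_empty, opSum_empty]

theorem hWal_depends {q : ℝ} {L A S : Finset ι} {f : (ι → Bool) → ℝ}
    (hf : DependsOnCoords f S) : DependsOnCoords (hWal q L A f) (S \ L) := by
  have h1 : DependsOnCoords (opSum sg A f) (S \ A) := opSum_depends hf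
  have h2 : DependsOnCoords (hWal q L A f) ((S \ A) \ (L \ A)) := opSum_depends h1
  apply depends_mono h2
  intro u hu
  simp only [Finset.mem_sdiff] at hu ⊢
  obtain ⟨⟨huS, huA⟩, hnot⟩ := hu
  refine ⟨huS, fun huL => hnot ?_⟩
  exact ⟨huL, huA⟩

set_option maxHeartbeats 1000000 in
/-- The Walsh decomposition of a weighted second moment. -/
theorem wvar (q : ℝ) (B : Finset ι) :
    ∀ L : Finset ι, L ⊆ B → ∀ (W f : (ι → Bool) → ℝ), (∀ a ∈ L, FreeAt a W) →
    cylExp q B (fun ω => W ω * f ω ^ 2)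
      = ∑ A ∈ L.powerset, ((1-q)*q) ^ A.card *
          cylExp q B (fun ω => W ω * hWal q L A f ω ^ 2) := by
  intro L
  induction L using Finset.induction_on with
  | empty =>
    intro _ W f _
    rw [Finset.powerset_empty, Finset.sum_singleton]
    simp only [Finset.card_empty, pow_zero, one_mul]
    exact cylExp_congr q B (fun ω => by rw [hWal_empty])
  | @insert a L ha ih =>
    intro hsub W f hW
    have haB : a ∈ B := hsub (Finset.mem_insert_self a L)
    have hLB : L ⊆ B := fun x hx => hsub (Finset.mem_insert_of_mem hx)
    have hWa : FreeAt a W := hW a (Finset.mem_insert_self a L)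
    have hWL : ∀ b ∈ L, FreeAt b W := fun b hb => hW b (Finset.mem_insert_of_mem hb)
    set g := avgq q a f with hg
    set d := der a f with hd
    have hsplit : cylExp q B (fun ω => W ω * f ω ^ 2)
        = cylExp q B (fun ω => W ω * g ω ^ 2)
          + (1 - q) * q * cylExp q B (fun ω => W ω * d ω ^ 2) := by
      have hpt : ∀ ω, W ω * f ω ^ 2
          = (W ω * g ω ^ 2 + 2 * (phiq q a ω * (W ω * g ω * d ω)))
            + phiq q a ω ^ 2 * (W ω * d ω ^ 2) := by
        intro ω
        rw [decomp_pt q a f ω]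
        ring
      rw [cylExp_congr q B hpt, cylExp_add, cylExp_add, cylExp_smul]
      have hm : cylExp q B (fun ω => phiq q a ω * (W ω * g ω * d ω)) = 0 := by
        apply cylExp_phi_mul q haB
        exact freeAt_mul (freeAt_mul hWa (freeAt_avgq q a f)) (freeAt_der a f)
      have hdsq : FreeAt a (fun ω => d ω ^ 2) := by
        intro ω b
        simp only [hd]
        rw [freeAt_der a f ω b]
      have hs : cylExp q B (fun ω => phiq q a ω ^ 2 * (W ω * d ω ^ 2))
          = (1 - q) * q * cylExp q B (fun ω => W ω * d ω ^ 2) := by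
        apply cylExp_phisq_mul q haB
        exact freeAt_mul hWa hdsq
      rw [hm, hs]
      ring
    rw [hsplit, ih hLB W g hWL, ih hLB W d hWL]
    rw [Finset.sum_powerset_insert ha]
    congr 1
    · apply Finset.sum_congr rfl
      intro A hA
      rw [hWal_avg q ha (Finset.mem_powerset.1 hA) f]
    · rw [Finset.mul_sum]
      apply Finset.sum_congr rfl
      intro A hA
      have hAL : A ⊆ L := Finset.mem_powerset.1 hA
      have haA : a ∉ A := fun h => ha (hAL h)
      rw [hWal_der q ha hAL f, Finset.card_insert_of_notMem haA, pow_succ]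
      ring

-- layer 5: transport along an injection, dirichlet sums, East Poincare

/-- pull back a configuration along `π` (on `T`; `true` elsewhere). -/
def pull (π : ι → κ) (T : Finset ι) (η : κ → Bool) : ι → Bool :=
  fun u => if u ∈ T then η (π u) else true

theorem pull_update {π : ι → κ} {T : Finset ι} (hinj : Set.InjOn π T)
    {x : ι} (hx : x ∈ T) (b : Bool) (η : κ → Bool) :
    pull π T (Function.update η (π x) b) = Function.update (pull π T η) x b := by
  funext u
  by_cases hux : u = x
  · subst hux
    simp [pull, hx]
  · by_cases hu : u ∈ T
    · have hne : π u ≠ π x := fun e => hux (hinj hu hx e)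
      simp [pull, hu, Function.update_of_ne hne, Function.update_of_ne hux]
    · simp [pull, hu, Function.update_of_ne hux]

theorem cylExp_relabel (q : ℝ) (π : ι → κ) (T : Finset ι) (hinj : Set.InjOn π T) :
    ∀ S : Finset ι, S ⊆ T → ∀ f : (ι → Bool) → ℝ, DependsOnCoords f S →
      cylExp q (S.image π) (fun η => f (pull π T η)) = cylExp q S f := by
  intro S
  induction S using Finset.induction_on with
  | empty =>
    intro _ f hf
    rw [Finset.image_empty, cylExp_empty, cylExp_empty]
    congr 1
    funext u
    simp [pull]
  | @insert a S ha ih =>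
    intro hsub f hf
    have haT : a ∈ T := hsub (Finset.mem_insert_self a S)
    have hST : S ⊆ T := fun x hx => hsub (Finset.mem_insert_of_mem hx)
    have hpa : π a ∉ S.image π := by
      intro h
      obtain ⟨s', hs', he⟩ := Finset.mem_image.1 h
      have : s' = a := hinj (hST hs') haT he
      exact ha (this ▸ hs')
    rw [Finset.image_insert, cylExp_insert q hpa, cylExp_insert q ha]
    have key : ∀ b : Bool,
        cylExp q (S.image π) (fun η => f (pull π T (Function.update η (π a) b)))
          = cylExp q S (fun ω => f (Function.update ω a b)) := by
      intro b
      have hdep : DependsOnCoords (fun ω => f (Function.update ω a b)) S := by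
        intro ω ω' hh
        apply hf
        intro x hx
        rcases Finset.mem_insert.1 hx with h | h
        · subst h; simp
        · have hxa : x ≠ a := fun e => ha (e ▸ h)
          rw [Function.update_of_ne hxa, Function.update_of_ne hxa]
          exact hh x h
      have := ih hST (fun ω => f (Function.update ω a b)) hdep
      rw [← this]
      apply cylExp_congr
      intro η
      rw [pull_update hinj haT b η]
    rw [key true, key false]

theorem cylVar_relabel (q : ℝ) (π : ι → κ) (T : Finset ι) (hinj : Set.InjOn π T)
    (S : Finset ι) (hST : S ⊆ T) (f : (ι → Bool) → ℝ) (hf : DependsOnCoords f S) :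
    cylVar q (S.image π) (fun η => f (pull π T η)) = cylVar q S f := by
  unfold cylVar
  rw [cylExp_relabel q π T hinj S hST f hf]
  have : DependsOnCoords (fun ω => f ω ^ 2) S := fun ω ω' h => congrArg (· ^ 2) (hf ω ω' h)
  rw [cylExp_relabel q π T hinj S hST (fun ω => f ω ^ 2) this]

theorem depends_pull (π : ι → κ) (T : Finset ι) (S : Finset ι) (hST : S ⊆ T)
    (f : (ι → Bool) → ℝ) (hf : DependsOnCoords f S) :
    DependsOnCoords (fun η => f (pull π T η)) (S.image π) := by
  intro η η' h
  apply hf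
  intro x hx
  have hxT : x ∈ T := hST hx
  simp only [pull, hxT, if_true]
  exact h (π x) (Finset.mem_image_of_mem π hx)

theorem varAt_nonneg {q : ℝ} (hq : q ∈ Set.Ioo (0:ℝ) 1) (f : (ι → Bool) → ℝ) (x : ι)
    (ω : ι → Bool) : 0 ≤ varAt q f x ω := by
  unfold varAt
  have h1 : 0 ≤ 1 - q := by linarith [hq.2]
  exact mul_nonneg (mul_nonneg h1 (le_of_lt hq.1)) (sq_nonneg _)

theorem ind_nonneg (P : Prop) : 0 ≤ ind P := by
  unfold ind
  split <;> norm_num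

theorem ind_mono {P Q : Prop} (h : P → Q) : ind P ≤ ind Q := by
  unfold ind
  by_cases hP : P
  · simp [hP, h hP]
  · simp [hP]
    split <;> norm_num

theorem varAt_zero {q : ℝ} {f : (ι → Bool) → ℝ} {S : Finset ι} (hf : DependsOnCoords f S)
    {x : ι} (hx : x ∉ S) (ω : ι → Bool) : varAt q f x ω = 0 := by
  unfold varAt
  have h := freeAt_of_depends hf hx
  rw [h ω true, h ω false]
  ring

theorem dirichlet_eq_sum (q : ℝ) (c : ι → (ι → Bool) → Prop) (supp : ι → Finset ι)
    (S : Finset ι) (f : (ι → Bool) → ℝ) (hdep : DependsOnCoords f S) :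
    dirichlet q c supp S f
      = ∑ x ∈ S, cylExp q (insert x (S ∪ supp x)) (fun ω => ind (c x ω) * varAt q f x ω) := by
  unfold dirichlet
  apply tsum_eq_sum
  intro x hx
  have : ∀ ω, ind (c x ω) * varAt q f x ω = 0 := by
    intro ω
    rw [varAt_zero hdep hx ω, mul_zero]
  rw [cylExp_congr _ _ this, cylExp_zero]

theorem dirichlet_nonneg {q : ℝ} (hq : q ∈ Set.Ioo (0:ℝ) 1) (c : ι → (ι → Bool) → Prop)
    (supp : ι → Finset ι) (S : Finset ι) (f : (ι → Bool) → ℝ) :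
    0 ≤ dirichlet q c supp S f := by
  apply tsum_nonneg
  intro x
  apply cylExp_nonneg hq
  intro ω
  exact mul_nonneg (ind_nonneg _) (varAt_nonneg hq f x ω)

theorem eastGap_nonneg {q : ℝ} (hq : q ∈ Set.Ioo (0:ℝ) 1) : 0 ≤ eastGap q := by
  apply Real.sInf_nonneg
  rintro γ ⟨f, S, hdep, hnc, rfl⟩
  exact div_nonneg (dirichlet_nonneg hq _ _ S f) (cylVar_nonneg hq S f)

/-- The Poincaré inequality for the East model on ℤ, extracted from the
definition of `eastGap` as an infimum. -/
theorem east_poincare {q : ℝ} (hq : q ∈ Set.Ioo (0:ℝ) 1) (f : (ℤ → Bool) → ℝ)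
    (S : Finset ℤ) (hdep : DependsOnCoords f S) :
    eastGap q * cylVar q S f
      ≤ ∑ x ∈ S, cylExp q (insert x (insert (x+1) S))
          (fun ω => ind (ω (x+1) = false) * varAt q f x ω) := by
  have hDval : dirichlet q (fun (x : ℤ) ω => ω (x + 1) = false) (fun x => {x + 1}) S f
      = ∑ x ∈ S, cylExp q (insert x (insert (x+1) S))
          (fun ω => ind (ω (x+1) = false) * varAt q f x ω) := by
    rw [dirichlet_eq_sum q _ _ S f hdep]
    apply Finset.sum_congr rfl
    intro x _
    congr 1
    rw [Finset.union_comm, ← Finset.insert_eq]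
  by_cases hV : cylVar q S f = 0
  · rw [hV, mul_zero, ← hDval]
    exact dirichlet_nonneg hq _ _ S f
  · have hVpos : 0 < cylVar q S f := lt_of_le_of_ne (cylVar_nonneg hq S f) (Ne.symm hV)
    obtain ⟨σ, τ, hne⟩ := cylVar_exists_ne hV
    have hmem : (dirichlet q (fun (x : ℤ) ω => ω (x + 1) = false) (fun x => {x + 1}) S f
        / cylVar q S f) ∈ { γ : ℝ | ∃ (g : (ℤ → Bool) → ℝ) (S' : Finset ℤ),
          DependsOnCoords g S' ∧ (∃ ω ω', g ω ≠ g ω') ∧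
          γ = dirichlet q (fun (x : ℤ) ω => ω (x + 1) = false) (fun x => {x + 1}) S' g
            / cylVar q S' g } := by
      exact ⟨f, S, hdep, ⟨extCfg S σ, extCfg S τ, hne⟩, rfl⟩
    have hbdd : BddBelow { γ : ℝ | ∃ (g : (ℤ → Bool) → ℝ) (S' : Finset ℤ),
        DependsOnCoords g S' ∧ (∃ ω ω', g ω ≠ g ω') ∧
        γ = dirichlet q (fun (x : ℤ) ω => ω (x + 1) = false) (fun x => {x + 1}) S' g
          / cylVar q S' g } := by
      refine ⟨0, ?_⟩
      rintro γ ⟨g, S', hdep', hnc', rfl⟩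
      exact div_nonneg (dirichlet_nonneg hq _ _ S' g) (cylVar_nonneg hq S' g)
    have hle : eastGap q ≤ dirichlet q (fun (x : ℤ) ω => ω (x + 1) = false)
        (fun x => {x + 1}) S f / cylVar q S f := csInf_le hbdd hmem
    rw [← hDval]
    calc eastGap q * cylVar q S f
        ≤ (dirichlet q (fun (x : ℤ) ω => ω (x + 1) = false) (fun x => {x + 1}) S f
            / cylVar q S f) * cylVar q S f := by
          apply mul_le_mul_of_nonneg_right hle (le_of_lt hVpos)
      _ = dirichlet q (fun (x : ℤ) ω => ω (x + 1) = false) (fun x => {x + 1}) S f := by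
          field_simp
-- layer 6: combinatorics of the successor structure

theorem sources_nonempty {S : Finset ι} {σ : ι → ι} {r : ι → ℕ}
    (hr : ∀ x ∈ S, r (σ x) < r x) (hS : S.Nonempty) :
    (S \ S.image σ).Nonempty := by
  obtain ⟨x, hxS, hmax⟩ := S.exists_max_image r hS
  refine ⟨x, Finset.mem_sdiff.2 ⟨hxS, fun hx => ?_⟩⟩
  obtain ⟨y, hyS, hyx⟩ := Finset.mem_image.1 hx
  have h1 : r x < r y := by
    have := hr y hyS
    rwa [hyx] at this
  exact absurd (hmax y hyS) (not_le.2 h1)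

theorem exists_exit {S : Finset ι} {σ : ι → ι} {r : ι → ℕ}
    (hr : ∀ x ∈ S, r (σ x) < r x) (hS : S.Nonempty) :
    ∃ e ∈ S.image σ, e ∉ S := by
  by_contra hc
  push_neg at hc
  obtain ⟨x, hxS, hmin⟩ := S.exists_min_image r hS
  have h1 : σ x ∈ S.image σ := Finset.mem_image_of_mem σ hxS
  have h2 : σ x ∈ S := hc (σ x) h1
  exact absurd (hmin (σ x) h2) (not_le.2 (hr x hxS))

theorem two_sources_of_not_injOn {S : Finset ι} {σ : ι → ι} {r : ι → ℕ}
    (hr : ∀ x ∈ S, r (σ x) < r x) (hninj : ¬ Set.InjOn σ S) :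
    2 ≤ (S \ S.image σ).card := by
  have hS : S.Nonempty := by
    rcases S.eq_empty_or_nonempty with h | h
    · exfalso; apply hninj; subst h; intro x hx; simp at hx
    · exact h
  have himg_lt : (S.image σ).card < S.card := by
    rcases lt_or_eq_of_le (Finset.card_image_le (s := S) (f := σ)) with h | h
    · exact h
    · exact absurd (Finset.injOn_of_card_image_eq h) hninj
  obtain ⟨e, heimg, heS⟩ := exists_exit hr hS
  have hsub : S ∩ S.image σ ⊆ (S.image σ).erase e := by
    intro u hu
    have h1 := Finset.mem_inter.1 hu
    exact Finset.mem_erase.2 ⟨fun hue => heS (hue ▸ h1.1), h1.2⟩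
  have h2 : (S ∩ S.image σ).card ≤ (S.image σ).card - 1 := by
    have := Finset.card_le_card hsub
    have h3 := Finset.card_erase_of_mem heimg
    omega
  have h4 : (S \ S.image σ).card + (S ∩ S.image σ).card = S.card :=
    Finset.card_sdiff_add_card_inter S (S.image σ)
  have h5 : 0 < (S.image σ).card := Finset.card_pos.2 ⟨e, heimg⟩
  omega

/-- chain structure when there is at most one source -/
theorem chain_struct {S : Finset ι} {σ : ι → ι} {r : ι → ℕ}
    (hr : ∀ x ∈ S, r (σ x) < r x) (hS : S.Nonempty)
    (hcard : (S \ S.image σ).card ≤ 1) :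
    ∃ v : ℕ → ι, (∀ i, v (i + 1) = σ (v i)) ∧
      (∀ i, i < S.card → v i ∈ S) ∧ v S.card ∉ S ∧
      S = (Finset.range S.card).image v ∧
      Set.InjOn v (Finset.range (S.card + 1)) := by
  classical
  obtain ⟨x₀, hx₀⟩ := sources_nonempty hr hS
  have hLsing : S \ S.image σ = {x₀} := by
    apply Finset.eq_singleton_iff_unique_mem.2
    refine ⟨hx₀, fun y hy => ?_⟩
    by_contra hne
    have : 2 ≤ (S \ S.image σ).card := by
      have := Finset.card_le_card (Finset.insert_subset hy (Finset.singleton_subset_iff.2 hx₀))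
      rwa [Finset.card_insert_of_notMem (by simp [hne]), Finset.card_singleton] at this
    omega
  obtain ⟨hx₀S, hx₀img⟩ := Finset.mem_sdiff.1 hx₀
  set n := S.card with hn
  set v : ℕ → ι := fun i => σ^[i] x₀ with hv
  have hvsucc : ∀ i, v (i + 1) = σ (v i) := by
    intro i
    simp only [hv]
    rw [Function.iterate_succ_apply']
  -- goodness
  set good : ℕ → Prop := fun i => ∀ j, j ≤ i → v j ∈ S with hgood
  have good0 : good 0 := by
    intro j hj
    interval_cases j
    simpa [hv] using hx₀S
  have good_mono : ∀ {i j}, j ≤ i → good i → good j := by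
    intro i j hij hi k hk
    exact hi k (le_trans hk hij)
  -- ranks strictly decrease along good prefixes
  have rank_dec : ∀ i, good i → ∀ k, k ≤ i → ∀ j, j < k → r (v k) < r (v j) := by
    intro i hi k
    induction k with
    | zero => intro _ j hj; omega
    | succ k ih =>
      intro hki j hj
      have hvk : v k ∈ S := hi k (by omega)
      have hstep : r (v (k+1)) < r (v k) := by
        rw [hvsucc k]
        exact hr (v k) hvk
      rcases Nat.lt_or_ge j k with h | h
      · exact lt_trans hstep (ih (by omega) j h)
      · have : j = k := by omega
        subst this
        exact hstep
  have inj_good : ∀ i, good i → ∀ j k, j ≤ i → k ≤ i → v j = v k → j = k := by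
    intro i hi j k hj hk he
    by_contra hne
    rcases Nat.lt_or_ge j k with h | h
    · have := rank_dec i hi k hk j h
      rw [he] at this
      omega
    · have hlt : k < j := by omega
      have := rank_dec i hi j hj k hlt
      rw [he] at this
      omega
  have good_lt : ∀ i, good i → i < n := by
    intro i hi
    have hsub : (Finset.range (i+1)).image v ⊆ S := by
      intro u hu
      obtain ⟨j, hj, rfl⟩ := Finset.mem_image.1 hu
      exact hi j (by simpa using Nat.lt_succ_iff.1 (Finset.mem_range.1 hj))
    have hcardim : ((Finset.range (i+1)).image v).card = i + 1 := by
      rw [Finset.card_image_of_injOn, Finset.card_range]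
      intro a ha b hb he
      exact inj_good i hi a b (Nat.lt_succ_iff.1 (Finset.mem_range.1 ha))
        (Nat.lt_succ_iff.1 (Finset.mem_range.1 hb)) he
    have := Finset.card_le_card hsub
    omega
  -- every element of S lies on the chain with a good index
  have reach : ∀ m (x : ι), x ∈ S → (S.filter (fun z => r x < r z)).card = m →
      ∃ i, v i = x ∧ good i := by
    intro m
    induction m using Nat.strong_induction_on with
    | _ m ih =>
      intro x hxS hm
      by_cases hx : x = x₀
      · subst hx
        exact ⟨0, by simp [hv], good0⟩
      · have hximg : x ∈ S.image σ := by
          by_contra hns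
          have : x ∈ S \ S.image σ := Finset.mem_sdiff.2 ⟨hxS, hns⟩
          rw [hLsing] at this
          exact hx (Finset.mem_singleton.1 this)
        obtain ⟨y, hyS, hyx⟩ := Finset.mem_image.1 hximg
        have hrxy : r x < r y := by
          have := hr y hyS
          rwa [hyx] at this
        have hsub2 : S.filter (fun z => r y < r z) ⊆ S.filter (fun z => r x < r z) := by
          intro z hz
          simp only [Finset.mem_filter] at *
          exact ⟨hz.1, by omega⟩
        have hymem : y ∈ S.filter (fun z => r x < r z) := Finset.mem_filter.2 ⟨hyS, hrxy⟩
        have hynot : y ∉ S.filter (fun z => r y < r z) := by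
          simp only [Finset.mem_filter, not_and]
          intro _
          omega
        have hss : S.filter (fun z => r y < r z) ⊂ S.filter (fun z => r x < r z) :=
          (Finset.ssubset_iff_of_subset hsub2).2 ⟨y, hymem, hynot⟩
        have hlt : (S.filter (fun z => r y < r z)).card < m := by
          rw [← hm]
          exact Finset.card_lt_card hss
        obtain ⟨i, hvi, hgi⟩ := ih _ hlt y hyS rfl
        refine ⟨i + 1, ?_, ?_⟩
        · rw [hvsucc i, hvi, hyx]
        · intro j hj
          rcases Nat.lt_or_ge j (i+1) with h | h
          · exact hgi j (by omega)
          · have : j = i + 1 := by omega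
            subst this
            rw [hvsucc i, hvi, hyx]
            exact hxS
  -- maximal good index
  have good_dec : DecidablePred good := fun i => Classical.dec _
  set K := (Finset.range (n+1)).filter (fun i => good i) with hK
  have hKne : K.Nonempty := ⟨0, Finset.mem_filter.2 ⟨Finset.mem_range.2 (by
    have := Finset.card_pos.2 hS; omega), good0⟩⟩
  set k := K.max' hKne with hk
  have hkK : k ∈ K := K.max'_mem hKne
  have hkgood : good k := (Finset.mem_filter.1 hkK).2
  have hkmax : ∀ i, good i → i ≤ k := by
    intro i hi
    apply K.le_max'
    exact Finset.mem_filter.2 ⟨Finset.mem_range.2 (by have := good_lt i hi; omega), hi⟩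
  have hSeq : S = (Finset.range (k+1)).image v := by
    apply Finset.Subset.antisymm
    · intro x hx
      obtain ⟨i, hvi, hgi⟩ := reach _ x hx rfl
      exact Finset.mem_image.2 ⟨i, Finset.mem_range.2 (by have := hkmax i hgi; omega), hvi⟩
    · intro u hu
      obtain ⟨j, hj, rfl⟩ := Finset.mem_image.1 hu
      exact hkgood j (Nat.lt_succ_iff.1 (Finset.mem_range.1 hj))
  have hkn : k + 1 = n := by
    have : ((Finset.range (k+1)).image v).card = k + 1 := by
      rw [Finset.card_image_of_injOn, Finset.card_range]
      intro a ha b hb he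
      exact inj_good k hkgood a b (Nat.lt_succ_iff.1 (Finset.mem_range.1 ha))
        (Nat.lt_succ_iff.1 (Finset.mem_range.1 hb)) he
    rw [hSeq] at hn
    omega
  have hvnS : v n ∉ S := by
    intro hvn
    have goodn : good n := by
      intro j hj
      rcases Nat.lt_or_ge j n with h | h
      · apply hkgood; omega
      · have : j = n := by omega
        subst this; exact hvn
    have := good_lt n goodn
    omega
  refine ⟨v, hvsucc, ?_, hvnS, ?_, ?_⟩
  · intro i hi
    apply hkgood; omega
  · rw [hSeq, hkn]
  · intro a ha b hb he
    simp only [Finset.coe_range, Set.mem_Iio] at ha hb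
    rcases Nat.lt_or_ge a (n : ℕ) with h1 | h1 <;> rcases Nat.lt_or_ge b (n:ℕ) with h2 | h2
    · exact inj_good k hkgood a b (by omega) (by omega) he
    · have hbn : b = n := by omega
      subst hbn
      have hmem : v a ∈ S := hkgood a (by omega)
      rw [he] at hmem
      exact absurd hmem hvnS
    · have han : a = n := by omega
      subst han
      have hmem : v b ∈ S := hkgood b (by omega)
      rw [← he] at hmem
      exact absurd hmem hvnS
    · omega
-- layer 7a: helpers for the main induction

theorem opSum_empty_fun (c : Bool → ℝ) (f : (ι → Bool) → ℝ) : opSum c ∅ f = f :=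
  funext (opSum_empty c f)

theorem hWal_zero (q : ℝ) (L : Finset ι) (f : (ι → Bool) → ℝ) :
    hWal q L ∅ f = opSum (wq q) L f := by
  unfold hWal
  rw [Finset.sdiff_empty, opSum_empty_fun]

theorem opSum_der_comm (c : Bool → ℝ) {M : Finset ι} {x : ι} (hx : x ∉ M)
    (f : (ι → Bool) → ℝ) : opSum c M (der x f) = der x (opSum c M f) := by
  funext ω
  have h1 : der x f = fun ω' => f (Function.update ω' x true) - f (Function.update ω' x false) :=
    rfl
  rw [h1, opSum_sub]
  unfold der
  rw [opSum_update_comm c hx f true ω, opSum_update_comm c hx f false ω]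

theorem hWal_der_comm (q : ℝ) {L A : Finset ι} {x : ι} (hA : A ⊆ L) (hx : x ∉ L)
    (f : (ι → Bool) → ℝ) : hWal q L A (der x f) = der x (hWal q L A f) := by
  have hxA : x ∉ A := fun h => hx (hA h)
  have hxLA : x ∉ L \ A := fun h => hx (Finset.mem_sdiff.1 h).1
  unfold hWal
  rw [opSum_der_comm sg hxA f, opSum_der_comm (wq q) hxLA]

theorem hWal_insert_mem (q : ℝ) {L B : Finset ι} {x : ι} (hxL : x ∈ L)
    (hB : B ⊆ L.erase x) (f : (ι → Bool) → ℝ) :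
    hWal q L (insert x B) f = hWal q (L.erase x) B (der x f) := by
  have hxB : x ∉ B := fun h => (Finset.mem_erase.1 (hB h)).1 rfl
  have hset : L \ (insert x B) = (L.erase x) \ B := by
    ext u
    simp only [Finset.mem_sdiff, Finset.mem_insert, Finset.mem_erase, not_or]
    tauto
  unfold hWal
  rw [hset, opSum_sg_insert hxB]

theorem varAt_eq_der (q : ℝ) (f : (ι → Bool) → ℝ) (x : ι) (ω : ι → Bool) :
    varAt q f x ω = (1 - q) * q * (der x f ω) ^ 2 := rfl

theorem term_depends {q : ℝ} {f : (ι → Bool) → ℝ} {S : Finset ι}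
    (hf : DependsOnCoords f S) (x t : ι) :
    DependsOnCoords (fun ω => ind (ω t = false) * varAt q f x ω) (insert x (insert t S)) := by
  intro ω ω' h
  have ht : ω t = ω' t := h t (Finset.mem_insert_of_mem (Finset.mem_insert_self t S))
  have hup : ∀ b : Bool, f (Function.update ω x b) = f (Function.update ω' x b) := by
    intro b
    apply hf
    intro s hs
    by_cases hsx : s = x
    · subst hsx; simp
    · rw [Function.update_of_ne hsx, Function.update_of_ne hsx]
      exact h s (Finset.mem_insert_of_mem (Finset.mem_insert_of_mem hs))
  show ind (ω t = false) * varAt q f x ω = ind (ω' t = false) * varAt q f x ω'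
  unfold varAt
  rw [ht, hup true, hup false]

theorem freeAt_phiq (q : ℝ) {a x : ι} (hax : x ≠ a) : FreeAt x (phiq q a) := by
  intro ω b
  show phiq q a (Function.update ω x b) = phiq q a ω
  unfold phiq
  rw [Function.update_of_ne (Ne.symm hax)]

theorem depends_phiq_mul {q : ℝ} {g : ι} {U : Finset ι} {h : (ι → Bool) → ℝ}
    (hh : DependsOnCoords h U) :
    DependsOnCoords (fun ω => phiq q g ω * h ω) (insert g U) := by
  intro ω ω' hc
  have h1 : ω g = ω' g := hc g (Finset.mem_insert_self g U)
  have h2 : h ω = h ω' := hh ω ω' (fun x hx => hc x (Finset.mem_insert_of_mem hx))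
  show phiq q g ω * h ω = phiq q g ω' * h ω'
  unfold phiq
  rw [h1, h2]

theorem der_phiq_self (q : ℝ) (g : ι) {hA : (ι → Bool) → ℝ} (hfree : FreeAt g hA) :
    der g (fun ω => phiq q g ω * hA ω) = hA := by
  funext ω
  show phiq q g (Function.update ω g true) * hA (Function.update ω g true)
      - phiq q g (Function.update ω g false) * hA (Function.update ω g false) = hA ω
  unfold phiq
  simp only [Function.update_self]
  rw [hfree ω true, hfree ω false]
  norm_num
  ring

theorem der_phiq_other (q : ℝ) {g x : ι} (hgx : g ≠ x) (hA : (ι → Bool) → ℝ) :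
    der x (fun ω => phiq q g ω * hA ω) = fun ω => phiq q g ω * der x hA ω := by
  funext ω
  show phiq q g (Function.update ω x true) * hA (Function.update ω x true)
      - phiq q g (Function.update ω x false) * hA (Function.update ω x false)
    = phiq q g ω * (hA (Function.update ω x true) - hA (Function.update ω x false))
  rw [freeAt_phiq q (Ne.symm hgx) ω true, freeAt_phiq q (Ne.symm hgx) ω false]
  ring

-- layer 7b: the main Poincaré inequality for rank-decreasing successor structures

theorem freeAt_der_of {g x : ι} (hgx : g ≠ x) {h : (ι → Bool) → ℝ} (hfree : FreeAt g h) :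
    FreeAt g (der x h) := by
  intro ω b
  unfold der
  rw [Function.update_comm hgx, Function.update_comm hgx, hfree (Function.update ω x true) b, hfree (Function.update ω x false) b]

theorem cylVar_empty_eq (q : ℝ) (f : (ι → Bool) → ℝ) : cylVar q (∅ : Finset ι) f = 0 := by
  unfold cylVar
  rw [cylExp_empty, cylExp_empty]
  ring

set_option maxHeartbeats 2000000 in
theorem main_poincare {ι : Type*} [DecidableEq ι] [Infinite ι] {q : ℝ}
    (hq : q ∈ Set.Ioo (0:ℝ) 1) :
    ∀ (n : ℕ) (S : Finset ι), S.card ≤ n → ∀ (σ : ι → ι) (r : ι → ℕ),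
      (∀ x ∈ S, r (σ x) < r x) → ∀ f : (ι → Bool) → ℝ, DependsOnCoords f S →
      eastGap q * cylVar q S f
        ≤ ∑ x ∈ S, cylExp q (insert x (insert (σ x) S))
            (fun ω => ind (ω (σ x) = false) * varAt q f x ω) := by
  classical
  intro n
  induction n with
  | zero =>
    intro S hcard σ r hr f hf
    have hSe : S = ∅ := Finset.card_eq_zero.1 (Nat.le_zero.1 hcard)
    subst hSe
    rw [cylVar_empty_eq, Finset.sum_empty, mul_zero]
  | succ n ih =>
    intro S hcard σ r hr f hf
    rcases S.eq_empty_or_nonempty with rfl | hS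
    · rw [cylVar_empty_eq, Finset.sum_empty, mul_zero]
    by_cases hL2 : 2 ≤ (S \ S.image σ).card
    · -- WALSH case
      set L := S \ S.image σ with hLdef
      set U := S \ L with hUdef
      set BIG := S ∪ S.image σ with hBdef
      have hγ0 : 0 ≤ eastGap q := eastGap_nonneg hq
      have hq1 : 0 < 1 - q := by linarith [hq.2]
      have hpq : 0 < (1 - q) * q := mul_pos hq1 hq.1
      have hpq0 : (0:ℝ) ≤ (1 - q) * q := le_of_lt hpq
      have hLS : L ⊆ S := Finset.sdiff_subset
      have hUS : U ⊆ S := Finset.sdiff_subset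
      have hSB : S ⊆ BIG := Finset.subset_union_left
      have hLB : L ⊆ BIG := fun x hx => hSB (hLS hx)
      have hUB : U ⊆ BIG := fun x hx => hSB (hUS hx)
      have hσB : ∀ x ∈ S, σ x ∈ BIG := fun x hx =>
        Finset.mem_union_right _ (Finset.mem_image_of_mem σ hx)
      have hσnotL : ∀ x ∈ S, σ x ∉ L := by
        intro x hx h
        rw [hLdef] at h
        exact (Finset.mem_sdiff.1 h).2 (Finset.mem_image_of_mem σ hx)
      have hUL : ∀ x ∈ U, x ∉ L := by
        intro x hx
        rw [hUdef] at hx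
        exact (Finset.mem_sdiff.1 hx).2
      have hUn1 : U.card + 1 ≤ n := by
        have h1 : U.card = S.card - L.card := by rw [hUdef]; exact Finset.card_sdiff_of_subset hLS
        have h2 := Finset.card_le_card hLS
        omega
      have hsetB : ∀ x ∈ S, insert x (insert (σ x) S) ⊆ BIG := by
        intro x hx
        exact Finset.insert_subset (hSB hx) (Finset.insert_subset (hσB x hx) hSB)
      have hUsetB : ∀ x ∈ U, insert x (insert (σ x) U) ⊆ BIG := by
        intro x hx
        exact Finset.insert_subset (hUB hx)
          (Finset.insert_subset (hσB x (hUS hx)) hUB)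
      have hgdep : ∀ A : Finset ι, DependsOnCoords (hWal q L A f) U := by
        intro A
        rw [hUdef]
        exact hWal_depends hf
      have hgsqdep : ∀ A : Finset ι, DependsOnCoords (fun ω => hWal q L A f ω ^ 2) U :=
        fun A ω ω' h => congrArg (· ^ 2) (hgdep A ω ω' h)
      -- (1) variance split
      have honefree : ∀ a ∈ L, FreeAt a (fun _ : ι → Bool => (1:ℝ)) := fun a _ ω b => rfl
      have hvar1 : cylExp q BIG (fun ω => f ω ^ 2)
          = ∑ A ∈ L.powerset, ((1-q)*q) ^ A.card
              * cylExp q BIG (fun ω => hWal q L A f ω ^ 2) := by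
        have h0 := wvar q BIG L hLB (fun _ => (1:ℝ)) f honefree
        calc cylExp q BIG (fun ω => f ω ^ 2)
            = cylExp q BIG (fun ω => (fun _ : ι → Bool => (1:ℝ)) ω * f ω ^ 2) :=
              cylExp_congr q BIG (fun ω => by show f ω ^2 = 1 * f ω ^2; ring)
          _ = ∑ A ∈ L.powerset, ((1-q)*q) ^ A.card
              * cylExp q BIG (fun ω => (fun _ : ι → Bool => (1:ℝ)) ω * hWal q L A f ω ^ 2) := h0
          _ = ∑ A ∈ L.powerset, ((1-q)*q) ^ A.card
              * cylExp q BIG (fun ω => hWal q L A f ω ^ 2) := by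
              apply Finset.sum_congr rfl
              intro A _
              congr 1
              exact cylExp_congr q BIG (fun ω => by
                show 1 * hWal q L A f ω ^ 2 = hWal q L A f ω ^ 2; ring)
      have hmean : cylExp q BIG f = cylExp q BIG (hWal q L ∅ f) := by
        rw [hWal_zero]
        exact (cylExp_opSum_wq q L hLB f).symm
      have hemptyP : (∅ : Finset ι) ∈ L.powerset := Finset.mem_powerset.2 (Finset.empty_subset L)
      have hVarSplit : cylVar q S f
          = (cylExp q BIG (fun ω => hWal q L ∅ f ω ^ 2) - (cylExp q BIG (hWal q L ∅ f)) ^ 2)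
            + ∑ A ∈ L.powerset.erase ∅, ((1-q)*q) ^ A.card
                * cylExp q BIG (fun ω => hWal q L A f ω ^ 2) := by
        have hfsq : DependsOnCoords (fun ω => f ω ^ 2) S :=
          fun ω ω' h => congrArg (· ^ 2) (hf ω ω' h)
        unfold cylVar
        rw [← cylExp_extend q hSB hf, ← cylExp_extend q hSB hfsq]
        rw [hvar1, hmean]
        rw [← Finset.add_sum_erase _ _ hemptyP]
        rw [Finset.card_empty, pow_zero, one_mul]
        ring
      -- per-term identities
      have hterm_big : ∀ x ∈ S,
          cylExp q (insert x (insert (σ x) S)) (fun ω => ind (ω (σ x) = false) * varAt q f x ω)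
            = cylExp q BIG (fun ω => ind (ω (σ x) = false) * varAt q f x ω) := by
        intro x hx
        exact (cylExp_extend q (hsetB x hx) (term_depends hf x (σ x))).symm
      have hWfree : ∀ x ∈ S, ∀ a ∈ L,
          FreeAt a (fun ω : ι → Bool => ind (ω (σ x) = false) * ((1-q)*q)) := by
        intro x hx a haL ω b
        have hne : σ x ≠ a := fun e => hσnotL x hx (e ▸ haL)
        show ind (Function.update ω a b (σ x) = false) * ((1-q)*q)
          = ind (ω (σ x) = false) * ((1-q)*q)
        rw [Function.update_of_ne hne]
      have hUdec : ∀ x ∈ U,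
          cylExp q BIG (fun ω => ind (ω (σ x) = false) * varAt q f x ω)
            = ∑ A ∈ L.powerset, ((1-q)*q) ^ A.card *
                cylExp q BIG (fun ω => ind (ω (σ x) = false)
                  * varAt q (hWal q L A f) x ω) := by
        intro x hxU
        have hxS : x ∈ S := hUS hxU
        have hxL : x ∉ L := hUL x hxU
        have h0 := wvar q BIG L hLB (fun ω => ind (ω (σ x) = false) * ((1-q)*q))
          (der x f) (hWfree x hxS)
        calc cylExp q BIG (fun ω => ind (ω (σ x) = false) * varAt q f x ω)
            = cylExp q BIG (fun ω => (fun ω' : ι → Bool => ind (ω' (σ x) = false) * ((1-q)*q)) ω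
                * der x f ω ^ 2) := cylExp_congr q BIG (fun ω => by
              show ind (ω (σ x) = false) * varAt q f x ω
                = ind (ω (σ x) = false) * ((1-q)*q) * der x f ω ^ 2
              rw [varAt_eq_der]
              ring)
          _ = ∑ A ∈ L.powerset, ((1-q)*q) ^ A.card
              * cylExp q BIG (fun ω => (fun ω' : ι → Bool => ind (ω' (σ x) = false) * ((1-q)*q)) ω
                  * hWal q L A (der x f) ω ^ 2) := h0
          _ = ∑ A ∈ L.powerset, ((1-q)*q) ^ A.card *
              cylExp q BIG (fun ω => ind (ω (σ x) = false) * varAt q (hWal q L A f) x ω) := by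
              apply Finset.sum_congr rfl
              intro A hA
              congr 1
              apply cylExp_congr
              intro ω
              show ind (ω (σ x) = false) * ((1-q)*q) * hWal q L A (der x f) ω ^ 2
                = ind (ω (σ x) = false) * varAt q (hWal q L A f) x ω
              rw [hWal_der_comm q (Finset.mem_powerset.1 hA) hxL f, varAt_eq_der]
              ring
      have hLdec : ∀ x ∈ L,
          cylExp q BIG (fun ω => ind (ω (σ x) = false) * varAt q f x ω)
            = ∑ B ∈ (L.erase x).powerset, ((1-q)*q) ^ B.card *
                cylExp q BIG (fun ω => ind (ω (σ x) = false) * ((1-q)*q)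
                  * hWal q L (insert x B) f ω ^ 2) := by
        intro x hxL
        have hxS : x ∈ S := hLS hxL
        have herB : L.erase x ⊆ BIG := fun u hu => hLB (Finset.erase_subset x L hu)
        have h0 := wvar q BIG (L.erase x) herB (fun ω => ind (ω (σ x) = false) * ((1-q)*q))
          (der x f) (fun a ha => hWfree x hxS a (Finset.erase_subset x L ha))
        calc cylExp q BIG (fun ω => ind (ω (σ x) = false) * varAt q f x ω)
            = cylExp q BIG (fun ω => (fun ω' : ι → Bool => ind (ω' (σ x) = false) * ((1-q)*q)) ω
                * der x f ω ^ 2) := cylExp_congr q BIG (fun ω => by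
              show ind (ω (σ x) = false) * varAt q f x ω
                = ind (ω (σ x) = false) * ((1-q)*q) * der x f ω ^ 2
              rw [varAt_eq_der]
              ring)
          _ = ∑ B ∈ (L.erase x).powerset, ((1-q)*q) ^ B.card
              * cylExp q BIG (fun ω => (fun ω' : ι → Bool => ind (ω' (σ x) = false) * ((1-q)*q)) ω
                  * hWal q (L.erase x) B (der x f) ω ^ 2) := h0
          _ = ∑ B ∈ (L.erase x).powerset, ((1-q)*q) ^ B.card *
              cylExp q BIG (fun ω => ind (ω (σ x) = false) * ((1-q)*q)
                * hWal q L (insert x B) f ω ^ 2) := by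
              apply Finset.sum_congr rfl
              intro B hB
              congr 1
              apply cylExp_congr
              intro ω
              show ind (ω (σ x) = false) * ((1-q)*q) * hWal q (L.erase x) B (der x f) ω ^ 2
                = ind (ω (σ x) = false) * ((1-q)*q) * hWal q L (insert x B) f ω ^ 2
              rw [hWal_insert_mem q hxL (Finset.mem_powerset.1 hB) f]
      -- (3a)
      have h3a : eastGap q * (cylExp q BIG (fun ω => hWal q L ∅ f ω ^ 2)
            - (cylExp q BIG (hWal q L ∅ f)) ^ 2)
          ≤ ∑ x ∈ U, cylExp q BIG
              (fun ω => ind (ω (σ x) = false) * varAt q (hWal q L ∅ f) x ω) := by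
        have hIH := ih U (by omega) σ r (fun x hx => hr x (hUS hx)) (hWal q L ∅ f) (hgdep ∅)
        have hvarU : cylVar q U (hWal q L ∅ f)
            = cylExp q BIG (fun ω => hWal q L ∅ f ω ^ 2)
              - (cylExp q BIG (hWal q L ∅ f)) ^ 2 := by
          unfold cylVar
          rw [cylExp_extend q hUB (hgdep ∅), cylExp_extend q hUB (hgsqdep ∅)]
        rw [hvarU] at hIH
        refine le_trans hIH (le_of_eq (Finset.sum_congr rfl ?_))
        intro x hxU
        exact (cylExp_extend q (hUsetB x hxU) (term_depends (hgdep ∅) x (σ x))).symm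
      -- (3b)
      have h3b : ∀ A ∈ L.powerset.erase ∅, ∀ x₀ ∈ A,
          eastGap q * cylExp q BIG (fun ω => hWal q L A f ω ^ 2)
            ≤ cylExp q BIG (fun ω => ind (ω (σ x₀) = false) * hWal q L A f ω ^ 2)
              + ∑ x ∈ U, cylExp q BIG
                  (fun ω => ind (ω (σ x) = false) * varAt q (hWal q L A f) x ω) := by
        intro A hA x₀ hx₀A
        have hAL : A ⊆ L := Finset.mem_powerset.1 (Finset.mem_of_mem_erase hA)
        have hx₀S : x₀ ∈ S := hLS (hAL hx₀A)
        obtain ⟨g, hgB⟩ := Infinite.exists_notMem_finset BIG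
        have hgS : g ∉ S := fun h => hgB (hSB h)
        have hgU : g ∉ U := fun h => hgB (hUB h)
        have hgimg : ∀ x ∈ S, σ x ≠ g := fun x hx e => hgB (e ▸ hσB x hx)
        have hr' : ∀ x ∈ insert g U,
            (Function.update r g (r x₀)) ((Function.update σ g (σ x₀)) x)
              < (Function.update r g (r x₀)) x := by
          intro x hx
          rcases Finset.mem_insert.1 hx with rfl | hxU
          · rw [Function.update_self, Function.update_self,
              Function.update_of_ne (hgimg x₀ hx₀S)]
            exact hr x₀ hx₀S
          · have hxg : x ≠ g := fun e => hgU (e ▸ hxU)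
            rw [Function.update_of_ne hxg, Function.update_of_ne hxg,
              Function.update_of_ne (hgimg x (hUS hxU))]
            exact hr x (hUS hxU)
        have hdep' : DependsOnCoords (fun ω => phiq q g ω * hWal q L A f ω) (insert g U) :=
          depends_phiq_mul (hgdep A)
        have hcard' : (insert g U).card ≤ n := by
          have := Finset.card_insert_le g U
          omega
        have hIH := ih (insert g U) hcard' (Function.update σ g (σ x₀))
          (Function.update r g (r x₀)) hr' (fun ω => phiq q g ω * hWal q L A f ω) hdep'
        have hfreeg : FreeAt g (hWal q L A f) := freeAt_of_depends (hgdep A) hgU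
        have hfreegsq : FreeAt g (fun ω => hWal q L A f ω ^ 2) := by
          intro ω b
          show hWal q L A f (Function.update ω g b) ^ 2 = hWal q L A f ω ^ 2
          rw [hfreeg ω b]
        have hgBIG' : g ∈ insert g BIG := Finset.mem_insert_self g BIG
        have hsubS' : insert g U ⊆ insert g BIG := by
          intro u hu
          rcases Finset.mem_insert.1 hu with rfl | hu'
          · exact Finset.mem_insert_self _ _
          · exact Finset.mem_insert_of_mem (hUB hu')
        have hUB' : U ⊆ insert g BIG := fun u hu => Finset.mem_insert_of_mem (hUB hu)
        -- LHS of hIH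
        have hLHS : cylVar q (insert g U) (fun ω => phiq q g ω * hWal q L A f ω)
            = (1-q) * q * cylExp q BIG (fun ω => hWal q L A f ω ^ 2) := by
          have hdepsq' : DependsOnCoords
              (fun ω => (phiq q g ω * hWal q L A f ω) ^ 2) (insert g U) :=
            fun ω ω' h => congrArg (· ^ 2) (hdep' ω ω' h)
          unfold cylVar
          rw [← cylExp_extend q hsubS' hdep', ← cylExp_extend q hsubS' hdepsq']
          have hzero : cylExp q (insert g BIG) (fun ω => phiq q g ω * hWal q L A f ω) = 0 :=
            cylExp_phi_mul q hgBIG' hfreeg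
          have hsq : cylExp q (insert g BIG) (fun ω => (phiq q g ω * hWal q L A f ω) ^ 2)
              = (1-q) * q * cylExp q BIG (fun ω => hWal q L A f ω ^ 2) := by
            have e1 : cylExp q (insert g BIG) (fun ω => (phiq q g ω * hWal q L A f ω) ^ 2)
                = cylExp q (insert g BIG) (fun ω => phiq q g ω ^ 2
                    * (fun ω' => hWal q L A f ω' ^ 2) ω) :=
              cylExp_congr _ _ (fun ω => by
                show (phiq q g ω * hWal q L A f ω) ^ 2
                  = phiq q g ω ^ 2 * hWal q L A f ω ^ 2
                ring)
            rw [e1, cylExp_phisq_mul q hgBIG' hfreegsq]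
            congr 1
            rw [cylExp_extend q (fun u hu => hUB' hu) (hgsqdep A),
              cylExp_extend q hUB (hgsqdep A)]
          rw [hzero, hsq]
          ring
        rw [hLHS] at hIH
        -- RHS of hIH
        have hRHS : ∑ x ∈ insert g U, cylExp q
              (insert x (insert ((Function.update σ g (σ x₀)) x) (insert g U)))
              (fun ω => ind (ω ((Function.update σ g (σ x₀)) x) = false)
                * varAt q (fun ω' => phiq q g ω' * hWal q L A f ω') x ω)
            = (1-q) * q * (cylExp q BIG (fun ω => ind (ω (σ x₀) = false) * hWal q L A f ω ^ 2)
              + ∑ x ∈ U, cylExp q BIG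
                  (fun ω => ind (ω (σ x) = false) * varAt q (hWal q L A f) x ω)) := by
          rw [Finset.sum_insert hgU]
          have hterm_g : cylExp q
              (insert g (insert ((Function.update σ g (σ x₀)) g) (insert g U)))
              (fun ω => ind (ω ((Function.update σ g (σ x₀)) g) = false)
                * varAt q (fun ω' => phiq q g ω' * hWal q L A f ω') g ω)
              = (1-q) * q
                * cylExp q BIG (fun ω => ind (ω (σ x₀) = false) * hWal q L A f ω ^ 2) := by
            have hσ'g : (Function.update σ g (σ x₀)) g = σ x₀ := Function.update_self g (σ x₀) σ
            rw [hσ'g]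
            have hint : ∀ ω, ind (ω (σ x₀) = false)
                  * varAt q (fun ω' => phiq q g ω' * hWal q L A f ω') g ω
                = ((1-q)*q) * (ind (ω (σ x₀) = false) * hWal q L A f ω ^ 2) := by
              intro ω
              rw [varAt_eq_der, der_phiq_self q g hfreeg]
              ring
            rw [cylExp_congr _ _ hint, cylExp_smul]
            congr 1
            have hdepI : DependsOnCoords
                (fun ω => ind (ω (σ x₀) = false) * hWal q L A f ω ^ 2)
                (insert (σ x₀) U) := by
              intro ω ω' h
              have h1 : ω (σ x₀) = ω' (σ x₀) := h _ (Finset.mem_insert_self _ _)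
              have h2 := hgsqdep A ω ω' (fun u hu => h u (Finset.mem_insert_of_mem hu))
              show ind (ω (σ x₀) = false) * hWal q L A f ω ^ 2
                = ind (ω' (σ x₀) = false) * hWal q L A f ω' ^ 2
              rw [h1]
              show ind (ω' (σ x₀) = false) * (fun ω'' => hWal q L A f ω'' ^2) ω
                = ind (ω' (σ x₀) = false) * (fun ω'' => hWal q L A f ω'' ^2) ω'
              rw [h2]
            have hsub1 : insert (σ x₀) U ⊆ insert g (insert (σ x₀) (insert g U)) := by
              intro u hu
              rcases Finset.mem_insert.1 hu with rfl | hu'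
              · exact Finset.mem_insert_of_mem (Finset.mem_insert_self _ _)
              · exact Finset.mem_insert_of_mem (Finset.mem_insert_of_mem
                  (Finset.mem_insert_of_mem hu'))
            have hsub2 : insert (σ x₀) U ⊆ BIG :=
              Finset.insert_subset (hσB x₀ hx₀S) hUB
            rw [cylExp_extend q hsub1 hdepI, cylExp_extend q hsub2 hdepI]
          have hterm_U : ∀ x ∈ U, cylExp q
              (insert x (insert ((Function.update σ g (σ x₀)) x) (insert g U)))
              (fun ω => ind (ω ((Function.update σ g (σ x₀)) x) = false)
                * varAt q (fun ω' => phiq q g ω' * hWal q L A f ω') x ω)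
              = (1-q) * q * cylExp q BIG
                  (fun ω => ind (ω (σ x) = false) * varAt q (hWal q L A f) x ω) := by
            intro x hxU
            have hxg : x ≠ g := fun e => hgU (e ▸ hxU)
            have hσ'x : (Function.update σ g (σ x₀)) x = σ x := Function.update_of_ne hxg _ σ
            rw [hσ'x]
            have hgx : g ≠ x := fun e => hxg e.symm
            have hxS : x ∈ S := hUS hxU
            -- extend to insert g BIG
            have hsubx : insert x (insert (σ x) (insert g U)) ⊆ insert g BIG := by
              intro u hu
              rcases Finset.mem_insert.1 hu with rfl | hu'
              · exact Finset.mem_insert_of_mem (hUB hxU)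
              rcases Finset.mem_insert.1 hu' with rfl | hu''
              · exact Finset.mem_insert_of_mem (hσB x hxS)
              · exact hsubS' hu''
            have hdepx : DependsOnCoords
                (fun ω => ind (ω (σ x) = false)
                  * varAt q (fun ω' => phiq q g ω' * hWal q L A f ω') x ω)
                (insert x (insert (σ x) (insert g U))) :=
              term_depends hdep' x (σ x)
            rw [← cylExp_extend q hsubx hdepx]
            have hint : ∀ ω, ind (ω (σ x) = false)
                  * varAt q (fun ω' => phiq q g ω' * hWal q L A f ω') x ω
                = phiq q g ω ^ 2 * ((fun ω' => ind (ω' (σ x) = false)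
                    * varAt q (hWal q L A f) x ω') ω) := by
              intro ω
              show ind (ω (σ x) = false)
                  * varAt q (fun ω' => phiq q g ω' * hWal q L A f ω') x ω
                = phiq q g ω ^ 2 * (ind (ω (σ x) = false) * varAt q (hWal q L A f) x ω)
              rw [varAt_eq_der, varAt_eq_der]
              have hder : der x (fun ω' => phiq q g ω' * hWal q L A f ω') ω
                  = phiq q g ω * der x (hWal q L A f) ω := by
                rw [der_phiq_other q hgx (hWal q L A f)]
              rw [hder]
              ring
            rw [cylExp_congr _ _ hint]
            have hfreeI : FreeAt g (fun ω' => ind (ω' (σ x) = false)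
                * varAt q (hWal q L A f) x ω') := by
              intro ω b
              show ind (Function.update ω g b (σ x) = false)
                  * varAt q (hWal q L A f) x (Function.update ω g b)
                = ind (ω (σ x) = false) * varAt q (hWal q L A f) x ω
              rw [Function.update_of_ne (hgimg x hxS)]
              congr 1
              rw [varAt_eq_der, varAt_eq_der, freeAt_der_of hgx hfreeg ω b]
            rw [cylExp_phisq_mul q hgBIG' hfreeI]
            congr 1
            have hdepI2 : DependsOnCoords
                (fun ω' => ind (ω' (σ x) = false) * varAt q (hWal q L A f) x ω')
                (insert x (insert (σ x) U)) := term_depends (hgdep A) x (σ x)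
            have hsubI2 : insert x (insert (σ x) U) ⊆ insert g BIG := by
              intro u hu
              rcases Finset.mem_insert.1 hu with rfl | hu'
              · exact Finset.mem_insert_of_mem (hUB hxU)
              rcases Finset.mem_insert.1 hu' with rfl | hu''
              · exact Finset.mem_insert_of_mem (hσB x hxS)
              · exact hUB' hu''
            rw [cylExp_extend q hsubI2 hdepI2,
              cylExp_extend q (hUsetB x hxU) hdepI2]
          rw [hterm_g, Finset.sum_congr rfl hterm_U, ← Finset.mul_sum]
          ring
        rw [hRHS] at hIH
        have := (mul_le_mul_iff_of_pos_left hpq).1 (by linarith [hIH] : (1-q)*q * (eastGap q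
          * cylExp q BIG (fun ω => hWal q L A f ω ^ 2)) ≤ (1-q)*q
          * (cylExp q BIG (fun ω => ind (ω (σ x₀) = false) * hWal q L A f ω ^ 2)
            + ∑ x ∈ U, cylExp q BIG
                (fun ω => ind (ω (σ x) = false) * varAt q (hWal q L A f) x ω)))
        exact this
      -- (4) final assembly
      have hιne : Nonempty ι := inferInstance
      set xc : Finset ι → ι := fun A =>
        if h : A.Nonempty then h.choose else Classical.arbitrary ι with hxcdef
      have hxcmem : ∀ A : Finset ι, A.Nonempty → xc A ∈ A := by
        intro A hA
        rw [hxcdef]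
        dsimp only
        rw [dif_pos hA]
        exact hA.choose_spec
      have hPne : ∀ A ∈ L.powerset.erase ∅, A.Nonempty := by
        intro A hA
        exact Finset.nonempty_iff_ne_empty.2 (Finset.mem_erase.1 hA).1
      have hPsub : ∀ A ∈ L.powerset.erase ∅, A ⊆ L := by
        intro A hA
        exact Finset.mem_powerset.1 (Finset.mem_of_mem_erase hA)
      -- L-side lower bound via an injection into the sigma set
      have hLbound : ∑ A ∈ L.powerset.erase ∅, ((1-q)*q) ^ A.card
            * cylExp q BIG (fun ω => ind (ω (σ (xc A)) = false) * hWal q L A f ω ^ 2)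
          ≤ ∑ x ∈ L, ∑ B ∈ (L.erase x).powerset, ((1-q)*q) ^ B.card *
              cylExp q BIG (fun ω => ind (ω (σ x) = false) * ((1-q)*q)
                * hWal q L (insert x B) f ω ^ 2) := by
        classical
        set F : (Σ _ : ι, Finset ι) → ℝ := fun p => ((1-q)*q) ^ p.2.card *
          cylExp q BIG (fun ω => ind (ω (σ p.1) = false) * ((1-q)*q)
            * hWal q L (insert p.1 p.2) f ω ^ 2) with hFdef
        have hFnonneg : ∀ p : (Σ _ : ι, Finset ι), 0 ≤ F p := by
          intro p
          rw [hFdef]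
          apply mul_nonneg (pow_nonneg hpq0 _)
          apply cylExp_nonneg hq
          intro ω
          apply mul_nonneg (mul_nonneg (ind_nonneg _) hpq0) (sq_nonneg _)
        have hsig : ∑ p ∈ (L.sigma fun x => (L.erase x).powerset), F p
            = ∑ x ∈ L, ∑ B ∈ (L.erase x).powerset, ((1-q)*q) ^ B.card *
              cylExp q BIG (fun ω => ind (ω (σ x) = false) * ((1-q)*q)
                * hWal q L (insert x B) f ω ^ 2) := Finset.sum_sigma _ _ _
        have hsel : ∀ A ∈ L.powerset.erase ∅, ((1-q)*q) ^ A.card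
              * cylExp q BIG (fun ω => ind (ω (σ (xc A)) = false) * hWal q L A f ω ^ 2)
            = F ⟨xc A, A.erase (xc A)⟩ := by
          intro A hA
          have hAne := hPne A hA
          have hxcA := hxcmem A hAne
          have hins : insert (xc A) (A.erase (xc A)) = A := Finset.insert_erase hxcA
          have hcardA : 0 < A.card := Finset.card_pos.2 hAne
          rw [hFdef]
          dsimp only
          rw [hins, Finset.card_erase_of_mem hxcA]
          have hE : cylExp q BIG (fun ω => ind (ω (σ (xc A)) = false) * ((1-q)*q)
                * hWal q L A f ω ^ 2)
              = ((1-q)*q) * cylExp q BIG (fun ω => ind (ω (σ (xc A)) = false)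
                  * hWal q L A f ω ^ 2) := by
            rw [← cylExp_smul]
            apply cylExp_congr
            intro ω
            show ind (ω (σ (xc A)) = false) * ((1-q)*q) * hWal q L A f ω ^ 2
              = (1-q)*q * (ind (ω (σ (xc A)) = false) * hWal q L A f ω ^ 2)
            ring
          rw [hE]
          have hpow : ((1-q)*q) ^ (A.card - 1) * ((1-q)*q) = ((1-q)*q) ^ A.card := by
            rw [← pow_succ]
            congr 1
            omega
          rw [← mul_assoc, hpow]
        rw [Finset.sum_congr rfl hsel, ← hsig]
        have hinj : ∀ A ∈ L.powerset.erase ∅, ∀ A' ∈ L.powerset.erase ∅,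
            (⟨xc A, A.erase (xc A)⟩ : Σ _ : ι, Finset ι) = ⟨xc A', A'.erase (xc A')⟩
              → A = A' := by
          intro A hA A' hA' he
          have h1 : xc A = xc A' := congrArg Sigma.fst he
          have h2 : A.erase (xc A) = A'.erase (xc A') := by
            have := (Sigma.mk.inj_iff.1 he).2
            exact eq_of_heq this
          calc A = insert (xc A) (A.erase (xc A)) := (Finset.insert_erase (hxcmem A (hPne A hA))).symm
            _ = insert (xc A') (A'.erase (xc A')) := by rw [h2, h1]
            _ = A' := Finset.insert_erase (hxcmem A' (hPne A' hA'))
        rw [← Finset.sum_image hinj]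
        apply Finset.sum_le_sum_of_subset_of_nonneg
        · intro p hp
          obtain ⟨A, hA, rfl⟩ := Finset.mem_image.1 hp
          apply Finset.mem_sigma.2
          constructor
          · exact hPsub A hA (hxcmem A (hPne A hA))
          · exact Finset.mem_powerset.2 (Finset.erase_subset_erase _ (hPsub A hA))
        · intro p _ _
          exact hFnonneg p
      -- U-side rearrangement
      have hUswap : ∑ x ∈ U, ∑ A ∈ L.powerset, ((1-q)*q) ^ A.card *
            cylExp q BIG (fun ω => ind (ω (σ x) = false) * varAt q (hWal q L A f) x ω)
          = (∑ x ∈ U, cylExp q BIG (fun ω => ind (ω (σ x) = false)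
              * varAt q (hWal q L ∅ f) x ω))
            + ∑ A ∈ L.powerset.erase ∅, ∑ x ∈ U, ((1-q)*q) ^ A.card *
                cylExp q BIG (fun ω => ind (ω (σ x) = false)
                  * varAt q (hWal q L A f) x ω) := by
        have hper : ∀ x ∈ U, ∑ A ∈ L.powerset, ((1-q)*q) ^ A.card *
              cylExp q BIG (fun ω => ind (ω (σ x) = false) * varAt q (hWal q L A f) x ω)
            = cylExp q BIG (fun ω => ind (ω (σ x) = false) * varAt q (hWal q L ∅ f) x ω)
              + ∑ A ∈ L.powerset.erase ∅, ((1-q)*q) ^ A.card *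
                  cylExp q BIG (fun ω => ind (ω (σ x) = false)
                    * varAt q (hWal q L A f) x ω) := by
          intro x _
          rw [← Finset.add_sum_erase _ _ hemptyP, Finset.card_empty, pow_zero, one_mul]
        rw [Finset.sum_congr rfl hper, Finset.sum_add_distrib]
        congr 1
        exact Finset.sum_comm
      -- per-A inequality scaled
      have hI2 : ∀ A ∈ L.powerset.erase ∅,
          eastGap q * (((1-q)*q) ^ A.card * cylExp q BIG (fun ω => hWal q L A f ω ^ 2))
            ≤ ((1-q)*q) ^ A.card
                * cylExp q BIG (fun ω => ind (ω (σ (xc A)) = false) * hWal q L A f ω ^ 2)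
              + ∑ x ∈ U, ((1-q)*q) ^ A.card * cylExp q BIG
                  (fun ω => ind (ω (σ x) = false) * varAt q (hWal q L A f) x ω) := by
        intro A hA
        have h := h3b A hA (xc A) (hxcmem A (hPne A hA))
        have hc : (0:ℝ) ≤ ((1-q)*q) ^ A.card := pow_nonneg hpq0 _
        calc eastGap q * (((1-q)*q) ^ A.card * cylExp q BIG (fun ω => hWal q L A f ω ^ 2))
            = ((1-q)*q) ^ A.card * (eastGap q * cylExp q BIG (fun ω => hWal q L A f ω ^ 2)) := by
              ring
          _ ≤ ((1-q)*q) ^ A.card * (cylExp q BIG (fun ω => ind (ω (σ (xc A)) = false)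
                * hWal q L A f ω ^ 2)
              + ∑ x ∈ U, cylExp q BIG
                  (fun ω => ind (ω (σ x) = false) * varAt q (hWal q L A f) x ω)) :=
            mul_le_mul_of_nonneg_left h hc
          _ = ((1-q)*q) ^ A.card * cylExp q BIG (fun ω => ind (ω (σ (xc A)) = false)
                * hWal q L A f ω ^ 2)
              + ∑ x ∈ U, ((1-q)*q) ^ A.card * cylExp q BIG
                  (fun ω => ind (ω (σ x) = false) * varAt q (hWal q L A f) x ω) := by
            rw [mul_add, Finset.mul_sum]
      have hI2sum : ∑ A ∈ L.powerset.erase ∅,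
            eastGap q * (((1-q)*q) ^ A.card * cylExp q BIG (fun ω => hWal q L A f ω ^ 2))
          ≤ (∑ A ∈ L.powerset.erase ∅, ((1-q)*q) ^ A.card
              * cylExp q BIG (fun ω => ind (ω (σ (xc A)) = false) * hWal q L A f ω ^ 2))
            + ∑ A ∈ L.powerset.erase ∅, ∑ x ∈ U, ((1-q)*q) ^ A.card * cylExp q BIG
                (fun ω => ind (ω (σ x) = false) * varAt q (hWal q L A f) x ω) := by
        rw [← Finset.sum_add_distrib]
        exact Finset.sum_le_sum hI2
      -- collect
      have hE1 : eastGap q * cylVar q S f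
          = eastGap q * (cylExp q BIG (fun ω => hWal q L ∅ f ω ^ 2)
              - (cylExp q BIG (hWal q L ∅ f)) ^ 2)
            + ∑ A ∈ L.powerset.erase ∅,
                eastGap q * (((1-q)*q) ^ A.card
                  * cylExp q BIG (fun ω => hWal q L A f ω ^ 2)) := by
        rw [hVarSplit, mul_add, Finset.mul_sum]
      have hUterm : ∑ x ∈ U, cylExp q (insert x (insert (σ x) S))
            (fun ω => ind (ω (σ x) = false) * varAt q f x ω)
          = ∑ x ∈ U, ∑ A ∈ L.powerset, ((1-q)*q) ^ A.card *
              cylExp q BIG (fun ω => ind (ω (σ x) = false)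
                * varAt q (hWal q L A f) x ω) := by
        apply Finset.sum_congr rfl
        intro x hx
        rw [hterm_big x (hUS hx), hUdec x hx]
      have hLterm : ∑ x ∈ L, cylExp q (insert x (insert (σ x) S))
            (fun ω => ind (ω (σ x) = false) * varAt q f x ω)
          = ∑ x ∈ L, ∑ B ∈ (L.erase x).powerset, ((1-q)*q) ^ B.card *
              cylExp q BIG (fun ω => ind (ω (σ x) = false) * ((1-q)*q)
                * hWal q L (insert x B) f ω ^ 2) := by
        apply Finset.sum_congr rfl
        intro x hx
        rw [hterm_big x (hLS hx), hLdec x hx]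
      have hsplit : (∑ x ∈ U, cylExp q (insert x (insert (σ x) S))
              (fun ω => ind (ω (σ x) = false) * varAt q f x ω))
            + ∑ x ∈ L, cylExp q (insert x (insert (σ x) S))
              (fun ω => ind (ω (σ x) = false) * varAt q f x ω)
          = ∑ x ∈ S, cylExp q (insert x (insert (σ x) S))
              (fun ω => ind (ω (σ x) = false) * varAt q f x ω) := by
        rw [hUdef]
        exact Finset.sum_sdiff hLS
      linarith [hE1, h3a, hI2sum, hUswap, hLbound, hUterm, hLterm, hsplit]

    · -- CHAIN case
      push_neg at hL2
      obtain ⟨v, hvsucc, hvmem, hvnS, hSeq, hvinj⟩ := chain_struct hr hS (by omega)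
      set n₀ := S.card with hn₀
      set T : Finset ι := (Finset.range (n₀ + 1)).image v with hT
      set π : ι → ℤ := fun u =>
        if h : ∃ i, i < n₀ + 1 ∧ v i = u then (Nat.find h : ℤ) else 0 with hπ
      have hπv : ∀ i, i < n₀ + 1 → π (v i) = i := by
        intro i hi
        have hex : ∃ j, j < n₀ + 1 ∧ v j = v i := ⟨i, hi, rfl⟩
        rw [hπ]
        dsimp only
        rw [dif_pos hex]
        have h1 : v (Nat.find hex) = v i := (Nat.find_spec hex).2
        have h2 : Nat.find hex < n₀ + 1 := (Nat.find_spec hex).1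
        have h3 : Nat.find hex = i := by
          apply hvinj ?_ ?_ h1
          · simpa using h2
          · simpa using hi
        exact_mod_cast h3
      have hvT : ∀ i, i < n₀ + 1 → v i ∈ T := by
        intro i hi
        rw [hT]
        exact Finset.mem_image_of_mem v (Finset.mem_range.2 hi)
      have hST : S ⊆ T := by
        intro x hx
        rw [hSeq] at hx
        obtain ⟨i, hi, rfl⟩ := Finset.mem_image.1 hx
        exact hvT i (by have := Finset.mem_range.1 hi; omega)
      have hπinj : Set.InjOn π ↑T := by
        intro u hu u' hu' he
        rw [hT] at hu hu'
        obtain ⟨i, hi, rfl⟩ := Finset.mem_image.1 (Finset.mem_coe.1 hu)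
        obtain ⟨j, hj, rfl⟩ := Finset.mem_image.1 (Finset.mem_coe.1 hu')
        have hi' := Finset.mem_range.1 hi
        have hj' := Finset.mem_range.1 hj
        rw [hπv i hi', hπv j hj'] at he
        have : i = j := by exact_mod_cast he
        rw [this]
      have hidxS : ∀ x ∈ S, ∃ i, i < n₀ ∧ v i = x := by
        intro x hx
        rw [hSeq] at hx
        obtain ⟨i, hi, rfl⟩ := Finset.mem_image.1 hx
        exact ⟨i, Finset.mem_range.1 hi, rfl⟩
      have hσdata : ∀ x ∈ S, σ x ∈ T ∧ π (σ x) = π x + 1 := by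
        intro x hx
        obtain ⟨i, hi, rfl⟩ := hidxS x hx
        have hσv : σ (v i) = v (i + 1) := (hvsucc i).symm
        constructor
        · rw [hσv]
          exact hvT (i + 1) (by omega)
        · rw [hσv, hπv (i+1) (by omega), hπv i (by omega)]
          push_cast
          ring
      set pullf : (ℤ → Bool) → (ι → Bool) := pull π T with hpullf
      set ftil : (ℤ → Bool) → ℝ := fun η => f (pullf η) with hftil
      have hdeptil : DependsOnCoords ftil (S.image π) := depends_pull π T S hST f hf
      have hmain := east_poincare hq ftil (S.image π) hdeptil
      have hvar : cylVar q (S.image π) ftil = cylVar q S f :=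
        cylVar_relabel q π T hπinj S hST f hf
      rw [hvar] at hmain
      refine le_trans hmain (le_of_eq ?_)
      rw [Finset.sum_image (fun x hx y hy he => hπinj (hST hx) (hST hy) he)]
      apply Finset.sum_congr rfl
      intro x hxS
      obtain ⟨hσT, hπσ⟩ := hσdata x hxS
      have hxT : x ∈ T := hST hxS
      have hsubset : insert x (insert (σ x) S) ⊆ T := by
        intro u hu
        rcases Finset.mem_insert.1 hu with rfl | hu'
        · exact hxT
        rcases Finset.mem_insert.1 hu' with rfl | hu''
        · exact hσT
        · exact hST hu''
      have hrel := cylExp_relabel q π T hπinj (insert x (insert (σ x) S)) hsubset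
        (fun ω => ind (ω (σ x) = false) * varAt q f x ω) (term_depends hf x (σ x))
      have hsets : (insert x (insert (σ x) S)).image π
          = insert (π x) (insert (π x + 1) (S.image π)) := by
        rw [Finset.image_insert, Finset.image_insert, hπσ]
      have hfun : (fun η => ind (η (π x + 1) = false) * varAt q ftil (π x) η)
          = (fun η => (fun ω => ind (ω (σ x) = false) * varAt q f x ω) (pullf η)) := by
        funext η
        have hc : pullf η (σ x) = η (π x + 1) := by
          rw [hpullf]
          unfold pull
          rw [if_pos hσT, hπσ]
        have hup : ∀ b : Bool, ftil (Function.update η (π x) b)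
            = f (Function.update (pullf η) x b) := by
          intro b
          rw [hftil, hpullf]
          dsimp only
          rw [pull_update hπinj hxT b η]
        dsimp only
        rw [hc]
        congr 1
        unfold varAt
        rw [hup true, hup false]
      rw [hfun, ← hsets, hrel]
end KCMAux
end

open scoped Classical in
/-- For an infinite connected graph of bounded degree, the spectral gap
of the FA-1f model (constraint at `x`: some neighbor of `x` is empty; no unconstrained
vertex) is at least the spectral gap of the East model on `ℤ`, at the same `q ∈ (0,1)`. -/
theorem fa1f_infinite_gap_ge_east_gap {V : Type*} [DecidableEq V] [Infinite V]
    (G : SimpleGraph V) [G.LocallyFinite] (hconn : G.Connected)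
    (D : ℕ) (hdeg : ∀ x, G.degree x ≤ D)
    (q : ℝ) (hq : q ∈ Set.Ioo (0 : ℝ) 1) :
    eastGap q ≤
      kcmGap q (fun x ω => ∃ y, G.Adj x y ∧ ω y = false)
        (fun x => G.neighborFinset x) := by
  classical
  apply le_csInf
  · -- the FA-1f gap variational set is nonempty
    have hne : Nonempty V := inferInstance
    set x₀ : V := Classical.arbitrary V
    refine ⟨_, ⟨fun ω => ind (ω x₀ = true), {x₀}, ?_, ?_, rfl⟩⟩
    · intro ω ω' h
      have hx := h x₀ (Finset.mem_singleton_self x₀)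
      show ind (ω x₀ = true) = ind (ω' x₀ = true)
      rw [hx]
    · refine ⟨fun _ => true, fun _ => false, ?_⟩
      show ind (true = true) ≠ ind (false = true)
      norm_num [ind]
  · rintro b ⟨f, S, hdep, ⟨ω₁, ω₂, hnc⟩, rfl⟩
    -- the cylinder variance is positive
    have hagree : ∀ ω : V → Bool, f ω = f (extCfg S (fun x => ω x)) := by
      intro ω
      apply hdep
      intro x hx
      show ω x = extCfg S (fun y => ω (y : V)) x
      unfold extCfg
      rw [dif_pos hx]
    have hvne : f (extCfg S (fun x => ω₁ x)) ≠ f (extCfg S (fun x => ω₂ x)) := by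
      rw [← hagree ω₁, ← hagree ω₂]
      exact hnc
    have hvpos : 0 < cylVar q S f := KCMAux.cylVar_pos hq S hvne
    rw [le_div_iff₀ hvpos]
    -- construct the escaping successor map
    obtain ⟨w, hwS⟩ := Infinite.exists_notMem_finset S
    have hstep : ∀ x ∈ S, ∃ y, G.Adj x y ∧ G.dist y w < G.dist x w := by
      intro x hxS
      have hxw : x ≠ w := fun e => hwS (e ▸ hxS)
      obtain ⟨p, hp⟩ := (hconn.preconnected x w).exists_walk_length_eq_dist
      cases p with
      | nil => exact absurd rfl hxw
      | @cons _ y _ hadj p' =>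
        refine ⟨y, hadj, ?_⟩
        have h1 : G.dist y w ≤ p'.length := SimpleGraph.dist_le p'
        have h2 : p'.length + 1 = G.dist x w := by
          rw [← hp, SimpleGraph.Walk.length_cons]
        omega
    set σm : V → V := fun x => if h : x ∈ S then (hstep x h).choose else x with hσm
    have hσadj : ∀ x ∈ S, G.Adj x (σm x) := by
      intro x hx
      rw [hσm]
      dsimp only
      rw [dif_pos hx]
      exact (hstep x hx).choose_spec.1
    have hrk : ∀ x ∈ S, G.dist (σm x) w < G.dist x w := by
      intro x hx
      rw [hσm]
      dsimp only
      rw [dif_pos hx]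
      exact (hstep x hx).choose_spec.2
    have hmain := KCMAux.main_poincare hq S.card S le_rfl σm (fun x => G.dist x w) hrk f hdep
    refine le_trans hmain ?_
    rw [KCMAux.dirichlet_eq_sum q _ _ S f hdep]
    apply Finset.sum_le_sum
    intro x hx
    have hsub : insert x (insert (σm x) S) ⊆ insert x (S ∪ G.neighborFinset x) := by
      intro u hu
      rcases Finset.mem_insert.1 hu with rfl | hu'
      · exact Finset.mem_insert_self _ _
      rcases Finset.mem_insert.1 hu' with rfl | hu''
      · exact Finset.mem_insert_of_mem (Finset.mem_union_right _
          ((SimpleGraph.mem_neighborFinset G x _).2 (hσadj x hx)))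
      · exact Finset.mem_insert_of_mem (Finset.mem_union_left _ hu'')
    rw [← KCMAux.cylExp_extend q hsub (KCMAux.term_depends hdep x (σm x))]
    apply KCMAux.cylExp_mono hq
    intro ω
    apply mul_le_mul_of_nonneg_right
    · apply KCMAux.ind_mono
      intro h
      exact ⟨σm x, hσadj x hx, h⟩
    · exact KCMAux.varAt_nonneg hq f x ω
end
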